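/- arXiv:1409.3418 — 4 statements merged into one kernel-verified Lean document; each statement's English description precedes it below -/
import Mathlib

section
/- Let E ⊆ [0,∞) and let (τ_n) ∈ Ẽ_0^d(E). Then E is (τ_n)-strongly porous at 0 if and only if C((τ_n)) < ∞. Moreover, E is completely strongly porous at 0 if and only if C_E < ∞. -/
open Filter Topology Set
open scoped ENNReal

/-- A scaling sequence: strictly positive reals tending to zero. -/
def ScalingSeq (r : ℕ → ℝ) : Prop :=
  (∀ n, 0 < r n) ∧ Tendsto r atTop (𝓝 (0 : ℝ))

/-- Two sequences of points are mutually stable w.r.t. a scaling sequence. -/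
def MutuallyStable {X : Type*} [MetricSpace X] (r : ℕ → ℝ) (x y : ℕ → X) : Prop :=
  ∃ L : ℝ, Tendsto (fun n => dist (x n) (y n) / r n) atTop (𝓝 L)

/-- A family of sequences is self-stable w.r.t. a scaling sequence. -/
def SelfStable {X : Type*} [MetricSpace X] (r : ℕ → ℝ) (F : Set (ℕ → X)) : Prop :=
  ∀ x ∈ F, ∀ y ∈ F, MutuallyStable r x y

/-- A maximal self-stable family. -/
def MaxSelfStable {X : Type*} [MetricSpace X] (r : ℕ → ℝ) (F : Set (ℕ → X)) : Prop :=
  SelfStable r F ∧ ∀ G : Set (ℕ → X), SelfStable r G → F ⊆ G → G = F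

/-- A sequence of reals is eventually decreasing. -/
def EvDecr (τ : ℕ → ℝ) : Prop := ∀ᶠ n in atTop, τ (n + 1) ≤ τ n

/-- A normal scaling sequence for a pointed metric space `(X, d, p)`. -/
def NormalScaling {X : Type*} [MetricSpace X] (p : X) (r : ℕ → ℝ) : Prop :=
  ScalingSeq r ∧ EvDecr r ∧
    ∃ x : ℕ → X, Tendsto (fun n => dist (x n) p / r n) atTop (𝓝 (1 : ℝ))

/-- The set `Ẽ₀ᵈ(E)` of eventually decreasing sequences of nonzero points of `E`
tending to zero. -/
def E0d (E : Set ℝ) : Set (ℕ → ℝ) :=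
  {τ | EvDecr τ ∧ (∀ n, τ n ∈ E \ {0}) ∧ Tendsto τ atTop (𝓝 (0 : ℝ))}

/-- `Ioo a b` is a connected component of the interior of `[0,∞) \ E`. -/
def IsCompExt (E : Set ℝ) (a b : ℝ) : Prop :=
  a < b ∧ Ioo a b ⊆ interior (Ici 0 \ E) ∧
    ∀ a' b' : ℝ, a' ≤ a → b ≤ b' → Ioo a' b' ⊆ interior (Ici 0 \ E) → a' = a ∧ b' = b

/-- The set `Ĩ_E^d` of sequences of intervals. -/
def IEd (E : Set ℝ) (a b : ℕ → ℝ) : Prop :=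
  (∀ n, IsCompExt E (a n) (b n)) ∧ EvDecr a ∧ Tendsto a atTop (𝓝 (0 : ℝ)) ∧
    Tendsto (fun n => (b n - a n) / b n) atTop (𝓝 (1 : ℝ))

/-- The equivalence `x ≍ y` for sequences of strictly positive numbers. -/
def Asymp (x y : ℕ → ℝ) : Prop :=
  ∃ c₁ c₂ : ℝ, 0 < c₁ ∧ 0 < c₂ ∧ ∀ n, c₁ * x n < y n ∧ y n < c₂ * x n

/-- `E` is `τ`-strongly porous at `0`. -/
def TPorous (E : Set ℝ) (τ : ℕ → ℝ) : Prop :=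
  ∃ a b : ℕ → ℝ, IEd E a b ∧ Asymp τ a

/-- `E` is completely strongly porous at `0`. -/
def CSP (E : Set ℝ) : Prop := ∀ τ ∈ E0d E, TPorous E τ

/-- The relation `⪯` (on the first components of members of `Ĩ_E^d`). -/
def Preceq (a l : ℕ → ℝ) : Prop :=
  ∃ (N₁ : ℕ) (f : ℕ → ℕ), ∀ n ≥ N₁, a n = l (f n)

/-- `(l, m)` is a universal element of `Ĩ_E^d`. -/
def UnivElem (E : Set ℝ) (l m : ℕ → ℝ) : Prop :=
  IEd E l m ∧ ∀ a b : ℕ → ℝ, IEd E a b → Preceq a l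

/-- The quantity `M(L̃) = limsup lₙ / m_{n+1}`, valued in `[0,∞]`. -/
noncomputable def MQ (l m : ℕ → ℝ) : ℝ≥0∞ :=
  Filter.limsup (fun n => ENNReal.ofReal (l n / m (n + 1))) atTop

/-- The quantity `C(τ̃)`, valued in `[0,∞]` (inf of the empty set is `∞`). -/
noncomputable def Ctau (E : Set ℝ) (τ : ℕ → ℝ) : ℝ≥0∞ :=
  sInf {v | ∃ a b : ℕ → ℝ, IEd E a b ∧ (∀ᶠ n in atTop, τ n ≤ a n) ∧
    v = Filter.limsup (fun n => ENNReal.ofReal (a n / τ n)) atTop}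

/-- The quantity `C_E`, valued in `[0,∞]`. -/
noncomputable def CE (E : Set ℝ) : ℝ≥0∞ :=
  sSup {v | ∃ τ ∈ E0d E, v = Ctau E τ}

/-- The distance set `S_p(X) = {d(x,p) : x ∈ X}`. -/
def SpSet (X : Type*) [MetricSpace X] (p : X) : Set ℝ := {t | ∃ x : X, t = dist x p}

/-- `R*_n(X,p)`: the supremum, over normal scaling sequences `r` and sequences `x` in `X`
for which the finite limit `lim d(xₙ,p)/rₙ` exists, of this limit, in `[0,∞]`
(sup of the empty set is `0`). -/
noncomputable def RstarN (X : Type*) [MetricSpace X] (p : X) : ℝ≥0∞ :=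
  sSup {v | ∃ (r : ℕ → ℝ) (x : ℕ → X) (L : ℝ), NormalScaling p r ∧
    Tendsto (fun n => dist (x n) p / r n) atTop (𝓝 L) ∧ v = ENNReal.ofReal L}

/-- `Rⁿ_*(X,p)`: the corresponding infimum over strictly positive such limits, in `[0,∞]`
(inf of the empty set is `∞`). -/
noncomputable def RlowN (X : Type*) [MetricSpace X] (p : X) : ℝ≥0∞ :=
  sInf {v | ∃ (r : ℕ → ℝ) (x : ℕ → X) (L : ℝ), NormalScaling p r ∧
    Tendsto (fun n => dist (x n) p / r n) atTop (𝓝 L) ∧ 0 < L ∧ v = ENNReal.ofReal L}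

/-- `λ(E,0,h)`: the length of the largest open subinterval of `(0,h)` containing
no point of `E`. -/
noncomputable def lamE (E : Set ℝ) (h : ℝ) : ℝ :=
  sSup {d | ∃ a b : ℝ, 0 ≤ a ∧ a ≤ b ∧ b ≤ h ∧ Ioo a b ∩ E = ∅ ∧ d = b - a}

/-- `E` is strongly porous at `0`: the right upper porosity `p⁺(E,0)` equals `1`. -/
def StronglyPorousAtZero (E : Set ℝ) : Prop :=
  Filter.limsup (fun h => lamE E h / h) (𝓝[>] (0 : ℝ)) = 1

section AuxLemmas

lemma compext_nonneg {E : Set ℝ} {a b : ℝ} (h : IsCompExt E a b) : 0 ≤ a := by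
  by_contra hneg
  push_neg at hneg
  have hax : a < (a + min 0 b) / 2 := by
    have : a < min 0 b := lt_min hneg h.1
    linarith
  have hxb : (a + min 0 b) / 2 < b := by
    have h1 := min_le_right (0:ℝ) b
    have := h.1
    linarith
  have hx0 : (a + min 0 b) / 2 < 0 := by
    have h1 := min_le_left (0:ℝ) b
    linarith
  have hmem : (a + min 0 b) / 2 ∈ Ici (0:ℝ) \ E := interior_subset (h.2.1 ⟨hax, hxb⟩)
  exact absurd hmem.1 (by simpa using hx0.not_ge)

lemma compext_not_mem {E : Set ℝ} {a b t : ℝ} (h : IsCompExt E a b) (ht : t ∈ E) :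
    t ∉ Ioo a b := fun hmem => (interior_subset (h.2.1 hmem)).2 ht

lemma E0d_pos {E : Set ℝ} (hE : E ⊆ Ici 0) {τ : ℕ → ℝ} (hτ : τ ∈ E0d E) (n : ℕ) : 0 < τ n := by
  have h := hτ.2.1 n
  have h0 : τ n ≠ 0 := by simpa using h.2
  have h1 : 0 ≤ τ n := hE h.1
  exact lt_of_le_of_ne h1 (Ne.symm h0)

lemma IEd_bpos {E : Set ℝ} {a b : ℕ → ℝ} (h : IEd E a b) (n : ℕ) : 0 < b n :=
  lt_of_le_of_lt (compext_nonneg (h.1 n)) (h.1 n).1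

lemma IEd_ratio {E : Set ℝ} {a b : ℕ → ℝ} (h : IEd E a b) :
    Tendsto (fun n => a n / b n) atTop (𝓝 0) := by
  have hb : ∀ n, 0 < b n := IEd_bpos h
  have h1 : Tendsto (fun n => 1 - (b n - a n) / b n) atTop (𝓝 (1 - 1)) :=
    tendsto_const_nhds.sub h.2.2.2
  have heq : (fun n => 1 - (b n - a n) / b n) = fun n => a n / b n := by
    funext n
    have := (hb n).ne'
    field_simp
    ring
  rw [heq] at h1
  simpa using h1

lemma evdecr_chain {f : ℕ → ℝ} {N : ℕ} (h : ∀ n ≥ N, f (n + 1) ≤ f n) :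
    ∀ i j, N ≤ i → i ≤ j → f j ≤ f i := by
  intro i j hi hij
  induction j with
  | zero =>
    have : i = 0 := Nat.le_zero.mp hij
    simp [this]
  | succ m ih =>
    rcases Nat.lt_or_ge i (m + 1) with h' | h'
    · have him : i ≤ m := Nat.lt_succ_iff.mp h'
      exact le_trans (h m (le_trans hi him)) (ih him)
    · have : i = m + 1 := le_antisymm hij h'
      rw [this]

lemma eventually_tau_le {E : Set ℝ} (hE : E ⊆ Ici 0) {τ a b : ℕ → ℝ}
    (hτ : τ ∈ E0d E) (hab : IEd E a b) {c₁ : ℝ} (hc₁ : 0 < c₁)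
    (h : ∀ᶠ n in atTop, c₁ * τ n < a n) :
    ∀ᶠ n in atTop, τ n ≤ a n := by
  have h2 : ∀ᶠ n in atTop, a n / b n < c₁ := (IEd_ratio hab).eventually_lt_const hc₁
  filter_upwards [h, h2] with n h1 h2
  by_contra hlt
  push_neg at hlt
  have hb : 0 < b n := IEd_bpos hab n
  have hnm := compext_not_mem (hab.1 n) (hτ.2.1 n).1
  have hbτ : b n ≤ τ n := by
    by_contra hb2
    push_neg at hb2
    exact hnm ⟨hlt, hb2⟩
  have h3 : a n < c₁ * b n := (div_lt_iff₀ hb).mp h2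
  nlinarith

lemma tporous_ctau_lt {E : Set ℝ} (hE : E ⊆ Ici 0) {τ : ℕ → ℝ} (hτ : τ ∈ E0d E)
    (h : TPorous E τ) : Ctau E τ < ⊤ := by
  obtain ⟨a, b, hab, c₁, c₂, hc₁, hc₂, hcc⟩ := h
  have hev : ∀ᶠ n in atTop, τ n ≤ a n :=
    eventually_tau_le hE hτ hab hc₁ (Eventually.of_forall fun n => (hcc n).1)
  have hmem : limsup (fun n => ENNReal.ofReal (a n / τ n)) atTop ∈
      {v | ∃ a b : ℕ → ℝ, IEd E a b ∧ (∀ᶠ n in atTop, τ n ≤ a n) ∧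
        v = limsup (fun n => ENNReal.ofReal (a n / τ n)) atTop} := ⟨a, b, hab, hev, rfl⟩
  have hbnd : limsup (fun n => ENNReal.ofReal (a n / τ n)) atTop ≤ ENNReal.ofReal c₂ := by
    refine limsup_le_of_le (by isBoundedDefault) (Eventually.of_forall fun n => ?_)
    have hτn := E0d_pos hE hτ n
    have h1 : a n / τ n ≤ c₂ := (div_le_iff₀ hτn).mpr (hcc n).2.le
    exact ENNReal.ofReal_le_ofReal h1
  have hfin : Ctau E τ ≤ ENNReal.ofReal c₂ := le_trans (sInf_le hmem) hbnd
  exact lt_of_le_of_lt hfin ENNReal.ofReal_lt_top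

lemma asymp_of_eventually {x y : ℕ → ℝ} (hx : ∀ n, 0 < x n) (hy : ∀ n, 0 < y n)
    {c₁ c₂ : ℝ} (hc₁ : 0 < c₁) (hc₂ : 0 < c₂)
    (h : ∀ᶠ n in atTop, c₁ * x n < y n ∧ y n < c₂ * x n) : Asymp x y := by
  classical
  obtain ⟨N, hN⟩ := eventually_atTop.mp h
  set s₁ : Finset ℝ := insert c₁ ((Finset.range N).image fun n => y n / (2 * x n)) with hs₁
  set s₂ : Finset ℝ := insert c₂ ((Finset.range N).image fun n => 2 * (y n / x n)) with hs₂
  have hne₁ : s₁.Nonempty := Finset.insert_nonempty _ _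
  have hne₂ : s₂.Nonempty := Finset.insert_nonempty _ _
  have hmem₁ : ∀ n < N, y n / (2 * x n) ∈ s₁ := fun n hn => by
    rw [hs₁]
    exact Finset.mem_insert_of_mem (Finset.mem_image_of_mem _ (Finset.mem_range.mpr hn))
  have hmem₂ : ∀ n < N, 2 * (y n / x n) ∈ s₂ := fun n hn => by
    rw [hs₂]
    exact Finset.mem_insert_of_mem (Finset.mem_image_of_mem _ (Finset.mem_range.mpr hn))
  have hc₁mem : c₁ ∈ s₁ := by rw [hs₁]; exact Finset.mem_insert_self _ _
  have hc₂mem : c₂ ∈ s₂ := by rw [hs₂]; exact Finset.mem_insert_self _ _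
  have hall₁ : ∀ z ∈ s₁, 0 < z := by
    intro z hz
    rw [hs₁] at hz
    simp only [Finset.mem_insert, Finset.mem_image, Finset.mem_range] at hz
    rcases hz with h' | ⟨n, _, h'⟩
    · rw [h']; exact hc₁
    · rw [← h']; have := hx n; have := hy n; positivity
  have hd₁pos : 0 < s₁.min' hne₁ := hall₁ _ (Finset.min'_mem _ _)
  have hd₂pos : 0 < s₂.max' hne₂ := lt_of_lt_of_le hc₂ (Finset.le_max' _ _ hc₂mem)
  refine ⟨s₁.min' hne₁, s₂.max' hne₂, hd₁pos, hd₂pos, fun n => ?_⟩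
  rcases Nat.lt_or_ge n N with hn | hn
  · constructor
    · have h1 : s₁.min' hne₁ ≤ y n / (2 * x n) :=
        Finset.min'_le _ _ (Finset.mem_insert_of_mem
          (Finset.mem_image_of_mem _ (Finset.mem_range.mpr hn)))
      have h2 : y n / (2 * x n) * x n = y n / 2 := by
        have := (hx n).ne'
        field_simp
      have h3 : s₁.min' hne₁ * x n ≤ y n / (2 * x n) * x n :=
        mul_le_mul_of_nonneg_right h1 (hx n).le
      rw [h2] at h3
      have := hy n
      linarith
    · have h1 : 2 * (y n / x n) ≤ s₂.max' hne₂ := Finset.le_max' _ _ (hmem₂ n hn)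
      have h2 : 2 * (y n / x n) * x n = 2 * y n := by
        have := (hx n).ne'
        field_simp
      have h3 : 2 * (y n / x n) * x n ≤ s₂.max' hne₂ * x n :=
        mul_le_mul_of_nonneg_right h1 (hx n).le
      rw [h2] at h3
      have := hy n
      linarith
  · obtain ⟨hn1, hn2⟩ := hN n hn
    constructor
    · have h1 : s₁.min' hne₁ ≤ c₁ := Finset.min'_le _ _ hc₁mem
      have := mul_le_mul_of_nonneg_right h1 (hx n).le
      linarith
    · have h1 : c₂ ≤ s₂.max' hne₂ := Finset.le_max' _ _ hc₂mem
      have := mul_le_mul_of_nonneg_right h1 (hx n).le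
      linarith

lemma ctau_lt_tporous {E : Set ℝ} (hE : E ⊆ Ici 0) {τ : ℕ → ℝ} (hτ : τ ∈ E0d E)
    (h : Ctau E τ < ⊤) : TPorous E τ := by
  unfold Ctau at h
  obtain ⟨v, ⟨a, b, hab, hle, hv⟩, hvlt⟩ := sInf_lt_iff.mp h
  subst hv
  have hτpos := E0d_pos hE hτ
  have h1 : ∀ᶠ n in atTop,
      ENNReal.ofReal (a n / τ n) < limsup (fun n => ENNReal.ofReal (a n / τ n)) atTop + 1 :=
    eventually_lt_of_limsup_lt (ENNReal.lt_add_right hvlt.ne one_ne_zero)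
  set L := limsup (fun n => ENNReal.ofReal (a n / τ n)) atTop + 1 with hLdef
  have hLt : L ≠ ⊤ := ENNReal.add_ne_top.mpr ⟨hvlt.ne, ENNReal.one_ne_top⟩
  have h2 : ∀ᶠ n in atTop, (1/2 : ℝ) * τ n < a n ∧ a n < L.toReal * τ n := by
    filter_upwards [hle, h1] with n hn1 hn2
    have hτn := hτpos n
    refine ⟨by nlinarith, ?_⟩
    have h0 : 0 ≤ a n / τ n := div_nonneg (le_trans hτn.le hn1) hτn.le
    have h3 : a n / τ n < L.toReal := by
      rw [← ENNReal.ofReal_toReal hLt] at hn2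
      exact (ENNReal.ofReal_lt_ofReal_iff_of_nonneg h0).mp hn2
    exact (div_lt_iff₀ hτn).mp h3
  obtain ⟨N, hN⟩ := eventually_atTop.mp h2
  have haN : 0 < a N := by
    have := (hN N le_rfl).1
    have := hτpos N
    linarith
  have hKpos : 0 < L.toReal := by
    have h1 := (hN N le_rfl).1
    have h2 := (hN N le_rfl).2
    have := hτpos N
    nlinarith
  set a' : ℕ → ℝ := fun n => if n < N then a N else a n with ha'
  set b' : ℕ → ℝ := fun n => if n < N then b N else b n with hb'
  have ha'eq : ∀ n ≥ N, a' n = a n := fun n hn => if_neg (not_lt.mpr hn)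
  have hb'eq : ∀ n ≥ N, b' n = b n := fun n hn => if_neg (not_lt.mpr hn)
  have heqa : a =ᶠ[atTop] a' := eventually_atTop.mpr ⟨N, fun n hn => (ha'eq n hn).symm⟩
  have heqr : (fun n => (b n - a n) / b n) =ᶠ[atTop] (fun n => (b' n - a' n) / b' n) :=
    eventually_atTop.mpr ⟨N, fun n hn => by
      show (b n - a n) / b n = (b' n - a' n) / b' n
      rw [ha'eq n hn, hb'eq n hn]⟩
  refine ⟨a', b', ⟨?_, ?_, ?_, ?_⟩, ?_⟩
  · intro n
    by_cases hn : n < N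
    · simp only [ha', hb', if_pos hn]
      exact hab.1 N
    · simp only [ha', hb', if_neg hn]
      exact hab.1 n
  · obtain ⟨N₂, hN₂⟩ := eventually_atTop.mp hab.2.1
    rw [EvDecr, eventually_atTop]
    refine ⟨max N N₂, fun n hn => ?_⟩
    rw [ha'eq n (le_trans (le_max_left _ _) hn),
        ha'eq (n + 1) (le_trans (le_trans (le_max_left _ _) hn) (Nat.le_succ n))]
    exact hN₂ n (le_trans (le_max_right _ _) hn)
  · exact Tendsto.congr' heqa hab.2.2.1
  · exact Tendsto.congr' heqr hab.2.2.2
  · refine asymp_of_eventually hτpos ?_ (by norm_num : (0:ℝ) < 1/2) hKpos ?_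
    · intro n
      by_cases hn : n < N
      · simpa only [ha', if_pos hn] using haN
      · simp only [ha', if_neg hn]
        have := (hN n (not_lt.mp hn)).1
        have := hτpos n
        linarith
    · rw [eventually_atTop]
      refine ⟨N, fun n hn => ?_⟩
      rw [ha'eq n hn]
      exact hN n hn

lemma exists_enum (V : Set ℝ) (hpos : ∀ v ∈ V, 0 < v) (hle : ∀ v ∈ V, v ≤ 1)
    (hfin : ∀ ε : ℝ, 0 < ε → (V ∩ Ici ε).Finite) (hinf : V.Infinite) :
    ∃ ρ : ℕ → ℝ, StrictAnti ρ ∧ (∀ n, ρ n ∈ V) ∧ Tendsto ρ atTop (𝓝 0) ∧ V ⊆ Set.range ρ := by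
  classical
  have hstep : ∀ t : ℝ, 0 < t → ∃ g, IsGreatest (V ∩ Iio t) g := by
    intro t ht
    have h1 : (V ∩ Iio t).Nonempty := by
      obtain ⟨w, hw⟩ := (hinf.diff (hfin t ht)).nonempty
      exact ⟨w, hw.1, (lt_of_not_ge fun h => hw.2 ⟨hw.1, h⟩ : w < t)⟩
    obtain ⟨w, hwV, hwt⟩ := h1
    have hW : (V ∩ Ici w ∩ Iio t).Finite :=
      (hfin w (hpos w hwV)).subset fun x hx => hx.1
    have hWne : (V ∩ Ici w ∩ Iio t).Nonempty := ⟨w, ⟨hwV, le_refl w⟩, hwt⟩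
    obtain ⟨g, hgmem, hgmax⟩ : ∃ g ∈ V ∩ Ici w ∩ Iio t, ∀ v ∈ V ∩ Ici w ∩ Iio t, g ≤ v → g = v := by
      obtain ⟨g, hg1, hg2⟩ := hW.exists_maximalFor id _ hWne
      exact ⟨g, hg1, fun v hv h => le_antisymm h (hg2 hv h)⟩
    refine ⟨g, ⟨hgmem.1.1, hgmem.2⟩, fun v hv => ?_⟩
    rcases le_or_gt v w with h | h
    · exact le_trans h hgmem.1.2
    · by_contra hgv
      push_neg at hgv
      have heq : g = v := hgmax v ⟨⟨hv.1, h.le⟩, hv.2⟩ hgv.le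
      exact (ne_of_lt hgv) heq
  set next : ℝ → ℝ := fun t => if h : ∃ g, IsGreatest (V ∩ Iio t) g then h.choose else 1
    with hnextdef
  have hnext : ∀ t : ℝ, 0 < t → IsGreatest (V ∩ Iio t) (next t) := by
    intro t ht
    have h := hstep t ht
    simp only [hnextdef, dif_pos h]
    exact h.choose_spec
  set ρ : ℕ → ℝ := fun n => Nat.rec (next 2) (fun _ ih => next ih) n with hρdef
  have hρs : ∀ n, ρ (n + 1) = next (ρ n) := fun n => rfl
  have hρz : ρ 0 = next 2 := rfl
  have hmem : ∀ n, ρ n ∈ V := by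
    intro n
    induction n with
    | zero =>
      rw [hρz]
      exact (hnext 2 (by norm_num)).1.1
    | succ m ih =>
      rw [hρs m]
      exact (hnext (ρ m) (hpos _ ih)).1.1
  have hρpos : ∀ n, 0 < ρ n := fun n => hpos _ (hmem n)
  have hsucc : ∀ n, ρ (n + 1) < ρ n := by
    intro n
    rw [hρs n]
    exact (hnext (ρ n) (hρpos n)).1.2
  have hanti : StrictAnti ρ := strictAnti_nat_of_succ_lt hsucc
  have htend : Tendsto ρ atTop (𝓝 0) := by
    rw [Metric.tendsto_atTop]
    intro ε hε
    have hS : {n | ε ≤ ρ n}.Finite := by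
      apply Set.Finite.of_finite_image (f := ρ) ?_ hanti.injective.injOn
      apply (hfin ε hε).subset
      rintro x ⟨n, hn, rfl⟩
      exact ⟨hmem n, hn⟩
    obtain ⟨B, hB⟩ := hS.bddAbove
    refine ⟨B + 1, fun n hn => ?_⟩
    have hnS : n ∉ {n | ε ≤ ρ n} := fun h => by
      have := hB h
      omega
    simp only [Set.mem_setOf_eq, not_le] at hnS
    rw [Real.dist_eq, sub_zero, abs_of_pos (hρpos n)]
    exact hnS
  refine ⟨ρ, hanti, hmem, htend, fun v hv => ?_⟩
  have hvpos := hpos v hv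
  have hex : ∃ n, ρ n < v := (htend.eventually_lt_const hvpos).exists
  have hlt : ρ (Nat.find hex) < v := Nat.find_spec hex
  have hn₀0 : Nat.find hex ≠ 0 := by
    intro h
    have h2 := hnext 2 (by norm_num)
    have hub : v ≤ ρ 0 := by
      rw [hρz]
      exact h2.2 ⟨hv, lt_of_le_of_lt (hle v hv) (by norm_num)⟩
    rw [h] at hlt
    linarith
  obtain ⟨m, hm⟩ := Nat.exists_eq_succ_of_ne_zero hn₀0
  have hvle : v ≤ ρ m := by
    have := Nat.find_min hex (m := m) (by omega)
    exact not_lt.mp this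
  rcases eq_or_lt_of_le hvle with h | h
  · exact ⟨m, h.symm⟩
  · exfalso
    have hg := hnext (ρ m) (hρpos m)
    have hub : v ≤ ρ (m + 1) := by
      rw [hρs m]
      exact hg.2 ⟨hv, h⟩
    rw [hm] at hlt
    linarith

lemma csp_ce_lt {E : Set ℝ} (hE : E ⊆ Ici 0) (hcsp : CSP E) : CE E < ⊤ := by
  by_contra hCE
  have hCEtop : CE E = ⊤ := top_le_iff.mp (not_lt.mp hCE)
  -- choose bad sequences
  have hsel : ∀ k : ℕ, ∃ t, t ∈ E0d E ∧ (k : ℝ≥0∞) < Ctau E t := by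
    intro k
    have hk : (k : ℝ≥0∞) < CE E := by
      rw [hCEtop]
      exact ENNReal.natCast_lt_top k
    unfold CE at hk
    obtain ⟨v, ⟨t, ht, rfl⟩, hv⟩ := lt_sSup_iff.mp hk
    exact ⟨t, ht, hv⟩
  choose T hT1 hT2 using hsel
  have hMsel : ∀ k : ℕ, ∃ M : ℕ, ∀ n ≥ M, T k (n + 1) ≤ T k n ∧ T k n < 1 / ((k : ℝ) + 1) := by
    intro k
    have h1 := (hT1 k).1
    have h2 : ∀ᶠ n in atTop, T k n < 1 / ((k : ℝ) + 1) :=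
      (hT1 k).2.2.eventually_lt_const (by positivity)
    exact eventually_atTop.mp (h1.and h2)
  choose M hM using hMsel
  -- the merged value set
  set V : Set ℝ := {v | ∃ k n, M k ≤ n ∧ T k n = v} with hVdef
  have hVpos : ∀ v ∈ V, 0 < v := by
    rintro v ⟨k, n, _, rfl⟩
    exact E0d_pos hE (hT1 k) n
  have hVle : ∀ v ∈ V, v ≤ 1 := by
    rintro v ⟨k, n, hn, rfl⟩
    have h1 := (hM k n hn).2
    have h2 : (1 : ℝ) / ((k : ℝ) + 1) ≤ 1 := by
      rw [div_le_one (by positivity)]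
      simp
    linarith
  have hVE : ∀ v ∈ V, v ∈ E := by
    rintro v ⟨k, n, _, rfl⟩
    exact ((hT1 k).2.1 n).1
  have hVfin : ∀ ε : ℝ, 0 < ε → (V ∩ Ici ε).Finite := by
    intro ε hε
    obtain ⟨K, hK⟩ := exists_nat_gt (1 / ε)
    have hK0 : (0 : ℝ) < K := lt_trans (by positivity) hK
    have hfink : ∀ k, (T k '' {n | ε ≤ T k n}).Finite := by
      intro k
      have h2 : ∀ᶠ n in atTop, T k n < ε := (hT1 k).2.2.eventually_lt_const hε
      obtain ⟨N, hN⟩ := eventually_atTop.mp h2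
      have hsub : {n | ε ≤ T k n} ⊆ Set.Iio N := by
        intro n hn
        by_contra h'
        exact absurd hn (not_le.mpr (hN n (not_lt.mp h')))
      exact ((Set.finite_Iio N).subset hsub).image _
    have hsub : V ∩ Ici ε ⊆ ⋃ k ∈ Finset.range K, T k '' {n | ε ≤ T k n} := by
      rintro v ⟨⟨k, n, hn, rfl⟩, hv⟩
      have hkK : k < K := by
        by_contra h'
        push_neg at h'
        have h1 : T k n < 1 / ((k : ℝ) + 1) := (hM k n hn).2
        have hcast : (K : ℝ) ≤ (k : ℝ) := Nat.cast_le.mpr h'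
        have h2 : (1 : ℝ) / ((k : ℝ) + 1) ≤ 1 / K := by
          apply one_div_le_one_div_of_le hK0
          linarith
        have h3 : (1 : ℝ) / K < ε := by
          rw [div_lt_iff₀ hK0]
          rw [div_lt_iff₀ hε] at hK
          linarith
        have hεv : ε ≤ T k n := hv
        linarith
      exact Set.mem_biUnion (Finset.mem_range.mpr hkK) ⟨n, hv, rfl⟩
    exact (Set.Finite.biUnion (Finset.range K).finite_toSet fun k _ => hfink k).subset hsub
  have hVinf : V.Infinite := by
    have hsub : T 0 '' {n | M 0 ≤ n} ⊆ V := by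
      rintro v ⟨n, hn, rfl⟩
      exact ⟨0, n, hn, rfl⟩
    refine Set.Infinite.mono hsub ?_
    intro hfin0
    have hne : (T 0 '' {n | M 0 ≤ n}).Nonempty :=
      ⟨T 0 (M 0), M 0, Set.mem_setOf.mpr le_rfl, rfl⟩
    obtain ⟨μ, hμmem, hμmin⟩ : ∃ μ ∈ T 0 '' {n | M 0 ≤ n}, ∀ v ∈ T 0 '' {n | M 0 ≤ n}, v ≤ μ → μ = v := by
      obtain ⟨g, hg1, hg2⟩ := hfin0.exists_minimalFor id _ hne
      exact ⟨g, hg1, fun v hv h => le_antisymm (hg2 hv h) h⟩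
    obtain ⟨n₀, _, hn₀⟩ := hμmem
    have hμpos : 0 < μ := by
      rw [← hn₀]
      exact E0d_pos hE (hT1 0) n₀
    have hev : ∀ᶠ n in atTop, T 0 n < μ := (hT1 0).2.2.eventually_lt_const hμpos
    obtain ⟨N, hN⟩ := eventually_atTop.mp hev
    have hmem : T 0 (max N (M 0)) ∈ T 0 '' {n | M 0 ≤ n} :=
      ⟨max N (M 0), Set.mem_setOf.mpr (le_max_right _ _), rfl⟩
    have hlt : T 0 (max N (M 0)) < μ := hN _ (le_max_left _ _)
    have heq : μ = T 0 (max N (M 0)) := hμmin _ hmem hlt.le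
    exact absurd heq (ne_of_gt hlt)
  obtain ⟨ρ, hρanti, hρV, hρ0, hρsurj⟩ := exists_enum V hVpos hVle hVfin hVinf
  have hρpos : ∀ n, 0 < ρ n := fun n => hVpos _ (hρV n)
  have hρE0d : ρ ∈ E0d E := by
    refine ⟨Eventually.of_forall fun n => (hρanti (Nat.lt_succ_self n)).le,
      fun n => ⟨hVE _ (hρV n), ?_⟩, hρ0⟩
    simp only [Set.mem_singleton_iff]
    exact (hρpos n).ne'
  obtain ⟨a, b, hab, c₁, c₂, hc₁, hc₂, hcc⟩ := hcsp ρ hρE0d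
  -- uniform bound on all Ctau E (T k)
  have hbound : ∀ k : ℕ, Ctau E (T k) ≤ ENNReal.ofReal c₂ := by
    intro k
    have hrange : ∀ n, ∃ m, M k ≤ n → ρ m = T k n := by
      intro n
      by_cases hn : M k ≤ n
      · obtain ⟨m, hm⟩ := hρsurj ⟨k, n, hn, rfl⟩
        exact ⟨m, fun _ => hm⟩
      · exact ⟨0, fun h => absurd h hn⟩
    choose σ hσ using hrange
    have hσtop : Tendsto σ atTop atTop := by
      rw [tendsto_atTop]
      intro m
      have h1 : ∀ᶠ n in atTop, T k n < ρ m := (hT1 k).2.2.eventually_lt_const (hρpos m)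
      filter_upwards [h1, eventually_ge_atTop (M k)] with n h1 h2
      have h3 : ρ (σ n) < ρ m := by
        rw [hσ n h2]
        exact h1
      exact (hρanti.lt_iff_gt.mp h3).le
    have hIEd : IEd E (fun n => a (σ n)) (fun n => b (σ n)) := by
      refine ⟨fun n => hab.1 (σ n), ?_, hab.2.2.1.comp hσtop, hab.2.2.2.comp hσtop⟩
      obtain ⟨Na, hNa⟩ := eventually_atTop.mp hab.2.1
      have hch := evdecr_chain hNa
      have hev : ∀ᶠ n in atTop, Na ≤ σ n := hσtop.eventually (eventually_ge_atTop Na)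
      filter_upwards [hev, eventually_ge_atTop (M k)] with n h1 h2
      have hσle : σ n ≤ σ (n + 1) := by
        have hTle : T k (n + 1) ≤ T k n := (hM k n h2).1
        have h3 : ρ (σ (n + 1)) ≤ ρ (σ n) := by
          rw [hσ n h2, hσ (n + 1) (le_trans h2 (Nat.le_succ n))]
          exact hTle
        exact hρanti.le_iff_ge.mp h3
      exact hch (σ n) (σ (n + 1)) h1 hσle
    have hevlt : ∀ᶠ n in atTop, c₁ * T k n < a (σ n) := by
      filter_upwards [eventually_ge_atTop (M k)] with n hn
      rw [← hσ n hn]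
      exact (hcc (σ n)).1
    have hevle : ∀ᶠ n in atTop, T k n ≤ a (σ n) :=
      eventually_tau_le hE (hT1 k) hIEd hc₁ hevlt
    have hls : ∀ᶠ n in atTop, ENNReal.ofReal (a (σ n) / T k n) ≤ ENNReal.ofReal c₂ := by
      filter_upwards [eventually_ge_atTop (M k)] with n hn
      have hTpos := E0d_pos hE (hT1 k) n
      have h1 : a (σ n) < c₂ * T k n := by
        rw [← hσ n hn]
        exact (hcc (σ n)).2
      exact ENNReal.ofReal_le_ofReal ((div_le_iff₀ hTpos).mpr h1.le)
    have hmem : limsup (fun n => ENNReal.ofReal (a (σ n) / T k n)) atTop ∈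
        {v | ∃ a b : ℕ → ℝ, IEd E a b ∧ (∀ᶠ n in atTop, T k n ≤ a n) ∧
          v = limsup (fun n => ENNReal.ofReal (a n / T k n)) atTop} :=
      ⟨fun n => a (σ n), fun n => b (σ n), hIEd, hevle, rfl⟩
    exact le_trans (sInf_le hmem) (limsup_le_of_le (by isBoundedDefault) hls)
  -- contradiction
  have h1 : ((⌈c₂⌉₊ : ℕ) : ℝ≥0∞) < Ctau E (T ⌈c₂⌉₊) := hT2 ⌈c₂⌉₊
  have h2 : Ctau E (T ⌈c₂⌉₊) ≤ ENNReal.ofReal c₂ := hbound ⌈c₂⌉₊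
  have h3 : ENNReal.ofReal c₂ ≤ ((⌈c₂⌉₊ : ℕ) : ℝ≥0∞) := by
    rw [← ENNReal.ofReal_natCast]
    exact ENNReal.ofReal_le_ofReal (Nat.le_ceil c₂)
  exact absurd (lt_of_lt_of_le h1 (le_trans h2 h3)) (lt_irrefl _)

end AuxLemmas

/-- `E` is `τ`-strongly porous at `0` iff `C(τ̃) < ∞`; moreover `E` is
completely strongly porous at `0` iff `C_E < ∞`. -/
theorem stmt_10 (E : Set ℝ) (hE : E ⊆ Ici 0) (τ : ℕ → ℝ) (hτ : τ ∈ E0d E) :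
    (TPorous E τ ↔ Ctau E τ < ⊤) ∧ (CSP E ↔ CE E < ⊤) := by
  constructor
  · exact ⟨fun h => tporous_ctau_lt hE hτ h, fun h => ctau_lt_tporous hE hτ h⟩
  · constructor
    · exact fun hcsp => csp_ce_lt hE hcsp
    · intro hCE τ' hτ'
      have hle : Ctau E τ' ≤ CE E := le_sSup ⟨τ', hτ', rfl⟩
      exact ctau_lt_tporous hE hτ' (lt_of_le_of_lt hle hCE)
end

section
/- Let E ⊆ [0,∞) be completely strongly porous at 0. If L̃ ∈ Ĩ_E^d is universal, then M(L̃) = C_E. -/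
open Filter Topology Set
open scoped ENNReal

namespace IsCompExt
variable {E : Set ℝ} {a b : ℝ}

lemma nonneg (h : IsCompExt E a b) : 0 ≤ a := by
  by_contra hlt
  push_neg at hlt
  obtain ⟨x, hx1, hx2⟩ := exists_between (lt_min h.1 hlt)
  have := interior_subset (h.2.1 ⟨hx1, lt_of_lt_of_le hx2 (min_le_left _ _)⟩)
  exact absurd this.1 (not_le.2 (lt_of_lt_of_le hx2 (min_le_right _ _)))

lemma pos_right (h : IsCompExt E a b) : 0 < b := lt_of_le_of_lt h.nonneg h.1

lemma notMem_interior (h : IsCompExt E a b) : a ∉ interior (Ici 0 \ E) := by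
  intro ha
  obtain ⟨ε, hε, hball⟩ := Metric.isOpen_iff.1 isOpen_interior a ha
  have hsub : Ioo (a - ε/2) b ⊆ interior (Ici 0 \ E) := by
    intro x hx
    rcases le_or_gt x a with hxa | hxa
    · apply hball
      rw [Metric.mem_ball, Real.dist_eq, abs_lt]
      constructor <;> [linarith [hx.1]; linarith [hε]]
    · exact h.2.1 ⟨hxa, hx.2⟩
  have := (h.2.2 (a - ε/2) b (by linarith) le_rfl hsub).1
  linarith

lemma avoid (h : IsCompExt E a b) {x : ℝ} (hx : x ∈ E) : x ∉ Ioo a b := by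
  intro hmem
  exact (interior_subset (h.2.1 hmem)).2 hx

lemma right_unique (h : IsCompExt E a b) {b' : ℝ} (h' : IsCompExt E a b') : b = b' := by
  rcases le_total b b' with hle | hle
  · exact (h.2.2 a b' le_rfl hle h'.2.1).2.symm
  · exact (h'.2.2 a b le_rfl hle h.2.1).2

lemma right_le_of_lt {a' b' : ℝ} (h : IsCompExt E a b) (h' : IsCompExt E a' b')
    (hlt : a < a') : b ≤ a' := by
  by_contra hc
  push_neg at hc
  exact h'.notMem_interior (h.2.1 ⟨hlt, hc⟩)

lemma mono {a' b' : ℝ} (h : IsCompExt E a b) (h' : IsCompExt E a' b')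
    (hle : a ≤ a') : b ≤ b' := by
  rcases eq_or_lt_of_le hle with rfl | hlt
  · exact (h.right_unique h').le
  · exact (h.right_le_of_lt h' hlt).trans h'.1.le

lemma right_dense (h : IsCompExt E a b) {t : ℝ} (ht : b < t) : (E ∩ Ico b t).Nonempty := by
  by_contra hc
  rw [not_nonempty_iff_eq_empty] at hc
  have hsub : Ioo a t ⊆ Ici 0 \ E := by
    intro x hx
    rcases lt_or_ge x b with hxb | hxb
    · exact interior_subset (h.2.1 ⟨hx.1, hxb⟩)
    · refine ⟨le_trans h.pos_right.le hxb, fun hxE => ?_⟩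
      exact absurd (Set.mem_inter hxE (show x ∈ Ico b t from ⟨hxb, hx.2⟩))
        (by rw [hc]; exact notMem_empty x)
  have := (h.2.2 a t le_rfl ht.le (isOpen_Ioo.subset_interior_iff.2 hsub)).2
  linarith

lemma left_dense (h : IsCompExt E a b) {s : ℝ} (hs : 0 ≤ s) (hsa : s < a) :
    (E ∩ Ioc s a).Nonempty := by
  by_contra hc
  rw [not_nonempty_iff_eq_empty] at hc
  have hsub : Ioo s b ⊆ Ici 0 \ E := by
    intro x hx
    rcases le_or_gt x a with hxa | hxa
    · refine ⟨le_trans hs hx.1.le, fun hxE => ?_⟩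
      exact absurd (Set.mem_inter hxE (show x ∈ Ioc s a from ⟨hx.1, hxa⟩))
        (by rw [hc]; exact notMem_empty x)
    · exact interior_subset (h.2.1 ⟨hxa, hx.2⟩)
  have := (h.2.2 s b hsa.le le_rfl (isOpen_Ioo.subset_interior_iff.2 hsub)).1
  linarith

end IsCompExt

/-- If `E` is completely strongly porous at `0` and `L̃ ∈ Ĩ_Eᵈ` is
universal, then `M(L̃) = C_E`. -/
theorem stmt_11 (E : Set ℝ) (hE : E ⊆ Ici 0) (hcsp : CSP E) (l m : ℕ → ℝ)
    (hu : UnivElem E l m) : MQ l m = CE E := by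
  classical
  obtain ⟨⟨hcomp, hdecr, hl0, hratio⟩, huniv⟩ := hu
  obtain ⟨N, hN⟩ := eventually_atTop.1 hdecr
  have hmono : ∀ i j, N ≤ i → i ≤ j → l j ≤ l i := by
    have key : ∀ i, N ≤ i → ∀ d, l (i + d) ≤ l i := by
      intro i hi d
      induction d with
      | zero => simp
      | succ d ih =>
        have h1 := hN (i + d) (le_trans hi (Nat.le_add_right _ _))
        calc l (i + (d+1)) = l ((i + d) + 1) := by ring_nf
          _ ≤ l (i + d) := h1
          _ ≤ l i := ih
    intro i j hi hij
    obtain ⟨d, rfl⟩ := Nat.le.dest hij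
    exact key i hi d
  have hlnn : ∀ n, 0 ≤ l n := fun n => (hcomp n).nonneg
  have hmpos : ∀ n, 0 < m n := fun n => (hcomp n).pos_right
  by_cases hzero : ∃ n, N ≤ n ∧ l n = 0
  · -- Case A : l is eventually 0, both sides are 0
    obtain ⟨n₀, hn₀N, hn₀⟩ := hzero
    have hE0d : E0d E = ∅ := by
      rw [eq_empty_iff_forall_notMem]
      rintro τ ⟨hτd, hτm, hτ0⟩
      have hpos : ∀ k, 0 < τ k := fun k =>
        lt_of_le_of_ne (hE (hτm k).1) (Ne.symm (hτm k).2)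
      obtain ⟨K, hK⟩ := eventually_atTop.1 (hτ0.eventually (eventually_lt_nhds (hmpos n₀)))
      have hmem : τ K ∈ Ioo (l n₀) (m n₀) := ⟨hn₀ ▸ hpos K, hK K le_rfl⟩
      exact (hcomp n₀).avoid (hτm K).1 hmem
    have hMQ : MQ l m = 0 := by
      have hev : ∀ᶠ n in atTop,
          (fun n => ENNReal.ofReal (l n / m (n+1))) n = (fun _ => (0:ℝ≥0∞)) n := by
        filter_upwards [eventually_ge_atTop n₀] with n hn
        have hl : l n = 0 := le_antisymm (hn₀ ▸ hmono n₀ n hn₀N hn) (hlnn n)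
        simp [hl]
      rw [show MQ l m = Filter.limsup (fun n => ENNReal.ofReal (l n / m (n+1))) atTop from rfl,
        limsup_congr hev, limsup_const]
    have hCE : CE E = 0 := by
      refine le_antisymm (sSup_le ?_) zero_le
      rintro v ⟨τ, hτ, rfl⟩
      rw [hE0d] at hτ
      exact absurd hτ (notMem_empty τ)
    rw [hMQ, hCE]
  · -- Case B : l is eventually strictly positive
    push_neg at hzero
    have hlpos : ∀ n, N ≤ n → 0 < l n := fun n hn =>
      lt_of_le_of_ne (hlnn n) (Ne.symm (hzero n hn))
    have hm0 : Tendsto m atTop (𝓝 (0:ℝ)) := by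
      rw [tendsto_order]
      constructor
      · intro x hx
        exact Eventually.of_forall fun n => lt_trans hx (hmpos n)
      · intro x hx
        obtain ⟨n₁, hn₁N, hn₁⟩ : ∃ n₁, N ≤ n₁ ∧ l n₁ < x := by
          obtain ⟨M, hM⟩ := eventually_atTop.1 (hl0.eventually (eventually_lt_nhds hx))
          exact ⟨max M N, le_max_right _ _, hM _ (le_max_left _ _)⟩
        obtain ⟨e, heE, he0, heln⟩ : ∃ e, e ∈ E ∧ 0 < e ∧ e ≤ l n₁ := by
          obtain ⟨e, heE, he⟩ := (hcomp n₁).left_dense le_rfl (hlpos n₁ hn₁N)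
          exact ⟨e, heE, he.1, he.2⟩
        filter_upwards [hl0.eventually (eventually_lt_nhds he0)] with n hn
        have hme : m n ≤ e := by
          by_contra hcon
          push_neg at hcon
          exact (hcomp n).avoid heE ⟨hn, hcon⟩
        exact lt_of_le_of_lt hme (lt_of_le_of_lt heln hn₁)
    refine le_antisymm ?_ (sSup_le ?_)
    · -- MQ ≤ CE
      have aux : ∀ z : ℝ≥0∞, z < MQ l m → z ≤ CE E := by
        intro z hz
        rcases eq_or_ne z 0 with rfl | hz0
        · exact zero_le
        obtain ⟨z', hzz', hz'MQ⟩ := exists_between hz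
        have hz't : z' ≠ ⊤ := by
          intro h
          rw [h] at hz'MQ
          exact absurd hz'MQ (not_lt.2 le_top)
        have hzt : z ≠ ⊤ := (hzz'.trans_le le_top).ne
        have hzr : z.toReal < z'.toReal := (ENNReal.toReal_lt_toReal hzt hz't).2 hzz'
        have hfreq : ∃ᶠ n in atTop, z' < ENNReal.ofReal (l n / m (n+1)) ∧ N ≤ n :=
          (frequently_lt_of_lt_limsup (h := hz'MQ)).and_eventually (eventually_ge_atTop N)
        obtain ⟨φ, hφmono, hφ⟩ := extraction_of_frequently_atTop hfreq
        set p : ℕ → ℝ := fun k => m (φ k + 1) with hp_def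
        have hφN : ∀ k, N ≤ φ k := fun k => (hφ k).2
        have hppos : ∀ k, 0 < p k := fun k => hmpos _
        have hratio' : ∀ k, z'.toReal < l (φ k) / p k := by
          intro k
          have h2 : ENNReal.ofReal z'.toReal < ENNReal.ofReal (l (φ k) / m (φ k + 1)) := by
            rw [ENNReal.ofReal_toReal hz't]
            exact (hφ k).1
          exact (ENNReal.ofReal_lt_ofReal_iff_of_nonneg ENNReal.toReal_nonneg).1 h2
        have hpanti : ∀ k, p (k+1) ≤ p k := by
          intro k
          exact (hcomp (φ (k+1) + 1)).mono (hcomp (φ k + 1))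
            (hmono (φ k + 1) (φ (k+1) + 1) (by have := hφN k; omega)
              (by have := hφmono (show k < k+1 by omega); omega))
        have hp0 : Tendsto p atTop (𝓝 (0:ℝ)) := by
          apply hm0.comp
          rw [tendsto_atTop]
          intro b
          filter_upwards [eventually_ge_atTop b] with k hk
          have hka : k ≤ φ k := hφmono.le_apply
          omega
        -- construct τ
        have hbase : ∃ s, s ∈ E ∧ p 0 ≤ s ∧ s ≤ p 0 * (1 + 1/(((0:ℕ):ℝ)+1)) := by
          obtain ⟨s, hsE, hs⟩ := (hcomp (φ 0 + 1)).right_dense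
            (t := p 0 * (1 + 1/(((0:ℕ):ℝ)+1))) (by norm_num; nlinarith [hppos 0])
          exact ⟨s, hsE, hs.1, hs.2.le⟩
        have hstep : ∀ (k : ℕ) (t : ℝ), t ∈ E → p (k+1) ≤ t →
            ∃ s, s ∈ E ∧ p (k+1) ≤ s ∧ s ≤ t ∧ s ≤ p (k+1) * (1 + 1/(((k+1:ℕ):ℝ)+1)) := by
          intro k t htE hpt
          have hd : (0:ℝ) < 1/(((k+1:ℕ):ℝ)+1) := by positivity
          rcases eq_or_lt_of_le hpt with heq | hlt
          · refine ⟨t, htE, hpt, le_rfl, ?_⟩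
            rw [← heq]
            nlinarith [hppos (k+1)]
          · obtain ⟨s, hsE, hs⟩ := (hcomp (φ (k+1) + 1)).right_dense
              (t := min t (p (k+1) * (1 + 1/(((k+1:ℕ):ℝ)+1))))
              (lt_min hlt (by nlinarith [hppos (k+1)]))
            exact ⟨s, hsE, hs.1, hs.2.le.trans (min_le_left _ _),
              hs.2.le.trans (min_le_right _ _)⟩
        choose f hf1 hf2 hf3 hf4 using hstep
        obtain ⟨s0, hs0E, hs0l, hs0u⟩ := hbase
        let T : ∀ k : ℕ, {s : ℝ // s ∈ E ∧ p k ≤ s ∧ s ≤ p k * (1 + 1/((k:ℝ)+1))} := fun k =>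
          Nat.rec ⟨s0, hs0E, hs0l, hs0u⟩
            (fun k ih =>
              ⟨f k ih.1 ih.2.1 ((hpanti k).trans ih.2.2.1),
               hf1 _ _ _ _, hf2 _ _ _ _,
               hf4 k ih.1 ih.2.1 ((hpanti k).trans ih.2.2.1)⟩) k
        set τ : ℕ → ℝ := fun k => (T k).1 with hτ_def
        have hτE : ∀ k, τ k ∈ E := fun k => (T k).2.1
        have hτlb : ∀ k, p k ≤ τ k := fun k => (T k).2.2.1
        have hτub : ∀ k, τ k ≤ p k * (1 + 1/((k:ℝ)+1)) := fun k => (T k).2.2.2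
        have hτdec : ∀ k, τ (k+1) ≤ τ k := fun k =>
          hf3 k (T k).1 (T k).2.1 ((hpanti k).trans (T k).2.2.1)
        have hτpos : ∀ k, 0 < τ k := fun k => lt_of_lt_of_le (hppos k) (hτlb k)
        have hτ0 : Tendsto τ atTop (𝓝 (0:ℝ)) := by
          have h2p : Tendsto (fun k => p k * 2) atTop (𝓝 (0:ℝ)) := by
            simpa using hp0.mul_const 2
          refine tendsto_of_tendsto_of_tendsto_of_le_of_le hp0 h2p hτlb fun k => ?_
          have h1 : 1/((k:ℝ)+1) ≤ 1 := by
            rw [div_le_one (by positivity)]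
            linarith [Nat.cast_nonneg (α := ℝ) k]
          nlinarith [hppos k, hτub k]
        have hτE0d : τ ∈ E0d E :=
          ⟨Eventually.of_forall hτdec,
           fun k => ⟨hτE k, fun h => (hτpos k).ne' (by simpa using h)⟩, hτ0⟩
        have hzC : z ≤ Ctau E τ := by
          apply le_sInf
          rintro v ⟨a, b, hab, habτ, rfl⟩
          obtain ⟨N₁, f₁, hf₁⟩ := huniv a b hab
          obtain ⟨δ, hδpos, hδ⟩ : ∃ δ : ℝ, 0 < δ ∧ ∀ i, i < N → l i ≠ 0 → δ ≤ l i := by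
            by_cases hne : (Finset.filter (fun i => l i ≠ 0) (Finset.range N)).Nonempty
            · refine ⟨min 1 ((Finset.filter (fun i => l i ≠ 0) (Finset.range N)).inf' hne l),
                lt_min one_pos ?_, fun i hiN hi0 => ?_⟩
              · refine (Finset.lt_inf'_iff hne).2 fun i hi => ?_
                exact lt_of_le_of_ne (hlnn i) (Ne.symm (Finset.mem_filter.1 hi).2)
              · exact (min_le_right _ _).trans (Finset.inf'_le _
                  (Finset.mem_filter.2 ⟨Finset.mem_range.2 hiN, hi0⟩))
            · exact ⟨1, one_pos, fun i hiN hi0 =>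
                absurd ⟨i, Finset.mem_filter.2 ⟨Finset.mem_range.2 hiN, hi0⟩⟩ hne⟩
          have ha0 := hab.2.2.1
          have hδev : ∀ᶠ j in atTop, a j < δ := ha0.eventually (eventually_lt_nhds hδpos)
          have hrt : Tendsto (fun j : ℕ => z'.toReal / (1 + 1/((j:ℝ)+1))) atTop
              (𝓝 z'.toReal) := by
            have h1 : Tendsto (fun j : ℕ => 1 + 1/((j:ℝ)+1)) atTop (𝓝 (1:ℝ)) := by
              simpa using (tendsto_const_nhds (x := (1:ℝ))).add tendsto_one_div_add_atTop_nhds_zero_nat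
            simpa [Pi.div_def] using (tendsto_const_nhds (x := z'.toReal)).div h1 one_ne_zero
          have hrev : ∀ᶠ j : ℕ in atTop, z.toReal < z'.toReal / (1 + 1/((j:ℝ)+1)) :=
            hrt.eventually (eventually_gt_nhds hzr)
          have hkey : ∀ᶠ j in atTop, z ≤ ENNReal.ofReal (a j / τ j) := by
            filter_upwards [habτ, hδev, eventually_ge_atTop N₁, hrev] with j h1 h2 h3 h4
            have hfa := hf₁ j h3
            have hapos : 0 < a j := lt_of_lt_of_le (hτpos j) h1
            have hfN : N ≤ f₁ j := by
              by_contra hcon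
              push_neg at hcon
              have hδle : δ ≤ l (f₁ j) := hδ _ hcon (by rw [← hfa]; exact ne_of_gt hapos)
              rw [← hfa] at hδle
              linarith
            have hτp : m (φ j + 1) ≤ τ j := hτlb j
            have hlf : l (φ j + 1) < a j := lt_of_lt_of_le (hcomp (φ j + 1)).1 (hτp.trans h1)
            have hfφ : f₁ j ≤ φ j := by
              by_contra hcon
              push_neg at hcon
              have hll : l (f₁ j) ≤ l (φ j + 1) :=
                hmono (φ j + 1) (f₁ j) (by have := hφN j; omega) (by omega)
              rw [← hfa] at hll
              linarith
            have hlb : l (φ j) ≤ a j := by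
              rw [hfa]
              exact hmono (f₁ j) (φ j) hfN hfφ
            have hεpos : (0:ℝ) < 1 + 1/((j:ℝ)+1) := by positivity
            have e2 : z'.toReal ≤ l (φ j) / p j := (hratio' j).le
            have hd1 : z'.toReal / (1 + 1/((j:ℝ)+1)) ≤ a j / τ j := by
              calc z'.toReal / (1 + 1/((j:ℝ)+1))
                  ≤ (l (φ j) / p j) / (1 + 1/((j:ℝ)+1)) := by gcongr
                _ = l (φ j) / (p j * (1 + 1/((j:ℝ)+1))) := by rw [div_div]
                _ ≤ a j / (p j * (1 + 1/((j:ℝ)+1))) := by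
                    gcongr
                    exact (mul_pos (hppos j) hεpos).le
                _ ≤ a j / τ j := by
                    rw [div_le_div_iff₀ (mul_pos (hppos j) hεpos) (hτpos j)]
                    exact mul_le_mul_of_nonneg_left (hτub j) hapos.le
            have hfin : z.toReal ≤ a j / τ j := le_of_lt (lt_of_lt_of_le h4 hd1)
            calc z = ENNReal.ofReal z.toReal := (ENNReal.ofReal_toReal hzt).symm
              _ ≤ ENNReal.ofReal (a j / τ j) := ENNReal.ofReal_le_ofReal hfin
          exact le_limsup_of_frequently_le hkey.frequently
        calc z ≤ Ctau E τ := hzC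
          _ ≤ CE E := le_sSup ⟨τ, hτE0d, rfl⟩
      by_contra hcon
      push_neg at hcon
      obtain ⟨z, hz1, hz2⟩ := exists_between hcon
      exact absurd (aux z hz2) (not_le.2 hz1)
    · -- CE ≤ MQ
      rintro v ⟨τ, ⟨hτd, hτm, hτ0⟩, rfl⟩
      have hτpos : ∀ k, 0 < τ k := fun k =>
        lt_of_le_of_ne (hE (hτm k).1) (Ne.symm (hτm k).2)
      have hex : ∀ k, ∃ n, l (N + n) < τ k := by
        intro k
        obtain ⟨M, hM⟩ := eventually_atTop.1 (hl0.eventually (eventually_lt_nhds (hτpos k)))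
        exact ⟨M, hM (N + M) (Nat.le_add_left _ _)⟩
      set g : ℕ → ℕ := fun k => N + Nat.find (hex k) - 1 with hg_def
      have hfind1 : ∀ k, τ k < l N → 1 ≤ Nat.find (hex k) := by
        intro k hk
        rcases Nat.eq_zero_or_pos (Nat.find (hex k)) with h0 | h1
        · have hsp := Nat.find_spec (hex k)
          rw [h0] at hsp
          simp only [Nat.add_zero] at hsp
          linarith
        · exact h1
      have hgN : ∀ k, τ k < l N → N ≤ g k := by
        intro k hk
        have h1 := hfind1 k hk
        simp only [hg_def]
        omega
      have hspec : ∀ k, τ k < l N → l (g k + 1) < τ k := by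
        intro k hk
        have h1 := hfind1 k hk
        have he : g k + 1 = N + Nat.find (hex k) := by simp only [hg_def]; omega
        rw [he]
        exact Nat.find_spec (hex k)
      have hglb : ∀ k, τ k < l N → τ k ≤ l (g k) := by
        intro k hk
        have h1 := hfind1 k hk
        have hmin := Nat.find_min (hex k) (show Nat.find (hex k) - 1 < Nat.find (hex k) by omega)
        push_neg at hmin
        have he : N + (Nat.find (hex k) - 1) = g k := by simp only [hg_def]; omega
        rwa [he] at hmin
      have hτN : ∀ᶠ k in atTop, τ k < l N := hτ0.eventually (eventually_lt_nhds (hlpos N le_rfl))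
      have hgmono : ∀ k, τ (k+1) ≤ τ k → g k ≤ g (k+1) := by
        intro k hk
        have hfm : Nat.find (hex k) ≤ Nat.find (hex (k+1)) :=
          Nat.find_mono fun n hn => lt_of_lt_of_le hn hk
        simp only [hg_def]
        omega
      have hgtop : Tendsto g atTop atTop := by
        rw [tendsto_atTop]
        intro b
        have hb' : N ≤ max b N := le_max_right _ _
        filter_upwards [hτN, hτ0.eventually (eventually_lt_nhds (hlpos _ hb'))] with k hk1 hk2
        by_contra hcon
        push_neg at hcon
        have hle : g k + 1 ≤ max b N := by omega
        have hll := hmono (g k + 1) (max b N) (by have := hgN k hk1; omega) hle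
        have hsp := hspec k hk1
        linarith
      have hIEd : IEd E (fun k => l (g k)) (fun k => m (g k)) := by
        refine ⟨fun k => hcomp (g k), ?_, hl0.comp hgtop, ?_⟩
        · obtain ⟨K, hK⟩ := eventually_atTop.1 hτd
          filter_upwards [hτN, eventually_ge_atTop K] with k hk1 hk2
          exact hmono (g k) (g (k+1)) (hgN k hk1) (hgmono k (hK k hk2))
        · exact hratio.comp hgtop
      have hev : ∀ᶠ k in atTop, τ k ≤ l (g k) := by
        filter_upwards [hτN] with k hk
        exact hglb k hk
      have hmem2 : Filter.limsup (fun k => ENNReal.ofReal (l (g k) / τ k)) atTop ∈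
          {v | ∃ a b : ℕ → ℝ, IEd E a b ∧ (∀ᶠ n in atTop, τ n ≤ a n) ∧
            v = Filter.limsup (fun n => ENNReal.ofReal (a n / τ n)) atTop} :=
        ⟨fun k => l (g k), fun k => m (g k), hIEd, hev, rfl⟩
      refine le_trans (sInf_le hmem2) ?_
      refine le_of_forall_gt_imp_ge_of_dense fun c hc => ?_
      have hc' : Filter.limsup (fun n => ENNReal.ofReal (l n / m (n+1))) atTop < c := hc
      have hev2 : ∀ᶠ n in atTop, ENNReal.ofReal (l n / m (n+1)) < c :=
        eventually_lt_of_limsup_lt hc'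
      refine limsup_le_of_le (h := ?_)
      filter_upwards [hτN, hgtop.eventually hev2] with k hk1 hk2
      refine le_of_lt (lt_of_le_of_lt ?_ hk2)
      apply ENNReal.ofReal_le_ofReal
      have h1 : m (g k + 1) ≤ τ k := by
        by_contra hcon
        push_neg at hcon
        exact (hcomp (g k + 1)).avoid (hτm k).1 ⟨hspec k hk1, hcon⟩
      rw [div_le_div_iff₀ (hτpos k) (hmpos (g k + 1))]
      exact mul_le_mul_of_nonneg_left h1 (hlnn (g k))
end

section
/- Let E ⊆ [0,∞) with 0 ∈ E be such that 0 is an accumulation point of E, and regard E as a pointed metric space with the metric induced from ℝ and marked point 0. Then the equality C_E = R*_n(E,0) holds (as elements of [0,∞]). -/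
open Filter Topology Set
open scoped ENNReal

section Helpers
lemma distE {E : Set ℝ} (hE : E ⊆ Ici 0) (h0 : (0:ℝ) ∈ E) (x : E) :
    dist x (⟨0, h0⟩ : E) = (x : ℝ) := by
  rw [Subtype.dist_eq, Real.dist_eq]
  simpa using abs_of_nonneg (Set.mem_Ici.1 (hE x.2))

lemma evdecr_anti {τ : ℕ → ℝ} {N : ℕ} (h : ∀ n, N ≤ n → τ (n+1) ≤ τ n) :
    ∀ m n, N ≤ m → m ≤ n → τ n ≤ τ m := by
  intro m n hNm hmn
  induction n, hmn using Nat.le_induction with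
  | base => exact le_rfl
  | succ n hmn ih => exact (h n (hNm.trans hmn)).trans ih

lemma EvDecr.comp_strictMono {τ : ℕ → ℝ} (h : EvDecr τ) {φ : ℕ → ℕ} (hφ : StrictMono φ) :
    EvDecr (fun k => τ (φ k)) := by
  obtain ⟨N, hN⟩ := eventually_atTop.1 h
  refine eventually_atTop.2 ⟨N, fun k hk => ?_⟩
  exact evdecr_anti hN (φ k) (φ (k+1)) (hk.trans hφ.le_apply) (hφ.monotone (Nat.le_succ k))

lemma normalScaling_of_E0d_subseq (E : Set ℝ) (hE : E ⊆ Ici 0) (h0 : (0:ℝ) ∈ E)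
    {τ : ℕ → ℝ} (hτ : τ ∈ E0d E) {φ : ℕ → ℕ} (hφ : StrictMono φ) :
    NormalScaling (⟨0, h0⟩ : E) (fun k => τ (φ k)) := by
  refine ⟨⟨fun k => E0d_pos hE hτ (φ k), hτ.2.2.comp hφ.tendsto_atTop⟩,
    hτ.1.comp_strictMono hφ, fun k => ⟨τ (φ k), (hτ.2.1 (φ k)).1⟩, ?_⟩
  have h1 : ∀ k, dist ((fun k => (⟨τ (φ k), (hτ.2.1 (φ k)).1⟩ : E)) k) (⟨0,h0⟩:E) / τ (φ k)
      = 1 := fun k => by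
    rw [distE hE h0]; exact div_self (E0d_pos hE hτ (φ k)).ne'
  simp only [h1]
  exact tendsto_const_nhds

-- extraction of a positive decreasing subsequence
lemma exists_subseq_pos_decr (u : ℕ → ℝ) (hu : Tendsto u atTop (𝓝 0))
    (hpos : ∀ᶠ n in atTop, 0 < u n) :
    ∃ φ : ℕ → ℕ, StrictMono φ ∧ (∀ k, 0 < u (φ k)) ∧ ∀ k, u (φ (k+1)) ≤ u (φ k) := by
  have H : ∀ m : ℕ, ∃ n, m < n ∧ 0 < u n ∧ (0 < u m → u n ≤ u m) := by
    intro m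
    have h1 : ∀ᶠ n in atTop, 0 < u n ∧ (0 < u m → u n ≤ u m) := by
      rcases le_or_gt (u m) 0 with h | h
      · filter_upwards [hpos] with n hn
        exact ⟨hn, fun hc => absurd hc (not_lt.2 h)⟩
      · have h2 : ∀ᶠ n in atTop, u n < u m := hu.eventually (gt_mem_nhds h)
        filter_upwards [hpos, h2] with n h3 h4
        exact ⟨h3, fun _ => h4.le⟩
    obtain ⟨n, hn1, hn2⟩ := ((eventually_gt_atTop m).and h1).exists
    exact ⟨n, hn1, hn2⟩
  choose f hf1 hf2 hf3 using H
  refine ⟨fun k => Nat.rec (f 0) (fun _ p => f p) k, strictMono_nat_of_lt_succ ?_, ?_, ?_⟩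
  · intro n; exact hf1 _
  · intro k; induction k with
    | zero => exact hf2 0
    | succ k ih => exact hf2 _
  · intro k
    induction k with
    | zero => exact hf3 _ (hf2 0)
    | succ k ih => exact hf3 _ (hf2 _)

lemma one_le_Ctau (E : Set ℝ) (hE : E ⊆ Ici 0) (τ : ℕ → ℝ) (hτ : τ ∈ E0d E) :
    1 ≤ Ctau E τ := by
  refine le_sInf ?_
  rintro v ⟨a, b, hIEd, hev, rfl⟩
  refine Filter.le_limsup_of_frequently_le ?_
  refine (hev.mono fun n hn => ?_).frequently
  have h1 : (1:ℝ) ≤ a n / τ n := (one_le_div (E0d_pos hE hτ n)).2 hn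
  calc (1:ℝ≥0∞) = ENNReal.ofReal 1 := by simp
    _ ≤ _ := ENNReal.ofReal_le_ofReal h1

lemma le_RstarN_of (E : Set ℝ) (hE : E ⊆ Ici 0) (h0 : (0:ℝ) ∈ E)
    {τ : ℕ → ℝ} (hτ : τ ∈ E0d E) {φ : ℕ → ℕ} (hφ : StrictMono φ)
    {y : ℕ → E} {L : ℝ}
    (hy : Tendsto (fun k => dist (y k) (⟨0,h0⟩:E) / τ (φ k)) atTop (𝓝 L)) :
    ENNReal.ofReal L ≤ RstarN E (⟨0,h0⟩ : E) :=
  le_sSup ⟨fun k => τ (φ k), y, L, normalScaling_of_E0d_subseq E hE h0 hτ hφ, hy, rfl⟩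

lemma one_le_RstarN (E : Set ℝ) (hE : E ⊆ Ici 0) (h0 : (0:ℝ) ∈ E)
    {τ : ℕ → ℝ} (hτ : τ ∈ E0d E) : 1 ≤ RstarN E (⟨0,h0⟩ : E) := by
  have hy : Tendsto (fun k => dist ((fun k => (⟨τ k, (hτ.2.1 k).1⟩ : E)) k) (⟨0,h0⟩:E)
      / τ (id k)) atTop (𝓝 (1:ℝ)) := by
    have h1 : ∀ k, dist ((fun k => (⟨τ k, (hτ.2.1 k).1⟩ : E)) k) (⟨0,h0⟩:E) / τ (id k)
        = 1 := fun k => by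
      rw [distE hE h0]; exact div_self (E0d_pos hE hτ k).ne'
    simp only [h1]; exact tendsto_const_nhds
  have := le_RstarN_of E hE h0 hτ strictMono_id hy
  rwa [ENNReal.ofReal_one] at this

lemma Ctau_le_RstarN (E : Set ℝ) (hE : E ⊆ Ici 0) (h0 : (0:ℝ) ∈ E)
    (τ : ℕ → ℝ) (hτ : τ ∈ E0d E) : Ctau E τ ≤ RstarN E (⟨0,h0⟩ : E) := by
  by_cases hR : RstarN E (⟨0,h0⟩ : E) = ⊤
  · rw [hR]; exact le_top
  have hpos : ∀ n, 0 < τ n := E0d_pos hE hτ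
  have h1R : 1 ≤ RstarN E (⟨0,h0⟩ : E) := one_le_RstarN E hE h0 hτ
  set M := (RstarN E (⟨0,h0⟩ : E)).toReal with hM
  have hM1 : 1 ≤ M := by
    have := ENNReal.toReal_mono hR h1R
    simpa using this
  have hMR : ENNReal.ofReal M = RstarN E (⟨0,h0⟩ : E) := ENNReal.ofReal_toReal hR
  have key : ∀ δ : ℝ, 0 < δ → Ctau E τ ≤ ENNReal.ofReal (M + δ) := by
    intro δ hδ
    have hMδ1 : 1 ≤ M + δ := by linarith
    -- Step A: eventually no points of E in ((M+δ)τ n, T τ n)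
    have stepA : ∀ T : ℝ, ∀ᶠ n in atTop, Ioo ((M+δ)*τ n) (T*τ n) ∩ E = ∅ := by
      intro T
      by_contra hcon
      rw [Filter.not_eventually] at hcon
      have hfreq : ∃ᶠ n in atTop, ∃ e, e ∈ Ioo ((M+δ)*τ n) (T*τ n) ∧ e ∈ E := by
        refine hcon.mono fun n hn => ?_
        obtain ⟨e, he⟩ := Set.nonempty_iff_ne_empty.2 hn
        exact ⟨e, he.1, he.2⟩
      obtain ⟨φ, hφ, hφP⟩ := Filter.extraction_of_frequently_atTop hfreq
      choose e he1 he2 using hφP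
      have hmem : ∀ k, e k / τ (φ k) ∈ Icc (M+δ) T := by
        intro k
        constructor
        · exact (le_div_iff₀ (hpos (φ k))).2 (he1 k).1.le
        · exact (div_le_iff₀ (hpos (φ k))).2 (he1 k).2.le
      obtain ⟨L, hL, ψ, hψ, hLt⟩ := isCompact_Icc.tendsto_subseq hmem
      have hy : Tendsto (fun k => dist ((fun k => (⟨e (ψ k), he2 (ψ k)⟩ : E)) k)
          (⟨0,h0⟩:E) / τ ((φ ∘ ψ) k)) atTop (𝓝 L) := by
        have h1 : ∀ k, dist ((fun k => (⟨e (ψ k), he2 (ψ k)⟩ : E)) k) (⟨0,h0⟩:E)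
            / τ ((φ ∘ ψ) k) = ((fun k => e k / τ (φ k)) ∘ ψ) k := fun k => by
          rw [distE hE h0]; rfl
        simp only [h1]; exact hLt
      have hle := le_RstarN_of E hE h0 hτ (hφ.comp hψ) hy
      have hlt : RstarN E (⟨0,h0⟩ : E) < ENNReal.ofReal L := by
        rw [← hMR]
        exact ENNReal.ofReal_lt_ofReal_iff_of_nonneg (by linarith) |>.2
          (by linarith [hL.1])
      exact absurd hle (not_le.2 hlt)
    -- the gap system
    set s : ℕ → ℝ := fun n => (M+δ)*τ n with hs
    have hspos : ∀ n, 0 < s n := fun n => mul_pos (by linarith) (hpos n)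
    have hτs : ∀ n, τ n ≤ s n := fun n => le_mul_of_one_le_left (hpos n).le hMδ1
    set S1 : ℕ → Set ℝ := fun n => E ∩ Icc 0 (s n) with hS1
    set S2 : ℕ → Set ℝ := fun n => E ∩ Icc (s n + τ n / 2) (τ 0) with hS2
    set a0 : ℕ → ℝ := fun n => sSup (S1 n) with ha0
    set b0 : ℕ → ℝ := fun n => sInf (S2 n) with hb0
    have hS1ne : ∀ n, (S1 n).Nonempty :=
      fun n => ⟨τ n, (hτ.2.1 n).1, ⟨(hpos n).le, hτs n⟩⟩
    have hS1bdd : ∀ n, BddAbove (S1 n) := fun n => ⟨s n, fun x hx => hx.2.2⟩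
    have haup : ∀ n, a0 n ≤ s n := fun n => csSup_le (hS1ne n) (fun x hx => hx.2.2)
    have halow : ∀ n, τ n ≤ a0 n :=
      fun n => le_csSup (hS1bdd n) ⟨(hτ.2.1 n).1, ⟨(hpos n).le, hτs n⟩⟩
    have hapos : ∀ n, 0 < a0 n := fun n => (hpos n).trans_le (halow n)
    have hS2bdd : ∀ n, BddBelow (S2 n) := fun n => ⟨s n + τ n / 2, fun x hx => hx.2.1⟩
    -- eventual goods
    have hG1 : ∀ᶠ n in atTop, Ioo ((M+δ)*τ n) ((M+δ+1)*τ n) ∩ E = ∅ := stepA (M+δ+1)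
    have hG2 : ∀ᶠ n in atTop, (M+δ+1)*τ n ≤ τ 0 := by
      have h1 : Tendsto (fun n => (M+δ+1)*τ n) atTop (𝓝 ((M+δ+1) * 0)) :=
        hτ.2.2.const_mul _
      rw [mul_zero] at h1
      exact h1.eventually_le_const (hpos 0)
    obtain ⟨N, hN⟩ := eventually_atTop.1 (hG1.and (hG2.and hτ.1))
    have hS2ne : ∀ n, N ≤ n → (S2 n).Nonempty := by
      intro n hn
      refine ⟨τ 0, (hτ.2.1 0).1, ⟨?_, le_rfl⟩⟩
      have := (hN n hn).2.1
      have h2 := (hpos n).le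
      simp only [hs]; linarith
    have hblow2 : ∀ n, N ≤ n → s n + τ n / 2 ≤ b0 n :=
      fun n hn => le_csInf (hS2ne n hn) (fun x hx => hx.2.1)
    have hbup : ∀ n, N ≤ n → b0 n ≤ τ 0 := by
      intro n hn
      refine csInf_le (hS2bdd n) ⟨(hτ.2.1 0).1, ⟨?_, le_rfl⟩⟩
      have := (hN n hn).2.1
      have h2 := (hpos n).le
      simp only [hs]; linarith
    -- lower bounds on b0 from stepA
    have hbT : ∀ T : ℝ, ∀ᶠ n in atTop, T * τ n ≤ b0 n := by
      intro T
      filter_upwards [stepA T, eventually_ge_atTop N] with n hT hn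
      refine le_csInf (hS2ne n hn) (fun x hx => ?_)
      by_contra hc
      push_neg at hc
      have hx1 : s n < x := lt_of_lt_of_le (by linarith [hpos n]) hx.2.1
      have hx2 : x ∈ Ioo ((M+δ)*τ n) (T*τ n) ∩ E := ⟨⟨hx1, hc⟩, hx.1⟩
      rw [hT] at hx2
      exact hx2
    -- emptiness of the gap
    have hempty : ∀ n, N ≤ n → Ioo (a0 n) (b0 n) ∩ E = ∅ := by
      intro n hn
      rw [Set.eq_empty_iff_forall_notMem]
      rintro x ⟨⟨hx1, hx2⟩, hxE⟩
      rcases le_or_gt x (s n) with h | h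
      · have hm : x ∈ S1 n := ⟨hxE, ⟨((hapos n).trans hx1).le, h⟩⟩
        exact absurd (le_csSup (hS1bdd n) hm) (not_le.2 hx1)
      rcases lt_or_ge x (s n + τ n / 2) with h2 | h2
      · have hx3 : x ∈ Ioo ((M+δ)*τ n) ((M+δ+1)*τ n) ∩ E := by
          refine ⟨⟨h, ?_⟩, hxE⟩
          have := hpos n
          simp only [hs] at h2 ⊢
          linarith
        rw [(hN n hn).1] at hx3
        exact hx3
      · have hm : x ∈ S2 n := ⟨hxE, ⟨h2, ((hx2.trans_le (hbup n hn))).le⟩⟩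
        exact absurd (csInf_le (hS2bdd n) hm) (not_le.2 hx2)
    -- IsCompExt
    have hcomp : ∀ n, N ≤ n → IsCompExt E (a0 n) (b0 n) := by
      intro n hn
      have hab : a0 n < b0 n := by
        have h1 := haup n
        have h2 := hblow2 n hn
        have := hpos n
        linarith
      refine ⟨hab, ?_, ?_⟩
      · refine interior_maximal ?_ isOpen_Ioo
        rintro x ⟨hx1, hx2⟩
        constructor
        · exact ((hapos n).trans hx1).le
        · intro hxE
          have hm : x ∈ Ioo (a0 n) (b0 n) ∩ E := ⟨⟨hx1, hx2⟩, hxE⟩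
          rw [hempty n hn] at hm
          exact hm
      · intro a' b' ha' hb' hsub
        have hsub2 : Ioo a' b' ∩ E = ∅ := by
          rw [Set.eq_empty_iff_forall_notMem]
          rintro x ⟨hx1, hx2⟩
          exact (interior_subset (hsub hx1)).2 hx2
        constructor
        · by_contra hne
          have hlt : a' < a0 n := lt_of_le_of_ne ha' hne
          obtain ⟨x, hxS, hxgt⟩ := exists_lt_of_lt_csSup (hS1ne n) hlt
          have hxle : x ≤ a0 n := le_csSup (hS1bdd n) hxS
          have hm : x ∈ Ioo a' b' ∩ E := ⟨⟨hxgt, lt_of_le_of_lt hxle (hab.trans_le hb')⟩, hxS.1⟩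
          rw [hsub2] at hm
          exact hm
        · by_contra hne
          have hlt : b0 n < b' := lt_of_le_of_ne hb' (Ne.symm hne)
          obtain ⟨x, hxS, hxlt⟩ := exists_lt_of_csInf_lt (hS2ne n hn) hlt
          have hxge : b0 n ≤ x := csInf_le (hS2bdd n) hxS
          have hm : x ∈ Ioo a' b' ∩ E :=
            ⟨⟨lt_of_le_of_lt ha' (hab.trans_le hxge), hxlt⟩, hxS.1⟩
          rw [hsub2] at hm
          exact hm
    -- EvDecr of a0
    have hadecr : ∀ n, N ≤ n → a0 (n+1) ≤ a0 n := by
      intro n hn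
      refine csSup_le_csSup (hS1bdd n) (hS1ne (n+1)) ?_
      intro x hx
      refine ⟨hx.1, hx.2.1, hx.2.2.trans ?_⟩
      have := (hN n hn).2.2
      simp only [hs]
      nlinarith
    -- a0 tends to 0
    have ha0to0 : Tendsto a0 atTop (𝓝 0) := by
      have hup : Tendsto s atTop (𝓝 0) := by
        have h1 : Tendsto (fun n => (M+δ)*τ n) atTop (𝓝 ((M+δ) * 0)) := hτ.2.2.const_mul _
        rwa [mul_zero] at h1
      exact tendsto_of_tendsto_of_tendsto_of_le_of_le hτ.2.2 hup halow haup
    -- a0/b0 tends to 0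
    have habto0 : Tendsto (fun n => a0 n / b0 n) atTop (𝓝 0) := by
      rw [Metric.tendsto_atTop]
      intro ε hε
      set T : ℝ := (M+δ)/ε + 1 with hT
      have hMδpos : (0:ℝ) < M + δ := by linarith
      have hTpos : 0 < T := by positivity
      obtain ⟨N2, hN2⟩ := eventually_atTop.1 ((hbT T).and (eventually_ge_atTop N))
      refine ⟨N2, fun n hn => ?_⟩
      obtain ⟨h1, h2⟩ := hN2 n hn
      have hTτ : 0 < T * τ n := mul_pos hTpos (hpos n)
      have hb0pos : 0 < b0 n := hTτ.trans_le h1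
      have hq1 : a0 n / b0 n ≤ s n / (T * τ n) :=
        div_le_div₀ (hspos n).le (haup n) hTτ h1
      have hq2 : s n / (T * τ n) = (M+δ)/T := by
        have hτ0 : τ n ≠ 0 := (hpos n).ne'
        have hT0 : T ≠ 0 := hTpos.ne'
        simp only [hs]
        field_simp
      have hq3 : (M+δ)/T < ε := by
        rw [div_lt_iff₀ hTpos, hT]
        have : ε * ((M+δ)/ε) = M + δ := by field_simp
        nlinarith
      have hq4 : 0 ≤ a0 n / b0 n := div_nonneg (hapos n).le hb0pos.le
      rw [Real.dist_eq, sub_zero, abs_of_nonneg hq4]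
      calc a0 n / b0 n ≤ s n / (T * τ n) := hq1
        _ = (M+δ)/T := hq2
        _ < ε := hq3
    -- ratio (b-a)/b tends to 1
    have hbato1 : Tendsto (fun n => (b0 n - a0 n) / b0 n) atTop (𝓝 1) := by
      have hcongr : (fun n => 1 - a0 n / b0 n) =ᶠ[atTop] fun n => (b0 n - a0 n) / b0 n := by
        filter_upwards [eventually_ge_atTop N] with n hn
        have hb0pos : 0 < b0 n := by
          have h1 := hblow2 n hn
          have := hspos n
          have := hpos n
          linarith
        field_simp
      refine Tendsto.congr' hcongr ?_
      have h1 : Tendsto (fun n => 1 - a0 n / b0 n) atTop (𝓝 (1 - 0)) :=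
        tendsto_const_nhds.sub habto0
      simpa using h1
    -- patched system
    set A : ℕ → ℝ := fun n => a0 (max n N) with hA
    set B : ℕ → ℝ := fun n => b0 (max n N) with hB
    have hAa : ∀ᶠ n in atTop, A n = a0 n := by
      filter_upwards [eventually_ge_atTop N] with n hn
      simp only [hA, max_eq_left hn]
    have hBb : ∀ᶠ n in atTop, B n = b0 n := by
      filter_upwards [eventually_ge_atTop N] with n hn
      simp only [hB, max_eq_left hn]
    have hIEdAB : IEd E A B := by
      refine ⟨fun n => hcomp _ (le_max_right n N), ?_, ?_, ?_⟩
      · refine eventually_atTop.2 ⟨N, fun n hn => ?_⟩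
        simp only [hA, max_eq_left hn, max_eq_left (hn.trans (Nat.le_succ n))]
        exact hadecr n hn
      · have hAa' : A =ᶠ[atTop] a0 := hAa
        exact Tendsto.congr' hAa'.symm ha0to0
      · refine Tendsto.congr' ?_ hbato1
        filter_upwards [hAa, hBb] with n h1 h2
        rw [h1, h2]
    have hevAB : ∀ᶠ n in atTop, τ n ≤ A n := by
      filter_upwards [hAa] with n h1
      rw [h1]; exact halow n
    have hmemv : Filter.limsup (fun n => ENNReal.ofReal (A n / τ n)) atTop ∈
        {v | ∃ a b : ℕ → ℝ, IEd E a b ∧ (∀ᶠ n in atTop, τ n ≤ a n) ∧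
          v = Filter.limsup (fun n => ENNReal.ofReal (a n / τ n)) atTop} :=
      ⟨A, B, hIEdAB, hevAB, rfl⟩
    refine le_trans (sInf_le hmemv) ?_
    refine Filter.limsup_le_of_le (by isBoundedDefault) ?_
    filter_upwards [hAa] with n h1
    rw [h1]
    refine ENNReal.ofReal_le_ofReal ?_
    rw [div_le_iff₀ (hpos n)]
    exact haup n
  -- conclude from key
  rw [← hMR]
  refine ENNReal.le_of_forall_pos_le_add fun ε hε _ => ?_
  have h1 := key ε hε
  have h2 : ENNReal.ofReal (M + ε) = ENNReal.ofReal M + ENNReal.ofReal ε :=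
    ENNReal.ofReal_add (by linarith) (le_of_lt hε)
  rw [h2] at h1
  rw [ENNReal.ofReal_coe_nnreal] at h1
  exact h1

lemma RstarN_le_CE (E : Set ℝ) (hE : E ⊆ Ici 0) (h0 : (0:ℝ) ∈ E) :
    RstarN E (⟨0,h0⟩ : E) ≤ CE E := by
  refine sSup_le ?_
  rintro v ⟨r, y, L, ⟨⟨hrpos, hr0⟩, hrdecr, xt, hxt⟩, hyL, rfl⟩
  set u : ℕ → ℝ := fun m => dist (xt m) (⟨0,h0⟩:E) with hu
  have hu0 : Tendsto u atTop (𝓝 0) := by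
    have heq : ∀ m, u m = (u m / r m) * r m :=
      fun m => (div_mul_cancel₀ _ (hrpos m).ne').symm
    have h1 : Tendsto (fun m => (u m / r m) * r m) atTop (𝓝 (1 * 0)) := hxt.mul hr0
    rw [one_mul] at h1
    exact h1.congr (fun m => (heq m).symm)
  have hupos : ∀ᶠ m in atTop, 0 < u m := by
    have h2 : ∀ᶠ m in atTop, 1/2 < u m / r m :=
      hxt.eventually (lt_mem_nhds (by norm_num : (1:ℝ)/2 < 1))
    filter_upwards [h2] with m hm
    have h3 := hrpos m
    by_contra hc
    push_neg at hc
    have h4 : u m / r m ≤ 0 := div_nonpos_iff.2 (Or.inr ⟨hc, h3.le⟩)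
    linarith
  obtain ⟨φ, hφ, hpos', hdecr'⟩ := exists_subseq_pos_decr u hu0 hupos
  set τ' : ℕ → ℝ := fun k => u (φ k) with hτ'
  have hτval : ∀ k, τ' k = ((xt (φ k) : ℝ)) := fun k => by
    simp only [hτ', hu, distE hE h0]
  have hmemE : ∀ k, τ' k ∈ E \ ({0} : Set ℝ) := fun k => by
    rw [hτval k]
    refine ⟨(xt (φ k)).2, ?_⟩
    rw [← hτval k]
    simp [(hpos' k).ne', hτ']
  have hτ'mem : τ' ∈ E0d E :=
    ⟨Filter.Eventually.of_forall (fun k => hdecr' k), hmemE, hu0.comp hφ.tendsto_atTop⟩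
  have hCle : Ctau E τ' ≤ CE E := le_sSup ⟨τ', hτ'mem, rfl⟩
  rcases le_or_gt L 1 with hL | hL
  · calc ENNReal.ofReal L ≤ 1 := ENNReal.ofReal_le_one.2 hL
      _ ≤ Ctau E τ' := one_le_Ctau E hE τ' hτ'mem
      _ ≤ CE E := hCle
  · by_contra hcon
    push_neg at hcon
    have h1 : Ctau E τ' < ENNReal.ofReal L := hCle.trans_lt hcon
    rw [Ctau] at h1
    obtain ⟨w, hwmem, hwlt⟩ := sInf_lt_iff.1 h1
    obtain ⟨a, b, hIEd, hev, rfl⟩ := hwmem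
    obtain ⟨m, hm1, hm2⟩ := exists_between hwlt
    have hmtop : m ≠ ⊤ := (hm2.trans (ENNReal.ofReal_lt_top)).ne
    set c := m.toReal with hc
    have hcL : c < L := by
      rw [hc]
      exact (ENNReal.lt_ofReal_iff_toReal_lt hmtop).1 hm2
    have hc_ev : ∀ᶠ k in atTop, a k / τ' k < c := by
      have h2 := Filter.eventually_lt_of_limsup_lt hm1
      filter_upwards [h2] with k hk
      by_contra hc2
      push_neg at hc2
      have h3 : ENNReal.ofReal c ≤ ENNReal.ofReal (a k / τ' k) :=
        ENNReal.ofReal_le_ofReal hc2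
      rw [hc, ENNReal.ofReal_toReal hmtop] at h3
      exact absurd hk (not_lt.2 h3)
    have hc1 : 1 ≤ c := by
      have hfreq : ∃ᶠ k in atTop, (1:ℝ) ≤ a k / τ' k := by
        refine (hev.mono fun k hk => ?_).frequently
        exact (one_le_div (hpos' k)).2 hk
      obtain ⟨k, hk1, hk2⟩ := (hfreq.and_eventually hc_ev).exists
      linarith
    -- ratios along the subsequence
    have hrφ : Tendsto (fun k => τ' k / r (φ k)) atTop (𝓝 1) := hxt.comp hφ.tendsto_atTop
    have hyφ : Tendsto (fun k => dist (y (φ k)) (⟨0,h0⟩:E) / r (φ k)) atTop (𝓝 L) :=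
      hyL.comp hφ.tendsto_atTop
    have hw : Tendsto (fun k => dist (y (φ k)) (⟨0,h0⟩:E) / τ' k) atTop (𝓝 L) := by
      have heq : ∀ k, dist (y (φ k)) (⟨0,h0⟩:E) / τ' k =
          (dist (y (φ k)) (⟨0,h0⟩:E) / r (φ k)) / (τ' k / r (φ k)) := by
        intro k
        have hr1 : r (φ k) ≠ 0 := (hrpos (φ k)).ne'
        have hr2 : τ' k ≠ 0 := (hpos' k).ne'
        field_simp
      have h2 : Tendsto (fun k => (dist (y (φ k)) (⟨0,h0⟩:E) / r (φ k)) / (τ' k / r (φ k)))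
          atTop (𝓝 (L / 1)) := hyφ.div hrφ one_ne_zero
      rw [div_one] at h2
      exact h2.congr (fun k => (heq k).symm)
    -- gap bounds
    have haτ : ∀ᶠ k in atTop, τ' k ≤ a k := hev
    have hbpos : ∀ᶠ k in atTop, 0 < b k :=
      haτ.mono fun k hk => (hpos' k).trans_le (hk.trans (hIEd.1 k).1.le)
    have habto0 : Tendsto (fun k => a k / b k) atTop (𝓝 0) := by
      have h4 := hIEd.2.2.2
      have hcongr : (fun k => 1 - (b k - a k)/(b k)) =ᶠ[atTop] fun k => a k / b k := by
        filter_upwards [hbpos] with k hk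
        field_simp
        ring
      refine Tendsto.congr' hcongr ?_
      have h5 : Tendsto (fun k => 1 - (b k - a k)/(b k)) atTop (𝓝 (1 - 1)) :=
        tendsto_const_nhds.sub h4
      simpa using h5
    have hE1 : ∀ᶠ k in atTop, a k / b k < 1/(L+1) :=
      habto0.eventually (gt_mem_nhds (by positivity))
    have hE2 : ∀ᶠ k in atTop, (L + c)/2 < dist (y (φ k)) (⟨0,h0⟩:E) / τ' k :=
      hw.eventually (lt_mem_nhds (by linarith))
    have hE3 : ∀ᶠ k in atTop, dist (y (φ k)) (⟨0,h0⟩:E) / τ' k < L + 1/2 :=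
      hw.eventually (gt_mem_nhds (by linarith))
    obtain ⟨k, hk1, hk2, hk3, hk4, hk5⟩ :=
      (hc_ev.and (hE1.and (hE2.and (hE3.and haτ)))).exists
    -- contradiction at index k
    set d := dist (y (φ k)) (⟨0,h0⟩:E) with hd
    have hτk : 0 < τ' k := hpos' k
    have hak : 0 < a k := hτk.trans_le hk5
    have hbk : 0 < b k := hak.trans (hIEd.1 k).1
    have had : a k < d := by
      have h6 : a k < c * τ' k := (div_lt_iff₀ hτk).1 hk1
      have h7 : ((L + c)/2) * τ' k < d := (lt_div_iff₀ hτk).1 hk3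
      nlinarith
    have hdb : d < b k := by
      have h6 : d < (L + 1/2) * τ' k := (div_lt_iff₀ hτk).1 hk4
      have h7 : a k * (L + 1) < b k := by
        have := (div_lt_div_iff₀ hbk (by positivity : (0:ℝ) < L + 1)).1 hk2
        linarith
      nlinarith
    have hdval : d = ((y (φ k) : ℝ)) := by rw [hd, distE hE h0]
    have hyIoo : ((y (φ k) : ℝ)) ∈ Ioo (a k) (b k) := by
      rw [← hdval]; exact ⟨had, hdb⟩
    have := (interior_subset ((hIEd.1 k).2.1 hyIoo)).2
    exact this (y (φ k)).2

end Helpers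

/-- If `0 ∈ E` is an accumulation point of `E ⊆ [0,∞)`, then
`C_E = R*_n(E,0)` as elements of `[0,∞]`. -/
theorem stmt_12 (E : Set ℝ) (hE : E ⊆ Ici 0) (h0 : (0 : ℝ) ∈ E)
    (hacc : AccPt (0 : ℝ) (Filter.principal E)) :
    CE E = RstarN E (⟨0, h0⟩ : E) := by
  refine le_antisymm ?_ (RstarN_le_CE E hE h0)
  refine sSup_le ?_
  rintro v ⟨τ, hτ, rfl⟩
  exact Ctau_le_RstarN E hE h0 τ hτ
end

section
/- Let (X,d,p) be a pointed metric space and let E = S_p(X). Then R*_n(X,p) < ∞ (i.e., the family of pretangent spaces to X at p with normal scaling sequences is uniformly bounded) if and only if E is completely strongly porous at 0. Moreover, if R*_n(X,p) < ∞ and p is an accumulation point of X, then there exists a universal element L̃ of Ĩ_E^d with M(L̃) < ∞, and R*_n(X,p) = M(L̃) for every universal L̃ ∈ Ĩ_E^d. -/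
open Filter Topology Set
open scoped ENNReal

/-! ### Auxiliary development -/

namespace Stmt13

/-- achieved limits, in terms of the distance set only -/
def AchievesE (E : Set ℝ) (L : ℝ) : Prop :=
  ∃ r e e' : ℕ → ℝ, (∀ n, 0 < r n) ∧ Tendsto r atTop (𝓝 (0:ℝ)) ∧ EvDecr r ∧
    (∀ n, e n ∈ E) ∧ (∀ n, e' n ∈ E) ∧
    Tendsto (fun n => e n / r n) atTop (𝓝 (1:ℝ)) ∧
    Tendsto (fun n => e' n / r n) atTop (𝓝 L)

noncomputable def RE (E : Set ℝ) : ℝ≥0∞ :=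
  sSup {v | ∃ L, AchievesE E L ∧ v = ENNReal.ofReal L}

section Basic

variable {E : Set ℝ}

lemma evDecr_antitone_from {τ : ℕ → ℝ} (h : EvDecr τ) :
    ∃ N, ∀ ⦃i j⦄, N ≤ i → i ≤ j → τ j ≤ τ i := by
  obtain ⟨N, hN⟩ := eventually_atTop.1 h
  refine ⟨N, fun i j hNi hij => ?_⟩
  induction j, hij using Nat.le_induction with
  | base => exact le_refl _
  | succ k hk ih => exact le_trans (hN k (le_trans hNi hk)) ih

lemma evDecr_comp {τ : ℕ → ℝ} (h : EvDecr τ) {φ : ℕ → ℕ} (hφ : StrictMono φ) :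
    EvDecr (fun n => τ (φ n)) := by
  obtain ⟨N, hN⟩ := evDecr_antitone_from h
  refine eventually_atTop.2 ⟨N, fun n hn => hN (le_trans hn hφ.le_apply) (hφ (Nat.lt_succ_self n)).le⟩

lemma strictAnti_evDecr {τ : ℕ → ℝ} (h : StrictAnti τ) : EvDecr τ :=
  Eventually.of_forall fun n => (h (Nat.lt_succ_self n)).le

/-- approximate a sequence of closure points by points of `E` -/
lemma approx_seq (τ d : ℕ → ℝ) (hτ : ∀ n, τ n ∈ closure E) (hd : ∀ n, 0 < d n) :
    ∃ e : ℕ → ℝ, (∀ n, e n ∈ E) ∧ ∀ n, |e n - τ n| < d n := by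
  have h : ∀ n, ∃ s, s ∈ E ∧ |s - τ n| < d n := by
    intro n
    obtain ⟨s, hs, hlt⟩ := Metric.mem_closure_iff.1 (hτ n) (d n) (hd n)
    exact ⟨s, hs, by rwa [abs_sub_comm, ← Real.dist_eq]⟩
  choose e he h2 using h
  exact ⟨e, he, h2⟩

lemma ratio_tendsto_of_approx {r τ e : ℕ → ℝ} (hr : ∀ n, 0 < r n)
    (happ : ∀ n, |e n - τ n| < r n / (n + 1)) {L : ℝ}
    (h : Tendsto (fun n => τ n / r n) atTop (𝓝 L)) :
    Tendsto (fun n => e n / r n) atTop (𝓝 L) := by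
  have h0 : Tendsto (fun n : ℕ => (e n - τ n) / r n) atTop (𝓝 0) := by
    apply squeeze_zero_norm (a := fun n : ℕ => 1 / ((n : ℝ) + 1))
      (fun n => ?_) tendsto_one_div_add_atTop_nhds_zero_nat
    have hrn := hr n
    rw [Real.norm_eq_abs, abs_div, abs_of_pos hrn, div_le_div_iff₀ hrn (by positivity)]
    have := (happ n).le
    rw [div_eq_mul_one_div] at this
    calc |e n - τ n| * ((n:ℝ)+1) ≤ (r n * (1/((n:ℝ)+1))) * ((n:ℝ)+1) := by
          apply mul_le_mul_of_nonneg_right this (by positivity)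
      _ = 1 * r n := by field_simp
  have := h.add h0
  rw [add_zero] at this
  refine this.congr fun n => ?_
  rw [← add_div]
  ring_nf

end Basic


section Comp

variable {E : Set ℝ}

lemma interior_diff (E : Set ℝ) : interior (Ici (0:ℝ) \ E) = Ioi 0 \ closure E := by
  rw [diff_eq, diff_eq, interior_inter, interior_Ici, interior_compl]

lemma closure_nonneg (hpos : E ⊆ Ici 0) : ∀ t ∈ closure E, (0:ℝ) ≤ t := by
  intro t ht
  have : closure E ⊆ Ici 0 := closure_minimal hpos isClosed_Ici
  exact this ht

lemma isCompExt_iff (h0 : (0:ℝ) ∈ E) (hpos : E ⊆ Ici 0) {a b : ℝ} :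
    IsCompExt E a b ↔
      a ∈ closure E ∧ b ∈ closure E ∧ a < b ∧ ∀ x ∈ Ioo a b, x ∉ closure E := by
  have hF : ∀ t ∈ closure E, (0:ℝ) ≤ t := closure_nonneg hpos
  unfold IsCompExt
  simp only [interior_diff E]
  constructor
  · rintro ⟨hab, hsub, hmax⟩
    have ha0 : 0 ≤ a := by
      by_contra hneg
      push_neg at hneg
      set c := (a + min 0 b) / 2 with hc
      have ham : a < min 0 b := lt_min hneg hab
      have h1 : a < c := by simp only [hc]; linarith
      have h2 : c < min 0 b := by simp only [hc]; linarith
      have := hsub ⟨h1, lt_of_lt_of_le h2 (min_le_right _ _)⟩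
      have hcpos : (0:ℝ) < c := this.1
      have : c < 0 := lt_of_lt_of_le h2 (min_le_left _ _)
      linarith
    have ha : a ∈ closure E := by
      by_contra hnc
      have hapos : 0 < a := by
        rcases lt_or_eq_of_le ha0 with h | h
        · exact h
        · exact absurd (h ▸ subset_closure h0) hnc
      obtain ⟨ε, hε, hball⟩ := Metric.isOpen_iff.1 (isClosed_closure (s := E)).isOpen_compl a hnc
      set a' := max (a - ε/2) (a/2) with ha'
      have h1 : a' < a := max_lt (by linarith) (by linarith)
      have h2 : 0 < a' := lt_of_lt_of_le (by linarith) (le_max_right _ _)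
      have hsub' : Ioo a' b ⊆ Ioi 0 \ closure E := by
        rintro x ⟨hx1, hx2⟩
        refine ⟨lt_trans h2 hx1, ?_⟩
        rcases le_or_gt x a with h | h
        · have : dist x a < ε := by
            rw [Real.dist_eq, abs_of_nonpos (by linarith)]
            have : a - ε/2 ≤ a' := le_max_left _ _
            linarith
          exact hball this
        · exact (hsub ⟨h, hx2⟩).2
      exact absurd ((hmax a' b h1.le le_rfl hsub').1) (ne_of_lt h1)
    have hb : b ∈ closure E := by
      by_contra hnc
      obtain ⟨ε, hε, hball⟩ := Metric.isOpen_iff.1 (isClosed_closure (s := E)).isOpen_compl b hnc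
      set b' := b + ε/2 with hb'
      have h1 : b < b' := by simp only [hb']; linarith
      have hsub' : Ioo a b' ⊆ Ioi 0 \ closure E := by
        rintro x ⟨hx1, hx2⟩
        rcases lt_or_ge x b with h | h
        · exact hsub ⟨hx1, h⟩
        · refine ⟨lt_of_le_of_lt ha0 hx1, ?_⟩
          have : dist x b < ε := by
            rw [Real.dist_eq, abs_of_nonneg (by linarith)]
            simp only [hb'] at hx2
            linarith
          exact hball this
      exact absurd ((hmax a b' le_rfl h1.le hsub').2).symm (ne_of_lt h1)
    exact ⟨ha, hb, hab, fun x hx => (hsub hx).2⟩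
  · rintro ⟨ha, hb, hab, hgap⟩
    have ha0 : 0 ≤ a := hF a ha
    refine ⟨hab, ?_, ?_⟩
    · rintro x ⟨h1, h2⟩
      exact ⟨lt_of_le_of_lt ha0 h1, hgap x ⟨h1, h2⟩⟩
    · rintro a' b' ha' hb' hsub'
      constructor
      · by_contra hne
        have h1 : a' < a := lt_of_le_of_ne ha' hne
        have : a ∈ Ioi (0:ℝ) \ closure E := hsub' ⟨h1, lt_of_lt_of_le hab hb'⟩
        exact this.2 ha
      · by_contra hne
        have h1 : b < b' := lt_of_le_of_ne hb' (Ne.symm hne)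
        have : b ∈ Ioi (0:ℝ) \ closure E := hsub' ⟨lt_of_le_of_lt ha' hab, h1⟩
        exact this.2 hb

end Comp
section Ach

variable {E : Set ℝ}

lemma achieves_of_pairs (τ σ : ℕ → ℝ) (hτF : ∀ n, τ n ∈ closure E)
    (hτpos : ∀ n, 0 < τ n) (hτdec : EvDecr τ) (hτ0 : Tendsto τ atTop (𝓝 0))
    (hσF : ∀ n, σ n ∈ closure E) {L : ℝ}
    (hσ : Tendsto (fun n => σ n / τ n) atTop (𝓝 L)) : AchievesE E L := by
  obtain ⟨e, heE, heapp⟩ := approx_seq τ (fun n => τ n / (n+1)) hτF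
    (fun n => by have := hτpos n; positivity)
  obtain ⟨e', he'E, he'app⟩ := approx_seq σ (fun n => τ n / (n+1)) hσF
    (fun n => by have := hτpos n; positivity)
  refine ⟨τ, e, e', hτpos, hτ0, hτdec, heE, he'E, ?_, ?_⟩
  · apply ratio_tendsto_of_approx hτpos heapp
    have h : (fun n => τ n / τ n) = fun _ : ℕ => (1:ℝ) :=
      funext fun n => div_self (hτpos n).ne'
    rw [h]
    exact tendsto_const_nhds
  · exact ratio_tendsto_of_approx hτpos he'app hσ

lemma exists_achieves_of_bounds (τ σ : ℕ → ℝ) (hτF : ∀ n, τ n ∈ closure E)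
    (hτpos : ∀ n, 0 < τ n) (hτdec : EvDecr τ) (hτ0 : Tendsto τ atTop (𝓝 0))
    (hσF : ∀ n, σ n ∈ closure E) (c C : ℝ)
    (hb : ∀ n, σ n / τ n ∈ Icc c C) : ∃ L ∈ Icc c C, AchievesE E L := by
  obtain ⟨a, ha, φ, hφ, hconv⟩ := tendsto_subseq_of_bounded (Metric.isBounded_Icc c C) hb
  rw [closure_Icc] at ha
  refine ⟨a, ha, achieves_of_pairs (fun n => τ (φ n)) (fun n => σ (φ n)) (fun n => hτF _)
    (fun n => hτpos _) (evDecr_comp hτdec hφ) (hτ0.comp hφ.tendsto_atTop) (fun n => hσF _) hconv⟩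

lemma achievesE_le_RE {L : ℝ} (h : AchievesE E L) : ENNReal.ofReal L ≤ RE E :=
  le_sSup ⟨L, h, rfl⟩

lemma achieves_le_toReal (hfin : RE E ≠ ⊤) {L : ℝ} (h : AchievesE E L) :
    L ≤ (RE E).toReal := by
  rcases le_or_gt L 0 with h0 | h0
  · exact le_trans h0 ENNReal.toReal_nonneg
  · have h1 := achievesE_le_RE h
    have h2 := ENNReal.toReal_mono hfin h1
    rwa [ENNReal.toReal_ofReal h0.le] at h2

lemma SpSet_zero_mem (X : Type*) [MetricSpace X] (p : X) : (0:ℝ) ∈ SpSet X p :=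
  ⟨p, (dist_self p).symm⟩

lemma SpSet_nonneg (X : Type*) [MetricSpace X] (p : X) : SpSet X p ⊆ Ici 0 := by
  rintro t ⟨x, rfl⟩; exact dist_nonneg

lemma RstarN_eq (X : Type*) [MetricSpace X] (p : X) : RstarN X p = RE (SpSet X p) := by
  unfold RstarN RE
  congr 1
  ext v
  constructor
  · rintro ⟨r, x, L, ⟨⟨hrpos, hr0⟩, hrdec, w, hw⟩, hx, rfl⟩
    exact ⟨L, ⟨r, fun n => dist (w n) p, fun n => dist (x n) p, hrpos, hr0, hrdec,
      fun n => ⟨w n, rfl⟩, fun n => ⟨x n, rfl⟩, hw, hx⟩, rfl⟩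
  · rintro ⟨L, ⟨r, e, e', hrpos, hr0, hrdec, he, he', h1, hL⟩, rfl⟩
    choose w hw using he
    choose w' hw' using he'
    have hwe : (fun n => dist (w n) p / r n) = fun n => e n / r n :=
      funext fun n => by rw [← hw n]
    have hwe' : (fun n => dist (w' n) p / r n) = fun n => e' n / r n :=
      funext fun n => by rw [← hw' n]
    exact ⟨r, w', L, ⟨⟨hrpos, hr0⟩, hrdec, w, by rw [hwe]; exact h1⟩,
      by rw [hwe']; exact hL, rfl⟩

end Ach

section AFBF

variable {E : Set ℝ}

noncomputable def AF (E : Set ℝ) (u : ℝ) : ℝ := sSup (closure E ∩ Icc 0 u)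

noncomputable def BF (E : Set ℝ) (a : ℝ) : ℝ := sInf (closure E ∩ Ioi a)

lemma AF_bdd (E : Set ℝ) (u : ℝ) : BddAbove (closure E ∩ Icc 0 u) :=
  ⟨u, fun _ hx => hx.2.2⟩

lemma AF_mem (h0 : (0:ℝ) ∈ E) {u : ℝ} (hu : 0 ≤ u) : AF E u ∈ closure E ∩ Icc 0 u :=
  IsClosed.csSup_mem (isClosed_closure.inter isClosed_Icc)
    ⟨0, subset_closure h0, le_rfl, hu⟩ (AF_bdd E u)

lemma AF_ge {t u : ℝ} (ht : t ∈ closure E) (h1 : 0 ≤ t) (h2 : t ≤ u) : t ≤ AF E u :=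
  le_csSup (AF_bdd E u) ⟨ht, h1, h2⟩

lemma AF_mono (h0 : (0:ℝ) ∈ E) {u v : ℝ} (huv : u ≤ v) (hu : 0 ≤ u) :
    AF E u ≤ AF E v := by
  have h := AF_mem h0 hu
  exact AF_ge h.1 h.2.1 (le_trans h.2.2 huv)

lemma BF_bddBelow (E : Set ℝ) (a : ℝ) : BddBelow (closure E ∩ Ioi a) :=
  ⟨a, fun _ hx => hx.2.le⟩

lemma BF_mem {a : ℝ} (hne : (closure E ∩ Ioi a).Nonempty) : BF E a ∈ closure E := by
  have h1 : BF E a ∈ closure (closure E ∩ Ioi a) :=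
    csInf_mem_closure hne (BF_bddBelow E a)
  have h2 : closure (closure E ∩ Ioi a) ⊆ closure E := by
    calc closure (closure E ∩ Ioi a) ⊆ closure (closure E) :=
          closure_mono inter_subset_left
      _ = closure E := closure_closure
  exact h2 h1

lemma BF_le {a x : ℝ} (hx : x ∈ closure E) (hax : a < x) : BF E a ≤ x :=
  csInf_le (BF_bddBelow E a) ⟨hx, hax⟩

lemma BF_gap {a x : ℝ} (hx : x ∈ closure E) (h1 : a < x) (h2 : x < BF E a) : False :=
  absurd (BF_le hx h1) (not_le.2 h2)

end AFBF

section Main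

variable {E : Set ℝ} {K : ℝ}

lemma lemQ (h0 : (0:ℝ) ∈ E) (hpos : E ⊆ Ici 0)
    (hach : ∀ L, AchievesE E L → L ≤ K) (hK : 0 ≤ K)
    (τ : ℕ → ℝ) (hτF : ∀ n, τ n ∈ closure E) (hτpos : ∀ n, 0 < τ n)
    (hτdec : EvDecr τ) (hτ0 : Tendsto τ atTop (𝓝 0)) (R : ℝ) :
    ∀ᶠ n in atTop,
      closure E ∩ Ioc (AF E ((K+1) * τ n)) (R * AF E ((K+1) * τ n)) = ∅ := by
  set a : ℕ → ℝ := fun n => AF E ((K+1) * τ n) with ha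
  have hu : ∀ n, (0:ℝ) ≤ (K+1) * τ n := fun n => by nlinarith [hτpos n]
  have haτ : ∀ n, τ n ≤ a n := fun n =>
    AF_ge (hτF n) (hτpos n).le (by nlinarith [hτpos n])
  have hapos : ∀ n, 0 < a n := fun n => lt_of_lt_of_le (hτpos n) (haτ n)
  have haup : ∀ n, a n ≤ (K+1) * τ n := fun n => (AF_mem h0 (hu n)).2.2
  by_contra hcon
  rw [not_eventually] at hcon
  have hfreq : ∃ᶠ n in atTop, (closure E ∩ Ioc (a n) (R * a n)).Nonempty := by
    apply hcon.mono
    intro n hn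
    exact Set.nonempty_iff_ne_empty.2 hn
  obtain ⟨φ, hφ, hf⟩ := extraction_of_frequently_atTop hfreq
  choose f hfF hfIoc using hf
  have hR : 1 < R := by
    have h1 := (hfIoc 0).1
    have h2 := (hfIoc 0).2
    have := hapos (φ 0)
    nlinarith
  have hbounds : ∀ k, f k / τ (φ k) ∈ Icc (K+1) (R * (K+1)) := by
    intro k
    have h1 : a (φ k) < f k := (hfIoc k).1
    have h2 : f k ≤ R * a (φ k) := (hfIoc k).2
    have hflow : (K+1) * τ (φ k) < f k := by
      by_contra hle
      push_neg at hle
      have : f k ≤ a (φ k) :=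
        AF_ge (hfF k) (closure_nonneg hpos _ (hfF k)) hle
      linarith
    have hτk := hτpos (φ k)
    constructor
    · rw [le_div_iff₀ hτk]; linarith
    · rw [div_le_iff₀ hτk]
      calc f k ≤ R * a (φ k) := h2
        _ ≤ R * ((K+1) * τ (φ k)) := by
            apply mul_le_mul_of_nonneg_left (haup (φ k)) (by linarith)
        _ = R * (K+1) * τ (φ k) := by ring
  obtain ⟨L, hL, hach'⟩ := exists_achieves_of_bounds (fun k => τ (φ k)) f
    (fun k => hτF _) (fun k => hτpos _) (evDecr_comp hτdec hφ)
    (hτ0.comp hφ.tendsto_atTop) hfF (K+1) (R * (K+1)) hbounds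
  have := hach L hach'
  have := hL.1
  linarith

/-- The basic construction: around any admissible scale sequence there are
eventually components with arbitrarily large relative gaps. -/
lemma comp_seq (h0 : (0:ℝ) ∈ E) (hpos : E ⊆ Ici 0)
    (hach : ∀ L, AchievesE E L → L ≤ K) (hK : 0 ≤ K)
    (τ : ℕ → ℝ) (hτF : ∀ n, τ n ∈ closure E) (hτpos : ∀ n, 0 < τ n)
    (hτdec : EvDecr τ) (hτ0 : Tendsto τ atTop (𝓝 0)) :
    (∀ n, τ n ≤ AF E ((K+1) * τ n) ∧ AF E ((K+1) * τ n) ≤ (K+1) * τ n ∧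
      AF E ((K+1) * τ n) ∈ closure E) ∧
    EvDecr (fun n => AF E ((K+1) * τ n)) ∧
    Tendsto (fun n => AF E ((K+1) * τ n)) atTop (𝓝 0) ∧
    ∀ R : ℝ, ∀ᶠ n in atTop,
      IsCompExt E (AF E ((K+1) * τ n)) (BF E (AF E ((K+1) * τ n))) ∧
        R * AF E ((K+1) * τ n) ≤ BF E (AF E ((K+1) * τ n)) := by
  set a : ℕ → ℝ := fun n => AF E ((K+1) * τ n) with ha
  have hu : ∀ n, (0:ℝ) ≤ (K+1) * τ n := fun n => by nlinarith [hτpos n]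
  have haτ : ∀ n, τ n ≤ a n := fun n =>
    AF_ge (hτF n) (hτpos n).le (by nlinarith [hτpos n])
  have hapos : ∀ n, 0 < a n := fun n => lt_of_lt_of_le (hτpos n) (haτ n)
  have haup : ∀ n, a n ≤ (K+1) * τ n := fun n => (AF_mem h0 (hu n)).2.2
  have haF : ∀ n, a n ∈ closure E := fun n => (AF_mem h0 (hu n)).1
  have hadec : EvDecr a := by
    apply hτdec.mono
    intro n hn
    exact AF_mono h0 (by nlinarith) (hu (n+1))
  have ha0 : Tendsto a atTop (𝓝 0) := by
    apply squeeze_zero (fun n => (hapos n).le) haup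
    have : Tendsto (fun n => (K+1) * τ n) atTop (𝓝 ((K+1) * 0)) := hτ0.const_mul _
    rwa [mul_zero] at this
  refine ⟨fun n => ⟨haτ n, haup n, haF n⟩, hadec, ha0, fun R => ?_⟩
  have hQ := lemQ h0 hpos hach hK τ hτF hτpos hτdec hτ0 (max R 2)
  have hsmall : ∀ᶠ n in atTop, a n < τ 0 := by
    have := ha0
    exact this.eventually_lt_const (hτpos 0)
  filter_upwards [hQ, hsmall] with n hQn hsn
  have hne : (closure E ∩ Ioi (a n)).Nonempty := ⟨τ 0, hτF 0, hsn⟩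
  have hbF : BF E (a n) ∈ closure E := BF_mem hne
  have hblow : ∀ x ∈ closure E ∩ Ioi (a n), max R 2 * a n < x := by
    rintro x ⟨hxF, hxa⟩
    by_contra hle
    push_neg at hle
    have : x ∈ closure E ∩ Ioc (a n) (max R 2 * a n) := ⟨hxF, hxa, hle⟩
    rw [hQn] at this
    exact this
  have hbge : max R 2 * a n ≤ BF E (a n) := by
    apply le_csInf hne
    intro x hx
    exact (hblow x hx).le
  have hab : a n < BF E (a n) := by
    have h2 : 2 * a n ≤ max R 2 * a n :=
      mul_le_mul_of_nonneg_right (le_max_right _ _) (hapos n).le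
    have := hapos n
    linarith
  have hgap : ∀ x ∈ Ioo (a n) (BF E (a n)), x ∉ closure E := by
    rintro x ⟨h1, h2⟩ hxF
    exact BF_gap hxF h1 h2
  refine ⟨(isCompExt_iff h0 hpos).2 ⟨haF n, hbF, hab, hgap⟩, ?_⟩
  calc R * a n ≤ max R 2 * a n :=
        mul_le_mul_of_nonneg_right (le_max_left _ _) (hapos n).le
    _ ≤ BF E (a n) := hbge

end Main

section DirA

variable {E : Set ℝ} {K : ℝ}

lemma asymp_of_eventually (τ y : ℕ → ℝ) (hτ : ∀ n, 0 < τ n) (hy : ∀ n, 0 < y n)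
    (c₁ c₂ : ℝ) (h1 : 0 < c₁) (h2 : 0 < c₂)
    (h : ∀ᶠ n in atTop, c₁ * τ n < y n ∧ y n < c₂ * τ n) : Asymp τ y := by
  obtain ⟨N, hN⟩ := eventually_atTop.1 h
  rcases Nat.eq_zero_or_pos N with hN0 | hNpos
  · exact ⟨c₁, c₂, h1, h2, fun n => hN n (hN0 ▸ Nat.zero_le n)⟩
  have hne : ((Finset.range N).image fun n => y n / (2 * τ n)).Nonempty := by
    simp [Finset.image_nonempty, Finset.nonempty_range_iff]
    omega
  have hne' : ((Finset.range N).image fun n => (2 * y n) / τ n).Nonempty := by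
    simp [Finset.image_nonempty, Finset.nonempty_range_iff]
    omega
  set m₁ := ((Finset.range N).image fun n => y n / (2 * τ n)).min' hne with hm₁
  set m₂ := ((Finset.range N).image fun n => (2 * y n) / τ n).max' hne' with hm₂
  have hm₁pos : 0 < m₁ := by
    obtain ⟨n, -, hn⟩ := Finset.mem_image.1 (Finset.min'_mem _ hne)
    rw [hm₁, ← hn]
    have := hτ n; have := hy n
    positivity
  refine ⟨min c₁ m₁, max c₂ m₂, lt_min h1 hm₁pos, lt_of_lt_of_le h2 (le_max_left _ _),
    fun n => ?_⟩
  rcases lt_or_ge n N with hn | hn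
  · have hmem : y n / (2 * τ n) ∈ (Finset.range N).image fun n => y n / (2 * τ n) :=
      Finset.mem_image.2 ⟨n, Finset.mem_range.2 hn, rfl⟩
    have hmem' : (2 * y n) / τ n ∈ (Finset.range N).image fun n => (2 * y n) / τ n :=
      Finset.mem_image.2 ⟨n, Finset.mem_range.2 hn, rfl⟩
    have hle1 : m₁ ≤ y n / (2 * τ n) := Finset.min'_le _ _ hmem
    have hle2 : (2 * y n) / τ n ≤ m₂ := Finset.le_max' _ _ hmem'
    have hτn := hτ n; have hyn := hy n
    have ha1 : m₁ * (2 * τ n) ≤ y n := (le_div_iff₀ (by positivity)).1 hle1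
    have ha2 : 2 * y n ≤ m₂ * τ n := (div_le_iff₀ hτn).1 hle2
    have hb1 : min c₁ m₁ ≤ m₁ := min_le_right _ _
    have hb2 : m₂ ≤ max c₂ m₂ := le_max_right _ _
    constructor
    · nlinarith
    · nlinarith
  · obtain ⟨hl, hr⟩ := hN n hn
    have hτn := hτ n
    constructor
    · calc min c₁ m₁ * τ n ≤ c₁ * τ n :=
            mul_le_mul_of_nonneg_right (min_le_left _ _) hτn.le
        _ < y n := hl
    · calc y n < c₂ * τ n := hr
        _ ≤ max c₂ m₂ * τ n := mul_le_mul_of_nonneg_right (le_max_left _ _) hτn.le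

/-- Direction A : finite `R*` implies complete strong porosity. -/
lemma dirA (h0 : (0:ℝ) ∈ E) (hpos : E ⊆ Ici 0)
    (hach : ∀ L, AchievesE E L → L ≤ K) (hK : 0 ≤ K) : CSP E := by
  rintro τ ⟨hτdec, hτmem, hτ0⟩
  have hτE : ∀ n, τ n ∈ E := fun n => (hτmem n).1
  have hτF : ∀ n, τ n ∈ closure E := fun n => subset_closure (hτE n)
  have hτpos : ∀ n, 0 < τ n := fun n =>
    lt_of_le_of_ne (hpos (hτE n)) (Ne.symm (hτmem n).2)
  obtain ⟨hpt, hadec, ha0, hR⟩ := comp_seq h0 hpos hach hK τ hτF hτpos hτdec hτ0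
  set a : ℕ → ℝ := fun n => AF E ((K+1) * τ n) with ha
  set b : ℕ → ℝ := fun n => BF E (AF E ((K+1) * τ n)) with hb
  -- find a uniform starting point
  obtain ⟨N, hN⟩ := eventually_atTop.1 (hR 2)
  -- modified sequences constant below N
  set a' : ℕ → ℝ := fun n => if n < N then a N else a n with ha'
  set b' : ℕ → ℝ := fun n => if n < N then b N else b n with hb'
  have ha'eq : ∀ n ≥ N, a' n = a n := fun n hn => if_neg (not_lt.2 hn)
  have hb'eq : ∀ n ≥ N, b' n = b n := fun n hn => if_neg (not_lt.2 hn)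
  have hapos : ∀ n, 0 < a n := fun n => lt_of_lt_of_le (hτpos n) (hpt n).1
  have hcomp' : ∀ n, IsCompExt E (a' n) (b' n) ∧ 2 * a' n ≤ b' n := by
    intro n
    by_cases hn : n < N
    · simp only [ha', hb', if_pos hn]
      exact hN N le_rfl
    · simp only [ha', hb', if_neg hn]
      exact hN n (not_lt.1 hn)
  have ha'dec : EvDecr a' := by
    obtain ⟨M, hM⟩ := eventually_atTop.1 hadec
    rw [EvDecr, eventually_atTop]
    refine ⟨max N M, fun n hn => ?_⟩
    rw [ha'eq n (le_trans (le_max_left _ _) hn),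
        ha'eq (n+1) (le_trans (le_trans (le_max_left _ _) hn) (Nat.le_succ n))]
    exact hM n (le_trans (le_max_right _ _) hn)
  have ha'0 : Tendsto a' atTop (𝓝 0) := by
    apply ha0.congr'
    rw [EventuallyEq, eventually_atTop]
    exact ⟨N, fun n hn => (ha'eq n hn).symm⟩
  have hb'pos : ∀ n, 0 < b' n := by
    intro n
    obtain ⟨hc, h2⟩ := hcomp' n
    have : 0 < a' n := by
      by_cases hn : n < N
      · simp only [ha', if_pos hn]; exact hapos N
      · simp only [ha', if_neg hn]; exact hapos n
    linarith
  have ha'pos : ∀ n, 0 < a' n := by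
    intro n
    by_cases hn : n < N
    · simp only [ha', if_pos hn]; exact hapos N
    · simp only [ha', if_neg hn]; exact hapos n
  -- ratio tendsto
  have hratio : Tendsto (fun n => (b' n - a' n) / b' n) atTop (𝓝 1) := by
    have hz : Tendsto (fun n => a' n / b' n) atTop (𝓝 0) := by
      rw [Metric.tendsto_atTop]
      intro ε hε
      obtain ⟨M, hM⟩ := eventually_atTop.1 (hR (2 / ε))
      refine ⟨max N M, fun n hn => ?_⟩
      have hn1 := le_trans (le_max_left _ _) hn
      have hn2 := le_trans (le_max_right _ _) hn
      rw [ha'eq n hn1, hb'eq n hn1]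
      have h2 := (hM n hn2).2
      have hbn : 0 < b n := by rw [← hb'eq n hn1]; exact hb'pos n
      have han := hapos n
      rw [Real.dist_eq, sub_zero, abs_of_pos (by positivity)]
      rw [div_lt_iff₀ hbn]
      have h3 : (2/ε) * a n ≤ b n := h2
      rw [div_mul_eq_mul_div] at h3
      have h4 : 2 * a n ≤ b n * ε := (div_le_iff₀ hε).1 h3
      nlinarith
    have : (fun n => (b' n - a' n) / b' n) = fun n => 1 - a' n / b' n := by
      funext n
      rw [sub_div, div_self (hb'pos n).ne']
    rw [this]
    have := hz.const_sub 1
    simpa using this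
  refine ⟨a', b', ⟨fun n => (hcomp' n).1, ha'dec, ha'0, hratio⟩, ?_⟩
  apply asymp_of_eventually τ a' hτpos ha'pos (1/2) (K+2) (by norm_num) (by linarith)
  rw [eventually_atTop]
  refine ⟨N, fun n hn => ?_⟩
  rw [ha'eq n hn]
  have h1 := (hpt n).1
  have h2 := (hpt n).2.1
  have := hτpos n
  constructor
  · linarith
  · nlinarith

end DirA

section Univ

variable {E : Set ℝ} {K : ℝ}

lemma comp_left_pos (h0 : (0:ℝ) ∈ E) (hpos : E ⊆ Ici 0)
    (hacc : ∀ δ > 0, ∃ t ∈ E, 0 < t ∧ t < δ) {a b : ℝ} (h : IsCompExt E a b) :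
    0 < a := by
  obtain ⟨haF, hbF, hab, hgap⟩ := (isCompExt_iff h0 hpos).1 h
  have ha0 : 0 ≤ a := closure_nonneg hpos a haF
  rcases lt_or_eq_of_le ha0 with hlt | heq
  · exact hlt
  · exfalso
    obtain ⟨t, htE, ht0, htb⟩ := hacc b (by linarith)
    exact hgap t ⟨by linarith, htb⟩ (subset_closure htE)

lemma comp_unique (h0 : (0:ℝ) ∈ E) (hpos : E ⊆ Ici 0) {a b b' : ℝ}
    (h : IsCompExt E a b) (h' : IsCompExt E a b') : b = b' := by
  obtain ⟨-, hbF, hab, hgap⟩ := (isCompExt_iff h0 hpos).1 h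
  obtain ⟨-, hbF', hab', hgap'⟩ := (isCompExt_iff h0 hpos).1 h'
  by_contra hne
  rcases lt_or_gt_of_ne hne with hlt | hlt
  · exact hgap' b ⟨hab, hlt⟩ hbF
  · exact hgap b' ⟨hab', hlt⟩ hbF'

lemma comp_disjoint (h0 : (0:ℝ) ∈ E) (hpos : E ⊆ Ici 0) {a b a' b' : ℝ}
    (h : IsCompExt E a b) (h' : IsCompExt E a' b') (hlt : a' < a) : b' ≤ a := by
  obtain ⟨haF, -, hab, -⟩ := (isCompExt_iff h0 hpos).1 h
  obtain ⟨-, -, hab', hgap'⟩ := (isCompExt_iff h0 hpos).1 h'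
  by_contra hgt
  push_neg at hgt
  exact hgap' a ⟨hlt, hgt⟩ haF

lemma exists_E_seq (hpos : E ⊆ Ici 0) (hacc : ∀ δ > 0, ∃ t ∈ E, 0 < t ∧ t < δ) :
    ∃ t : ℕ → ℝ, (∀ k, t k ∈ E) ∧ (∀ k, 0 < t k) ∧ StrictAnti t ∧
      Tendsto t atTop (𝓝 0) := by
  have hstep : ∀ x : ℝ, 0 < x → ∀ k : ℕ, ∃ y, y ∈ E ∧ 0 < y ∧ y < x ∧ y < 1/(k+1) := by
    intro x hx k
    obtain ⟨y, hyE, hy0, hyx⟩ := hacc (min x (1/(k+1))) (lt_min hx (by positivity))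
    exact ⟨y, hyE, hy0, lt_of_lt_of_le hyx (min_le_left _ _),
      lt_of_lt_of_le hyx (min_le_right _ _)⟩
  obtain ⟨t0, ht0E, ht00, -, -⟩ := hstep 1 one_pos 0
  choose Fof hFE hF0 hFlt hFsm using hstep
  obtain ⟨t, htsucc, ht0val⟩ : ∃ t : ℕ → {y : ℝ // y ∈ E ∧ 0 < y},
      (∀ k, (t (k+1)).val = Fof (t k).val (t k).prop.2 (k+1)) ∧ (t 0).val = t0 := by
    refine ⟨fun k => Nat.rec (motive := fun _ => {y : ℝ // y ∈ E ∧ 0 < y})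
      ⟨t0, ht0E, ht00⟩
      (fun k prev => ⟨Fof prev.val prev.prop.2 (k+1), hFE _ _ _, hF0 _ _ _⟩) k,
      fun k => rfl, rfl⟩
  refine ⟨fun k => (t k).val, fun k => (t k).prop.1, fun k => (t k).prop.2, ?_, ?_⟩
  · apply strictAnti_nat_of_succ_lt
    intro n
    rw [htsucc n]
    exact hFlt _ _ _
  · have hub : ∀ᶠ (k:ℕ) in atTop, (t k).val ≤ 1/(k:ℝ) := by
      rw [eventually_atTop]
      refine ⟨1, fun k hk => ?_⟩
      obtain ⟨j, rfl⟩ := Nat.exists_eq_add_of_le hk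
      have he : (t (1+j)).val = Fof (t j).val (t j).prop.2 (j+1) := by
        rw [show 1 + j = j + 1 from by omega, htsucc j]
      rw [he]
      have h1 := hFsm (t j).val (t j).prop.2 (j+1)
      have h2 : (1:ℝ)/((j:ℝ)+1+1) ≤ 1/((j:ℝ)+1) := by
        apply one_div_le_one_div_of_le (by positivity) (by linarith)
      have h3 : ((1+j:ℕ):ℝ) = (j:ℝ)+1 := by push_cast; ring
      rw [h3]
      push_cast at h1
      linarith
    exact squeeze_zero' (Eventually.of_forall (fun k => ((t k).prop.2).le)) hub
      tendsto_one_div_atTop_nhds_zero_nat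
  
lemma band (h0 : (0:ℝ) ∈ E) (hpos : E ⊆ Ici 0)
    (hach : ∀ L, AchievesE E L → L ≤ K) (hK : 0 ≤ K) (C : ℝ) :
    ∃ δ > 0, ∀ a b : ℝ, IsCompExt E a b → a < δ → (K+1) * a ≤ b → C * a ≤ b := by
  by_contra hcon
  push_neg at hcon
  have hstep : ∀ x : ℝ, 0 < x → ∀ k : ℕ,
      ∃ q : ℝ × ℝ, IsCompExt E q.1 q.2 ∧ 0 < q.1 ∧ q.1 < x ∧ q.1 < 1/(k+1) ∧
        (K+1) * q.1 ≤ q.2 ∧ q.2 < C * q.1 := by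
    intro x hx k
    obtain ⟨a, b, hc, ha, hb, hBC⟩ := hcon (min x (1/(k+1))) (lt_min hx (by positivity))
    have hab : a < b := hc.1
    have ha0 : 0 ≤ a := closure_nonneg hpos a ((isCompExt_iff h0 hpos).1 hc).1
    have hapos : 0 < a := by
      rcases lt_or_eq_of_le ha0 with h | h
      · exact h
      · exfalso
        rw [← h] at hBC hab
        simp only [mul_zero] at hBC
        linarith
    exact ⟨(a, b), hc, hapos, lt_of_lt_of_le ha (min_le_left _ _),
      lt_of_lt_of_le ha (min_le_right _ _), hb, hBC⟩
  obtain ⟨q0, hq0c, hq00, -, -, hq0lo, hq0hi⟩ := hstep 1 one_pos 0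
  choose Fof hFc hF0 hFlt hFsm hFlo hFhi using hstep
  obtain ⟨q, hqsucc, hq0val⟩ : ∃ q : ℕ → {p : ℝ × ℝ // IsCompExt E p.1 p.2 ∧ 0 < p.1 ∧
      (K+1) * p.1 ≤ p.2 ∧ p.2 < C * p.1},
      (∀ k, (q (k+1)).val = Fof (q k).val.1 (q k).prop.2.1 (k+1)) ∧ (q 0).val = q0 := by
    refine ⟨fun k => Nat.rec (motive := fun _ => {p : ℝ × ℝ // IsCompExt E p.1 p.2 ∧ 0 < p.1 ∧
      (K+1) * p.1 ≤ p.2 ∧ p.2 < C * p.1})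
      ⟨q0, hq0c, hq00, hq0lo, hq0hi⟩
      (fun k prev => ⟨Fof prev.val.1 prev.prop.2.1 (k+1),
        hFc _ _ _, hF0 _ _ _, hFlo _ _ _, hFhi _ _ _⟩) k,
      fun k => rfl, rfl⟩
  set a : ℕ → ℝ := fun k => (q k).val.1 with ha
  set b : ℕ → ℝ := fun k => (q k).val.2 with hb
  have hapos : ∀ k, 0 < a k := fun k => (q k).prop.2.1
  have hcomp : ∀ k, IsCompExt E (a k) (b k) := fun k => (q k).prop.1
  have haF : ∀ k, a k ∈ closure E := fun k => ((isCompExt_iff h0 hpos).1 (hcomp k)).1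
  have hbF : ∀ k, b k ∈ closure E := fun k => ((isCompExt_iff h0 hpos).1 (hcomp k)).2.1
  have hlo : ∀ k, (K+1) * a k ≤ b k := fun k => (q k).prop.2.2.1
  have hhi : ∀ k, b k < C * a k := fun k => (q k).prop.2.2.2
  have hanti : StrictAnti a := by
    apply strictAnti_nat_of_succ_lt
    intro n
    have h1 : a (n+1) = (Fof (q n).val.1 (q n).prop.2.1 (n+1)).1 := by
      show ((q (n+1)).val).1 = _
      rw [hqsucc n]
    rw [h1]
    exact hFlt _ _ _
  have ha0' : Tendsto a atTop (𝓝 0) := by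
    have hub : ∀ᶠ (k:ℕ) in atTop, a k ≤ 1/(k:ℝ) := by
      rw [eventually_atTop]
      refine ⟨1, fun k hk => ?_⟩
      obtain ⟨j, rfl⟩ := Nat.exists_eq_add_of_le hk
      have h1 : a (1 + j) = (Fof (q j).val.1 (q j).prop.2.1 (j+1)).1 := by
        show ((q (1+j)).val).1 = _
        rw [show 1 + j = j + 1 from by omega, hqsucc j]
      rw [h1]
      have h2 := hFsm (q j).val.1 (q j).prop.2.1 (j+1)
      have h3 : (1:ℝ)/((j:ℝ)+1+1) ≤ 1/((j:ℝ)+1) := by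
        apply one_div_le_one_div_of_le (by positivity) (by linarith)
      have h4 : ((1+j:ℕ):ℝ) = (j:ℝ)+1 := by push_cast; ring
      rw [h4]
      push_cast at h2
      linarith
    exact squeeze_zero' (Eventually.of_forall (fun k => (hapos k).le)) hub
      tendsto_one_div_atTop_nhds_zero_nat
  have hbounds : ∀ k, b k / a k ∈ Icc (K+1) C := by
    intro k
    have h1 := hapos k
    constructor
    · rw [le_div_iff₀ h1]; linarith [hlo k]
    · rw [div_le_iff₀ h1]; linarith [hhi k]
  obtain ⟨L, hLmem, hach'⟩ := exists_achieves_of_bounds a b haF hapos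
    (strictAnti_evDecr hanti) ha0' hbF (K+1) C hbounds
  have := hach L hach'
  have := hLmem.1
  linarith

lemma thin_comps (h0 : (0:ℝ) ∈ E) (hpos : E ⊆ Ici 0)
    (hach : ∀ L, AchievesE E L → L ≤ K) (hK : 0 ≤ K)
    (hacc : ∀ δ > 0, ∃ t ∈ E, 0 < t ∧ t < δ) :
    ∀ x > 0, ∃ a b : ℝ, IsCompExt E a b ∧ 0 < a ∧ a < x ∧ (K+1) * a ≤ b := by
  obtain ⟨τ, hτE, hτpos, hτanti, hτ0⟩ := exists_E_seq hpos hacc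
  obtain ⟨hpt, hadec, ha0, hR⟩ := comp_seq h0 hpos hach hK τ
    (fun n => subset_closure (hτE n)) hτpos (strictAnti_evDecr hτanti) hτ0
  intro x hx
  have h1 := hR (K+1)
  have h2 : ∀ᶠ n in atTop, AF E ((K+1) * τ n) < x := ha0.eventually_lt_const hx
  obtain ⟨n, hn1, hn2⟩ := (h1.and h2).exists
  exact ⟨_, _, hn1.1, lt_of_lt_of_le (hτpos n) (hpt n).1, hn2, hn1.2⟩

end Univ

section Enum

variable {E : Set ℝ} {K : ℝ}

def αSet (E : Set ℝ) (K : ℝ) : Set ℝ :=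
  {a | ∃ b, IsCompExt E a b ∧ a < 1 ∧ (K+1) * a ≤ b}

lemma αSet_pos (h0 : (0:ℝ) ∈ E) (hpos : E ⊆ Ici 0)
    (hacc : ∀ δ > 0, ∃ t ∈ E, 0 < t ∧ t < δ) {a : ℝ} (ha : a ∈ αSet E K) : 0 < a := by
  obtain ⟨b, hc, -, -⟩ := ha
  exact comp_left_pos h0 hpos hacc hc

lemma αSet_sep (h0 : (0:ℝ) ∈ E) (hpos : E ⊆ Ici 0) (hK1 : 1 ≤ K)
    {a a' : ℝ} (ha : a ∈ αSet E K) (ha' : a' ∈ αSet E K) (h : a < a') : 2 * a ≤ a' := by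
  obtain ⟨b, hc, -, hb⟩ := ha
  obtain ⟨b', hc', -, -⟩ := ha'
  have hdis : b ≤ a' := comp_disjoint h0 hpos hc' hc h
  have ha0 : 0 ≤ a := closure_nonneg hpos a ((isCompExt_iff h0 hpos).1 hc).1
  nlinarith

lemma αSet_next (h0 : (0:ℝ) ∈ E) (hpos : E ⊆ Ici 0) (hK1 : 1 ≤ K)
    (hacc : ∀ δ > 0, ∃ t ∈ E, 0 < t ∧ t < δ) {x : ℝ}
    (hne : (αSet E K ∩ Iio x).Nonempty) :
    ∃ a ∈ αSet E K, a < x ∧ ∀ y ∈ αSet E K, y < x → y ≤ a := by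
  set S := αSet E K ∩ Iio x with hS
  have hbdd : BddAbove S := ⟨x, fun y hy => hy.2.le⟩
  obtain ⟨u, huS⟩ := hne
  have hupos : 0 < u := αSet_pos h0 hpos hacc huS.1
  have hu_le : u ≤ sSup S := le_csSup hbdd huS
  have hsspos : 0 < sSup S := lt_of_lt_of_le hupos hu_le
  obtain ⟨a, haS, hagt⟩ := exists_lt_of_lt_csSup ⟨u, huS⟩
    (show sSup S / 2 < sSup S by linarith)
  refine ⟨a, haS.1, haS.2, fun y hy hyx => ?_⟩
  by_contra hgt
  push_neg at hgt
  have h2 : 2 * a ≤ y := αSet_sep h0 hpos hK1 haS.1 hy hgt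
  have h3 : y ≤ sSup S := le_csSup hbdd ⟨hy, hyx⟩
  have hapos : 0 < a := αSet_pos h0 hpos hacc haS.1
  linarith

lemma exists_enum (h0 : (0:ℝ) ∈ E) (hpos : E ⊆ Ici 0)
    (hach : ∀ L, AchievesE E L → L ≤ K) (hK : 0 ≤ K) (hK1 : 1 ≤ K)
    (hacc : ∀ δ > 0, ∃ t ∈ E, 0 < t ∧ t < δ) :
    ∃ l : ℕ → ℝ, (∀ n, l n ∈ αSet E K) ∧ StrictAnti l ∧ Tendsto l atTop (𝓝 0) ∧
      (∀ n, ∀ y ∈ αSet E K, y < l n → y ≤ l (n+1)) ∧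
      (∀ y ∈ αSet E K, ∃ n, l n = y) := by
  have hne : ∀ x : ℝ, 0 < x → (αSet E K ∩ Iio x).Nonempty := by
    intro x hx
    obtain ⟨a, b, hc, hapos, hax, hab⟩ :=
      thin_comps h0 hpos hach hK hacc (min x 1) (lt_min hx one_pos)
    exact ⟨a, ⟨b, hc, lt_of_lt_of_le hax (min_le_right _ _), hab⟩,
      lt_of_lt_of_le hax (min_le_left _ _)⟩
  obtain ⟨a0, ha0S, -, ha0max⟩ := αSet_next h0 hpos hK1 hacc (hne 1 one_pos)
  have ha0top : ∀ y ∈ αSet E K, y ≤ a0 := by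
    intro y hy
    obtain ⟨b, hc, hy1, hb⟩ := hy
    exact ha0max y ⟨b, hc, hy1, hb⟩ hy1
  choose nextF hnextS hnextlt hnextmax using
    fun (x : ℝ) (hx : 0 < x) => αSet_next h0 hpos hK1 hacc (hne x hx)
  obtain ⟨l, hlsucc, hl0⟩ : ∃ l : ℕ → {a : ℝ // a ∈ αSet E K},
      (∀ n, (l (n+1)).val = nextF (l n).val (αSet_pos h0 hpos hacc (l n).prop)) ∧
        (l 0).val = a0 := by
    refine ⟨fun n => Nat.rec (motive := fun _ => {a : ℝ // a ∈ αSet E K}) ⟨a0, ha0S⟩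
      (fun _ prev => ⟨nextF prev.val (αSet_pos h0 hpos hacc prev.prop),
        hnextS _ _⟩) n, fun n => rfl, rfl⟩
  have hmem : ∀ n, (l n).val ∈ αSet E K := fun n => (l n).prop
  have hanti : StrictAnti (fun n => (l n).val) := by
    apply strictAnti_nat_of_succ_lt
    intro n
    rw [hlsucc n]
    exact hnextlt _ _
  have hgapmax : ∀ n, ∀ y ∈ αSet E K, y < (l n).val → y ≤ (l (n+1)).val := by
    intro n y hy hlt
    rw [hlsucc n]
    exact hnextmax _ _ y hy hlt
  have hpos' : ∀ n, 0 < (l n).val := fun n => αSet_pos h0 hpos hacc (hmem n)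
  have hgeo : ∀ n, (l n).val ≤ a0 * (1/2)^n := by
    intro n
    induction n with
    | zero => simp [hl0]
    | succ k ih =>
      have hsep : 2 * (l (k+1)).val ≤ (l k).val :=
        αSet_sep h0 hpos hK1 (hmem (k+1)) (hmem k) (hanti (Nat.lt_succ_self k))
      have h2 : (0:ℝ) < (1/2:ℝ)^k := by positivity
      calc (l (k+1)).val ≤ (l k).val / 2 := by linarith
        _ ≤ (a0 * (1/2)^k) / 2 := by linarith
        _ = a0 * (1/2)^(k+1) := by ring
  have hl0' : Tendsto (fun n => (l n).val) atTop (𝓝 0) := by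
    apply squeeze_zero (fun n => (hpos' n).le) hgeo
    have h1 : Tendsto (fun k:ℕ => (1/2:ℝ)^k) atTop (𝓝 0) :=
      tendsto_pow_atTop_nhds_zero_of_lt_one (by norm_num) (by norm_num)
    have h2 := h1.const_mul a0
    simpa using h2
  refine ⟨fun n => (l n).val, hmem, hanti, hl0', hgapmax, ?_⟩
  intro y hy
  by_contra hnone
  push_neg at hnone
  have hyall : ∀ n, y ≤ (l n).val := by
    intro n
    induction n with
    | zero => rw [hl0]; exact ha0top y hy
    | succ k ih =>
      have : y < (l k).val := lt_of_le_of_ne ih (fun h => hnone k h.symm)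
      exact hgapmax k y hy this
  have hy0 : 0 < y := αSet_pos h0 hpos hacc hy
  have : y ≤ 0 := le_of_tendsto_of_tendsto' tendsto_const_nhds hl0' hyall
  linarith

end Enum

section ExUniv

variable {E : Set ℝ} {K : ℝ}

lemma exists_univ (h0 : (0:ℝ) ∈ E) (hpos : E ⊆ Ici 0)
    (hach : ∀ L, AchievesE E L → L ≤ K) (hK : 0 ≤ K) (hK1 : 1 ≤ K)
    (hacc : ∀ δ > 0, ∃ t ∈ E, 0 < t ∧ t < δ) :
    ∃ l m : ℕ → ℝ, UnivElem E l m ∧ MQ l m < ⊤ := by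
  classical
  obtain ⟨l, hmem, hanti, hl0, hgapmax, hexh⟩ := exists_enum h0 hpos hach hK hK1 hacc
  choose bOf hbc hb1 hble using fun (a : ℝ) (ha : a ∈ αSet E K) => ha
  set m : ℕ → ℝ := fun n => bOf (l n) (hmem n) with hm
  have hcomp : ∀ n, IsCompExt E (l n) (m n) := fun n => hbc _ _
  have hless1 : ∀ n, l n < 1 := fun n => hb1 _ (hmem n)
  have hKle : ∀ n, (K+1) * l n ≤ m n := fun n => hble _ _
  have hlpos : ∀ n, 0 < l n := fun n => αSet_pos h0 hpos hacc (hmem n)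
  have hlm : ∀ n, l n < m n := fun n => (hcomp n).1
  have hmpos : ∀ n, 0 < m n := fun n => lt_trans (hlpos n) (hlm n)
  have hlF : ∀ n, l n ∈ closure E := fun n => ((isCompExt_iff h0 hpos).1 (hcomp n)).1
  have hmF : ∀ n, m n ∈ closure E := fun n => ((isCompExt_iff h0 hpos).1 (hcomp n)).2.1
  have hr0 : Tendsto (fun n => l n / m n) atTop (𝓝 0) := by
    rw [Metric.tendsto_atTop]
    intro ε hε
    obtain ⟨δ, hδ, hband⟩ := band h0 hpos hach hK (2/ε)
    obtain ⟨N, hN⟩ := (Metric.tendsto_atTop.1 hl0) δ hδ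
    refine ⟨N, fun n hn => ?_⟩
    have h1 : l n < δ := by
      have := hN n hn
      rwa [Real.dist_eq, sub_zero, abs_of_pos (hlpos n)] at this
    have h2 : (2/ε) * l n ≤ m n := hband (l n) (m n) (hcomp n) h1 (hKle n)
    rw [Real.dist_eq, sub_zero, abs_of_pos (div_pos (hlpos n) (hmpos n)),
      div_lt_iff₀ (hmpos n)]
    have h3 : 2 * l n ≤ m n * ε := by
      rw [div_mul_eq_mul_div] at h2
      exact (div_le_iff₀ hε).1 h2
    linarith [hlpos n]
  have hIEd : IEd E l m := by
    refine ⟨hcomp, strictAnti_evDecr hanti, hl0, ?_⟩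
    have he : (fun n => (m n - l n) / m n) = fun n => 1 - l n / m n := by
      funext n; rw [sub_div, div_self (hmpos n).ne']
    rw [he]
    have h8 := hr0.const_sub 1
    simpa using h8
  have hmanti : StrictAnti m := by
    apply strictAnti_nat_of_succ_lt
    intro n
    have h1 : m (n+1) ≤ l n :=
      comp_disjoint h0 hpos (hcomp n) (hcomp (n+1)) (hanti (Nat.lt_succ_self n))
    exact lt_of_le_of_lt h1 (hlm n)
  have hm0 : Tendsto m atTop (𝓝 0) := by
    have h1 : Tendsto (fun n => m (n+1)) atTop (𝓝 0) :=
      squeeze_zero (fun n => (hmpos (n+1)).le)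
        (fun n => comp_disjoint h0 hpos (hcomp n) (hcomp (n+1))
          (hanti (Nat.lt_succ_self n))) hl0
    exact (tendsto_add_atTop_iff_nat 1).1 h1
  have huniv : ∀ A B : ℕ → ℝ, IEd E A B → Preceq A l := by
    rintro A B ⟨hAc, hAdec, hA0, hABr⟩
    have hApos : ∀ n, 0 < A n := fun n => comp_left_pos h0 hpos hacc (hAc n)
    have hABlt : ∀ n, A n < B n := fun n => (hAc n).1
    have hBpos : ∀ n, 0 < B n := fun n => lt_trans (hApos n) (hABlt n)
    have hABz : Tendsto (fun n => A n / B n) atTop (𝓝 0) := by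
      have he : (fun n => A n / B n) = fun n => 1 - (B n - A n) / B n := by
        funext n; rw [sub_div, div_self (hBpos n).ne']; ring
      rw [he]
      have h8 := hABr.const_sub 1
      simpa using h8
    have hev : ∀ᶠ n in atTop, A n ∈ αSet E K := by
      have h1 : ∀ᶠ n in atTop, A n < 1 := hA0.eventually_lt_const one_pos
      have h2 : ∀ᶠ n in atTop, A n / B n < 1/(K+1) :=
        hABz.eventually_lt_const (by positivity)
      filter_upwards [h1, h2] with n hn1 hn2
      refine ⟨B n, hAc n, hn1, ?_⟩
      rw [div_lt_iff₀ (hBpos n), div_mul_eq_mul_div, lt_div_iff₀ (by linarith : (0:ℝ) < K + 1)] at hn2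
      linarith
    obtain ⟨N₁, hN₁⟩ := eventually_atTop.1 hev
    refine ⟨N₁, fun n => if h : ∃ j, l j = A n then h.choose else 0, fun n hn => ?_⟩
    have hAn := hN₁ n hn
    have hex : ∃ j, l j = A n := hexh (A n) hAn
    show A n = l (if h : ∃ j, l j = A n then h.choose else 0)
    rw [dif_pos hex]
    exact hex.choose_spec.symm
  set W := (K+1)*(K+2) with hW
  have hdensity : ∀ n, ∀ t, t ∈ closure E → m (n+1) ≤ t → t < l n →
      ∃ f ∈ closure E, t < f ∧ f ≤ (K+1) * t := by
    intro n t htF ht1 ht2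
    by_contra hemp
    push_neg at hemp
    have hne2 : (closure E ∩ Ioi t).Nonempty := ⟨l n, hlF n, ht2⟩
    have hBF := BF_mem hne2
    have hBge : (K+1) * t ≤ BF E t := by
      apply le_csInf hne2
      rintro x ⟨hxF, hxt⟩
      exact (hemp x hxF hxt).le
    have htpos : 0 < t := lt_of_lt_of_le (hmpos (n+1)) ht1
    have htB : t < BF E t := by nlinarith
    have hcompt : IsCompExt E t (BF E t) := by
      refine (isCompExt_iff h0 hpos).2 ⟨htF, hBF, htB, ?_⟩
      rintro x ⟨h1, h2⟩ hxF
      exact BF_gap hxF h1 h2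
    have htαS : t ∈ αSet E K := ⟨BF E t, hcompt, lt_trans ht2 (hless1 n), hBge⟩
    obtain ⟨j, hj⟩ := hexh t htαS
    have hjn : n < j := by
      have hlt : l j < l n := by rw [hj]; exact ht2
      exact (hanti.lt_iff_gt).1 hlt
    have hle2 : l j ≤ l (n+1) := hanti.antitone hjn
    rw [hj] at hle2
    have := hlm (n+1)
    linarith
  have hchain : ∀ n, W * m (n+1) < l n →
      ∃ f ∈ closure E, (K+2) * m (n+1) < f ∧ f ≤ W * m (n+1) := by
    intro n hWn
    have hupos : 0 < m (n+1) := hmpos (n+1)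
    set S2 := closure E ∩ Icc (m (n+1)) ((K+2) * m (n+1)) with hS2
    have hS2ne : S2.Nonempty := ⟨m (n+1), hmF (n+1), le_rfl, by nlinarith⟩
    have hbdd2 : BddAbove S2 := ⟨(K+2) * m (n+1), fun x hx => hx.2.2⟩
    obtain ⟨hsmF, hsm1, hsm2⟩ :=
      IsClosed.csSup_mem (isClosed_closure.inter isClosed_Icc) hS2ne hbdd2
    have hsml : sSup S2 < l n := by nlinarith
    obtain ⟨f, hfF, hf1, hf2⟩ := hdensity n (sSup S2) hsmF hsm1 hsml
    refine ⟨f, hfF, ?_, ?_⟩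
    · by_contra hle
      push_neg at hle
      have hfS2 : f ∈ S2 := ⟨hfF, le_trans hsm1 hf1.le, hle⟩
      have := le_csSup hbdd2 hfS2
      linarith
    · calc f ≤ (K+1) * sSup S2 := hf2
        _ ≤ (K+1) * ((K+2) * m (n+1)) := by nlinarith
        _ = W * m (n+1) := by rw [hW]; ring
  have hevW : ∀ᶠ n in atTop, l n / m (n+1) ≤ W := by
    by_contra hcon
    rw [not_eventually] at hcon
    have hfr : ∃ᶠ n in atTop, W * m (n+1) < l n := by
      apply hcon.mono
      intro n hn
      push_neg at hn
      exact (lt_div_iff₀ (hmpos (n+1))).1 hn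
    obtain ⟨φ, hφ, hφW⟩ := extraction_of_frequently_atTop hfr
    choose f hfF hf1 hf2 using fun k => hchain (φ k) (hφW k)
    have hφ1 : StrictMono (fun k => φ k + 1) := fun i j h =>
      show φ i + 1 < φ j + 1 from Nat.add_lt_add_right (hφ h) 1
    have hbnds : ∀ k, f k / m (φ k + 1) ∈ Icc (K+2) W := by
      intro k
      have hu := hmpos (φ k + 1)
      constructor
      · rw [le_div_iff₀ hu]; linarith [hf1 k]
      · rw [div_le_iff₀ hu]; linarith [hf2 k]
    obtain ⟨L, hLmem, hach2⟩ := exists_achieves_of_bounds (fun k => m (φ k + 1)) f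
      (fun k => hmF _) (fun k => hmpos _) (evDecr_comp (strictAnti_evDecr hmanti) hφ1)
      (hm0.comp hφ1.tendsto_atTop) hfF (K+2) W hbnds
    have hle3 := hach L hach2
    have hge3 := hLmem.1
    linarith
  refine ⟨l, m, ⟨hIEd, huniv⟩, ?_⟩
  calc MQ l m ≤ ENNReal.ofReal W :=
        limsup_le_of_le (by isBoundedDefault)
          (hevW.mono fun n hn => ENNReal.ofReal_le_ofReal hn)
    _ < ⊤ := ENNReal.ofReal_lt_top

end ExUniv

section CUniv

variable {E : Set ℝ} {K : ℝ}

lemma achieves_pairs {L : ℝ} (h : AchievesE E L) :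
    ∃ e e' : ℕ → ℝ, (∀ n, e n ∈ E) ∧ (∀ n, e' n ∈ E) ∧ (∀ᶠ n in atTop, 0 < e n) ∧
      Tendsto e atTop (𝓝 0) ∧ Tendsto (fun n => e' n / e n) atTop (𝓝 L) := by
  obtain ⟨r, e, e', hrpos, hr0, hrdec, he, he', h1, hL'⟩ := h
  have hepos : ∀ᶠ n in atTop, 0 < e n := by
    have h2 : ∀ᶠ n in atTop, (1:ℝ)/2 < e n / r n :=
      h1.eventually_const_lt (by norm_num)
    filter_upwards [h2] with n hn
    by_contra hle
    push_neg at hle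
    have : e n / r n ≤ 0 := div_nonpos_of_nonpos_of_nonneg hle (hrpos n).le
    linarith
  have he0 : Tendsto e atTop (𝓝 0) := by
    have h2 := h1.mul hr0
    rw [mul_zero] at h2
    apply h2.congr
    intro n
    exact div_mul_cancel₀ _ (hrpos n).ne'
  have hratio : Tendsto (fun n => e' n / e n) atTop (𝓝 L) := by
    have hq := hL'.div h1 one_ne_zero
    rw [div_one] at hq
    apply hq.congr'
    filter_upwards [hepos] with n hn
    simp only [Pi.div_apply]
    field_simp
    rw [mul_div_cancel_right₀ _ (hrpos n).ne']
  exact ⟨e, e', he, he', hepos, he0, hratio⟩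

lemma extract_anti {e : ℕ → ℝ} (hpos : ∀ᶠ n in atTop, 0 < e n)
    (h0 : Tendsto e atTop (𝓝 0)) :
    ∃ φ : ℕ → ℕ, StrictMono φ ∧ (∀ k, 0 < e (φ k)) ∧
      StrictAnti (fun k => e (φ k)) := by
  classical
  obtain ⟨n0, hn0⟩ := hpos.exists
  have hstep : ∀ p : ℕ, 0 < e p → ∃ n, p < n ∧ 0 < e n ∧ e n < e p := by
    intro p hp
    have h1 : ∀ᶠ n in atTop, p < n := eventually_gt_atTop p
    have h2 : ∀ᶠ n in atTop, e n < e p := h0.eventually_lt_const hp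
    obtain ⟨n, hn1, hn2, hn3⟩ := (h1.and (hpos.and h2)).exists
    exact ⟨n, hn1, hn2, hn3⟩
  choose Fof hF1 hF2 hF3 using hstep
  obtain ⟨φ, hφsucc, hφ0⟩ : ∃ φ : ℕ → {n : ℕ // 0 < e n},
      (∀ k, (φ (k+1)).val = Fof (φ k).val (φ k).prop) ∧ (φ 0).val = n0 := by
    refine ⟨fun k => Nat.rec (motive := fun _ => {n : ℕ // 0 < e n}) ⟨n0, hn0⟩
      (fun _ prev => ⟨Fof prev.val prev.prop, hF2 _ _⟩) k, fun k => rfl, rfl⟩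
  refine ⟨fun k => (φ k).val, ?_, fun k => (φ k).prop, ?_⟩
  · apply strictMono_nat_of_lt_succ
    intro n
    rw [hφsucc n]
    exact hF1 _ _
  · apply strictAnti_nat_of_succ_lt
    intro n
    have h1 : e ((φ (n+1)).val) = e (Fof (φ n).val (φ n).prop) := by rw [hφsucc n]
    rw [h1]
    exact hF3 _ _

lemma ied_lpos (h0 : (0:ℝ) ∈ E) (hpos : E ⊆ Ici 0)
    (hacc : ∀ δ > 0, ∃ t ∈ E, 0 < t ∧ t < δ) {l m : ℕ → ℝ} (hI : IEd E l m) :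
    ∀ n, 0 < l n := fun n => comp_left_pos h0 hpos hacc (hI.1 n)

lemma ied_tail (h0 : (0:ℝ) ∈ E) (hpos : E ⊆ Ici 0)
    (hacc : ∀ δ > 0, ∃ t ∈ E, 0 < t ∧ t < δ) {l m : ℕ → ℝ} (hI : IEd E l m) :
    ∃ T, ∀ ⦃i j⦄, T ≤ i → i ≤ j → l j ≤ l i ∧ m j ≤ m i := by
  obtain ⟨T, hT⟩ := evDecr_antitone_from hI.2.1
  obtain ⟨T2, hT2⟩ := eventually_atTop.1 hI.2.1
  have hm : ∀ n, T2 ≤ n → m (n+1) ≤ m n := by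
    intro n hn
    rcases lt_or_eq_of_le (hT2 n hn) with hlt | heq
    · have h1 : m (n+1) ≤ l n := comp_disjoint h0 hpos (hI.1 n) (hI.1 (n+1)) hlt
      exact le_trans h1 (hI.1 n).1.le
    · have h2 := comp_unique h0 hpos (hI.1 (n+1)) (heq ▸ hI.1 n)
      exact h2.le
  refine ⟨max T T2, fun i j hi hij => ?_⟩
  constructor
  · exact hT (le_trans (le_max_left _ _) hi) hij
  · induction j, hij using Nat.le_induction with
    | base => exact le_rfl
    | succ k hk ih =>
      exact le_trans (hm k (le_trans (le_trans (le_max_right _ _) hi) hk)) ih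

lemma ied_freq_strict (h0 : (0:ℝ) ∈ E) (hpos : E ⊆ Ici 0)
    (hacc : ∀ δ > 0, ∃ t ∈ E, 0 < t ∧ t < δ) {l m : ℕ → ℝ} (hI : IEd E l m) :
    ∀ N, ∃ n ≥ N, l (n+1) < l n := by
  intro N
  by_contra hcon
  push_neg at hcon
  obtain ⟨T, hT⟩ := evDecr_antitone_from hI.2.1
  set M := max N T with hM
  have hconst : ∀ n, M ≤ n → l n = l M := by
    intro n hn
    induction n, hn using Nat.le_induction with
    | base => rfl
    | succ k hk ih =>
      have h1 : l k ≤ l (k+1) := hcon k (le_trans (le_max_left _ _) hk)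
      have h2 : l (k+1) ≤ l k := hT (le_trans (le_max_right _ _) hk) (Nat.le_succ k)
      rw [← ih]
      exact le_antisymm h2 h1
  have h3 : Tendsto (fun _ : ℕ => l M) atTop (𝓝 0) := by
    apply hI.2.2.1.congr'
    rw [EventuallyEq, eventually_atTop]
    exact ⟨M, fun n hn => (hconst n hn)⟩
  have h4 : l M = 0 := tendsto_nhds_unique tendsto_const_nhds h3
  have h5 := ied_lpos h0 hpos hacc hI M
  linarith

lemma ied_m0 (h0 : (0:ℝ) ∈ E) (hpos : E ⊆ Ici 0)
    (hacc : ∀ δ > 0, ∃ t ∈ E, 0 < t ∧ t < δ) {l m : ℕ → ℝ} (hI : IEd E l m) :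
    Tendsto m atTop (𝓝 0) := by
  obtain ⟨T, hT⟩ := ied_tail h0 hpos hacc hI
  obtain ⟨T2, hT2⟩ := eventually_atTop.1 hI.2.1
  rw [Metric.tendsto_atTop]
  intro ε hε
  have hev : ∀ᶠ n in atTop, l n < ε := hI.2.2.1.eventually_lt_const hε
  obtain ⟨N2, hN2⟩ := eventually_atTop.1 hev
  obtain ⟨n, hn, hdec⟩ := ied_freq_strict h0 hpos hacc hI (max (max T T2) N2)
  have hmn : m (n+1) ≤ l n := comp_disjoint h0 hpos (hI.1 n) (hI.1 (n+1)) hdec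
  have hlε : l n < ε := hN2 n (le_trans (le_max_right _ _) hn)
  refine ⟨n+1, fun k hk => ?_⟩
  have h1 : m k ≤ m (n+1) :=
    (hT (le_trans (le_trans (le_max_left _ _) (le_max_left _ _)) (le_trans hn (Nat.le_succ n))) hk).2
  have hmpos : 0 < m k :=
    lt_trans (ied_lpos h0 hpos hacc hI k) (hI.1 k).1
  rw [Real.dist_eq, sub_zero, abs_of_pos hmpos]
  linarith

lemma univ_coverage (h0 : (0:ℝ) ∈ E) (hpos : E ⊆ Ici 0)
    (hacc : ∀ δ > 0, ∃ t ∈ E, 0 < t ∧ t < δ) {l m : ℕ → ℝ} (hu : UnivElem E l m) :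
    ∃ ε > 0, ∃ δ > 0, ∀ a b : ℝ, IsCompExt E a b → a < δ → a < ε * b →
      ∃ j, l j = a := by
  by_contra hcon
  push_neg at hcon
  have hstep : ∀ ε > 0, ∀ δ > 0, ∃ a b : ℝ, IsCompExt E a b ∧ a < δ ∧ a < ε * b ∧
      ∀ j, l j ≠ a := by
    intro ε hε δ hδ
    obtain ⟨a, b, hc, h1, h2, h3⟩ := hcon ε hε δ hδ
    exact ⟨a, b, hc, h1, h2, fun j hj => h3 j hj⟩
  have hstep2 : ∀ x : ℝ, 0 < x → ∀ k : ℕ, ∃ q : ℝ × ℝ, IsCompExt E q.1 q.2 ∧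
      q.1 < x ∧ q.1 < 1/(k+1) ∧ q.1 * (k+1) < q.2 ∧ ∀ j, l j ≠ q.1 := by
    intro x hx k
    obtain ⟨a, b, hc, h1, h2, h3⟩ := hstep (1/(k+1)) (by positivity)
      (min x (1/(k+1))) (lt_min hx (by positivity))
    refine ⟨(a, b), hc, lt_of_lt_of_le h1 (min_le_left _ _),
      lt_of_lt_of_le h1 (min_le_right _ _), ?_, h3⟩
    have hk1 : (0:ℝ) < (k:ℝ)+1 := by positivity
    rw [div_mul_eq_mul_div, lt_div_iff₀ hk1] at h2
    linarith
  obtain ⟨q0, hq0c, -, hq0sm, hq0r, hq0m⟩ := hstep2 1 one_pos 0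
  choose Fof hFc hFlt hFsm hFr hFm using hstep2
  have hq0pos : 0 < q0.1 := comp_left_pos h0 hpos hacc hq0c
  obtain ⟨q, hqsucc, hq0val⟩ : ∃ q : ℕ → {p : ℝ × ℝ // IsCompExt E p.1 p.2 ∧
      (∀ j, l j ≠ p.1)},
      (∀ k, (q (k+1)).val = Fof (q k).val.1
        (comp_left_pos h0 hpos hacc (q k).prop.1) (k+1)) ∧ (q 0).val = q0 := by
    refine ⟨fun k => Nat.rec (motive := fun _ => {p : ℝ × ℝ // IsCompExt E p.1 p.2 ∧
      (∀ j, l j ≠ p.1)}) ⟨q0, hq0c, hq0m⟩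
      (fun k prev => ⟨Fof prev.val.1 (comp_left_pos h0 hpos hacc prev.prop.1) (k+1),
        hFc _ _ _, hFm _ _ _⟩) k, fun k => rfl, rfl⟩
  set A : ℕ → ℝ := fun k => (q k).val.1 with hA
  set B : ℕ → ℝ := fun k => (q k).val.2 with hB
  have hcompq : ∀ k, IsCompExt E (A k) (B k) := fun k => (q k).prop.1
  have hmiss : ∀ k j, l j ≠ A k := fun k => (q k).prop.2
  have hApos : ∀ k, 0 < A k := fun k => comp_left_pos h0 hpos hacc (hcompq k)
  have hBpos : ∀ k, 0 < B k := fun k => lt_trans (hApos k) (hcompq k).1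
  have hAanti : StrictAnti A := by
    apply strictAnti_nat_of_succ_lt
    intro n
    have h1 : A (n+1) = (Fof (q n).val.1
        (comp_left_pos h0 hpos hacc (q n).prop.1) (n+1)).1 := by
      show ((q (n+1)).val).1 = _
      rw [hqsucc n]
    rw [h1]
    exact hFlt _ _ _
  have hAsm : ∀ k, 1 ≤ k → A k ≤ 1/(k:ℝ) := by
    intro k hk
    obtain ⟨j, rfl⟩ := Nat.exists_eq_add_of_le hk
    have h1 : A (1 + j) = (Fof (q j).val.1
        (comp_left_pos h0 hpos hacc (q j).prop.1) (j+1)).1 := by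
      show ((q (1+j)).val).1 = _
      rw [show 1 + j = j + 1 from by omega, hqsucc j]
    rw [h1]
    have h2 := hFsm (q j).val.1 (comp_left_pos h0 hpos hacc (q j).prop.1) (j+1)
    have h4 : ((1+j:ℕ):ℝ) = (j:ℝ)+1 := by push_cast; ring
    rw [h4]
    have h3 : (1:ℝ)/((j:ℝ)+1+1) ≤ 1/((j:ℝ)+1) := by
      apply one_div_le_one_div_of_le (by positivity) (by linarith)
    push_cast at h2
    linarith
  have hA0 : Tendsto A atTop (𝓝 0) :=
    squeeze_zero' (Eventually.of_forall (fun k => (hApos k).le))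
      (eventually_atTop.2 ⟨1, hAsm⟩) tendsto_one_div_atTop_nhds_zero_nat
  have hrat : ∀ k, 1 ≤ k → A k / B k ≤ 1/(k:ℝ) := by
    intro k hk
    obtain ⟨j, rfl⟩ := Nat.exists_eq_add_of_le hk
    have h1 : (q (1+j)).val = Fof (q j).val.1
        (comp_left_pos h0 hpos hacc (q j).prop.1) (j+1) := by
      rw [show 1 + j = j + 1 from by omega, hqsucc j]
    have h2 := hFr (q j).val.1 (comp_left_pos h0 hpos hacc (q j).prop.1) (j+1)
    have h3 : A (1+j) * ((j:ℝ)+1+1) < B (1+j) := by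
      show ((q (1+j)).val).1 * _ < ((q (1+j)).val).2
      rw [h1]
      push_cast at h2 ⊢
      linarith
    have h4 : ((1+j:ℕ):ℝ) = (j:ℝ)+1 := by push_cast; ring
    rw [h4, div_le_div_iff₀ (hBpos (1+j)) (by positivity)]
    have h5 := hApos (1+j)
    nlinarith
  have hABz : Tendsto (fun k => A k / B k) atTop (𝓝 0) :=
    squeeze_zero' (Eventually.of_forall
      (fun k => (div_pos (hApos k) (hBpos k)).le))
      (eventually_atTop.2 ⟨1, hrat⟩) tendsto_one_div_atTop_nhds_zero_nat
  have hIEdA : IEd E A B := by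
    refine ⟨hcompq, strictAnti_evDecr hAanti, hA0, ?_⟩
    have he : (fun n => (B n - A n) / B n) = fun n => 1 - A n / B n := by
      funext n; rw [sub_div, div_self (hBpos n).ne']
    rw [he]
    have h8 := hABz.const_sub 1
    simpa using h8
  obtain ⟨N₁, f, hf⟩ := hu.2 A B hIEdA
  exact hmiss N₁ (f N₁) (hf N₁ le_rfl).symm

end CUniv

section MleSec

variable {E : Set ℝ} {K : ℝ}

lemma exists_pos_lb (g : ℕ → ℝ) (hg : ∀ j, 0 < g j) (N : ℕ) :
    ∃ c > 0, ∀ j < N, c ≤ g j := by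
  induction N with
  | zero => exact ⟨1, one_pos, fun j hj => absurd hj (Nat.not_lt_zero j)⟩
  | succ k ih =>
    obtain ⟨c, hc, hcle⟩ := ih
    refine ⟨min c (g k), lt_min hc (hg k), fun j hj => ?_⟩
    rcases lt_or_eq_of_le (Nat.lt_succ_iff.1 hj) with h | h
    · exact le_trans (min_le_left _ _) (hcle j h)
    · rw [h]; exact min_le_right _ _

lemma Mle (h0 : (0:ℝ) ∈ E) (hpos : E ⊆ Ici 0)
    (hach : ∀ L, AchievesE E L → L ≤ K) (hK : 0 ≤ K)
    (hacc : ∀ δ > 0, ∃ t ∈ E, 0 < t ∧ t < δ)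
    {l m : ℕ → ℝ} (hu : UnivElem E l m) : MQ l m ≤ RE E := by
  classical
  have hI : IEd E l m := hu.1
  have hcomp : ∀ n, IsCompExt E (l n) (m n) := hI.1
  have hlpos : ∀ n, 0 < l n := ied_lpos h0 hpos hacc hI
  have hlm : ∀ n, l n < m n := fun n => (hcomp n).1
  have hmpos : ∀ n, 0 < m n := fun n => lt_trans (hlpos n) (hlm n)
  have hlF : ∀ n, l n ∈ closure E := fun n => ((isCompExt_iff h0 hpos).1 (hcomp n)).1
  have hmF : ∀ n, m n ∈ closure E := fun n => ((isCompExt_iff h0 hpos).1 (hcomp n)).2.1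
  obtain ⟨T, hT⟩ := ied_tail h0 hpos hacc hI
  have hm0 : Tendsto m atTop (𝓝 0) := ied_m0 h0 hpos hacc hI
  have hl0 : Tendsto l atTop (𝓝 0) := hI.2.2.1
  obtain ⟨ε0, hε0, δ, hδ, hcov0⟩ := univ_coverage h0 hpos hacc hu
  set ε := min ε0 1 with hεdef
  have hε : 0 < ε := lt_min hε0 one_pos
  have hε1 : ε ≤ 1 := min_le_right _ _
  have hcov : ∀ a b : ℝ, IsCompExt E a b → a < δ → a < ε * b → ∃ j, l j = a := by
    intro a b hcb h1 h2
    have hapos : 0 < a := comp_left_pos h0 hpos hacc hcb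
    have hbpos : 0 < b := lt_trans hapos hcb.1
    refine hcov0 a b hcb h1 (lt_of_lt_of_le h2 ?_)
    exact mul_le_mul_of_nonneg_right (min_le_left _ _) hbpos.le
  obtain ⟨c, hc, hclb⟩ := exists_pos_lb l hlpos T
  set D := 2/ε with hDdef
  have hD2 : (2:ℝ) ≤ D := by
    rw [hDdef, le_div_iff₀ hε]
    linarith
  set W₂ := D * (K+2) with hW₂
  have hWD : K + 2 < W₂ := by nlinarith
  have hdensity : ∀ n, T ≤ n → l n < δ → l n < c → ∀ t, t ∈ closure E →
      m (n+1) ≤ t → t < l n → ∃ f ∈ closure E, t < f ∧ f ≤ D * t := by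
    intro n hTn hδn hcn t htF ht1 ht2
    by_contra hemp
    push_neg at hemp
    have hne2 : (closure E ∩ Ioi t).Nonempty := ⟨l n, hlF n, ht2⟩
    have hBF := BF_mem hne2
    have hBge : D * t ≤ BF E t :=
      le_csInf hne2 (fun x hx => (hemp x hx.1 hx.2).le)
    have htpos : 0 < t := lt_of_lt_of_le (hmpos (n+1)) ht1
    have htB : t < BF E t := lt_of_lt_of_le (by nlinarith) hBge
    have hcompt : IsCompExt E t (BF E t) := by
      refine (isCompExt_iff h0 hpos).2 ⟨htF, hBF, htB, ?_⟩
      rintro x ⟨hx1, hx2⟩ hxF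
      exact BF_gap hxF hx1 hx2
    have hεB : t < ε * BF E t := by
      have h1 : ε * BF E t ≥ ε * (D * t) := by nlinarith
      have h2 : ε * (D * t) = 2 * t := by
        rw [hDdef]; field_simp
      nlinarith
    obtain ⟨j, hj⟩ := hcov t (BF E t) hcompt (lt_trans ht2 hδn) hεB
    have hjT : T ≤ j := by
      by_contra hlt
      push_neg at hlt
      have h3 := hclb j hlt
      rw [hj] at h3
      linarith [lt_trans ht2 hcn]
    rcases le_or_gt j n with hjn | hjn
    · have h5 := (hT hjT hjn).1
      rw [hj] at h5
      linarith
    · have h5 := (hT (le_trans hTn (Nat.le_succ n)) (by omega : n+1 ≤ j)).1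
      rw [hj] at h5
      have h6 := hlm (n+1)
      linarith
  have hchain : ∀ n, T ≤ n → l n < δ → l n < c → W₂ * m (n+1) < l n →
      ∃ f ∈ closure E, (K+2) * m (n+1) < f ∧ f ≤ W₂ * m (n+1) := by
    intro n hTn hδn hcn hWn
    have hupos : 0 < m (n+1) := hmpos (n+1)
    set S2 := closure E ∩ Icc (m (n+1)) ((K+2) * m (n+1)) with hS2
    have hS2ne : S2.Nonempty := ⟨m (n+1), hmF (n+1), le_rfl, by nlinarith⟩
    have hbdd2 : BddAbove S2 := ⟨(K+2) * m (n+1), fun x hx => hx.2.2⟩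
    obtain ⟨hsmF, hsm1, hsm2⟩ :=
      IsClosed.csSup_mem (isClosed_closure.inter isClosed_Icc) hS2ne hbdd2
    have hsml : sSup S2 < l n := by nlinarith
    obtain ⟨f, hfF, hf1, hf2⟩ := hdensity n hTn hδn hcn (sSup S2) hsmF hsm1 hsml
    refine ⟨f, hfF, ?_, ?_⟩
    · by_contra hle
      push_neg at hle
      have hfS2 : f ∈ S2 := ⟨hfF, le_trans hsm1 hf1.le, hle⟩
      have := le_csSup hbdd2 hfS2
      linarith
    · calc f ≤ D * sSup S2 := hf2
        _ ≤ D * ((K+2) * m (n+1)) := by nlinarith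
        _ = W₂ * m (n+1) := by rw [hW₂]; ring
  have hmdec : EvDecr m := by
    rw [EvDecr, eventually_atTop]
    exact ⟨T, fun n hn => (hT hn (Nat.le_succ n)).2⟩
  have htails : ∀ᶠ n in atTop, T ≤ n ∧ l n < δ ∧ l n < c := by
    have h1 : ∀ᶠ n in atTop, T ≤ n := eventually_ge_atTop T
    have h2 : ∀ᶠ n in atTop, l n < δ := hl0.eventually_lt_const hδ
    have h3 : ∀ᶠ n in atTop, l n < c := hl0.eventually_lt_const hc
    filter_upwards [h1, h2, h3] with n a b cc
    exact ⟨a, b, cc⟩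
  have hevW : ∀ᶠ n in atTop, l n / m (n+1) ≤ W₂ := by
    by_contra hcon
    rw [not_eventually] at hcon
    have hfr : ∃ᶠ n in atTop, (T ≤ n ∧ l n < δ ∧ l n < c) ∧ W₂ * m (n+1) < l n := by
      have h1 : ∃ᶠ n in atTop, W₂ * m (n+1) < l n := by
        apply hcon.mono
        intro n hn
        push_neg at hn
        exact (lt_div_iff₀ (hmpos (n+1))).1 hn
      have h2 := h1.and_eventually htails
      apply h2.mono
      tauto
    obtain ⟨φ, hφ, hφW⟩ := extraction_of_frequently_atTop hfr
    choose f hfF hf1 hf2 using fun k =>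
      hchain (φ k) (hφW k).1.1 (hφW k).1.2.1 (hφW k).1.2.2 (hφW k).2
    have hφ1 : StrictMono (fun k => φ k + 1) := fun i j h =>
      show φ i + 1 < φ j + 1 from Nat.add_lt_add_right (hφ h) 1
    have hbnds : ∀ k, f k / m (φ k + 1) ∈ Icc (K+2) W₂ := by
      intro k
      have hup := hmpos (φ k + 1)
      constructor
      · rw [le_div_iff₀ hup]; linarith [hf1 k]
      · rw [div_le_iff₀ hup]; linarith [hf2 k]
    obtain ⟨L, hLmem, hach2⟩ := exists_achieves_of_bounds (fun k => m (φ k + 1)) f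
      (fun k => hmF _) (fun k => hmpos _) (evDecr_comp hmdec hφ1)
      (hm0.comp hφ1.tendsto_atTop) hfF (K+2) W₂ hbnds
    have hle3 := hach L hach2
    have hge3 := hLmem.1
    linarith
  by_contra hcon
  rw [not_le] at hcon
  obtain ⟨γ, hγ0, hγ1, hγ2⟩ := ENNReal.lt_iff_exists_real_btwn.1 hcon
  have hfr2 : ∃ᶠ n in atTop, ENNReal.ofReal γ < ENNReal.ofReal (l n / m (n+1)) :=
    frequently_lt_of_lt_limsup (by isBoundedDefault) hγ2
  have hfr3 : ∃ᶠ n in atTop, γ < l n / m (n+1) ∧ l n / m (n+1) ≤ W₂ := by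
    have h2 := hfr2.and_eventually hevW
    apply h2.mono
    rintro n ⟨ha, hb⟩
    refine ⟨?_, hb⟩
    by_contra hle
    push_neg at hle
    have : ENNReal.ofReal (l n / m (n+1)) ≤ ENNReal.ofReal γ :=
      ENNReal.ofReal_le_ofReal hle
    exact absurd ha (not_lt.2 this)
  obtain ⟨φ, hφ, hφP⟩ := extraction_of_frequently_atTop hfr3
  have hφ1 : StrictMono (fun k => φ k + 1) := fun i j h =>
    show φ i + 1 < φ j + 1 from Nat.add_lt_add_right (hφ h) 1
  have hbnds : ∀ k, l (φ k) / m (φ k + 1) ∈ Icc γ W₂ :=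
    fun k => ⟨(hφP k).1.le, (hφP k).2⟩
  obtain ⟨L, hLmem, hach2⟩ := exists_achieves_of_bounds (fun k => m (φ k + 1))
    (fun k => l (φ k)) (fun k => hmF _) (fun k => hmpos _) (evDecr_comp hmdec hφ1)
    (hm0.comp hφ1.tendsto_atTop) (fun k => hlF _) γ W₂ hbnds
  have h4 : ENNReal.ofReal L ≤ RE E := achievesE_le_RE hach2
  have h5 : ENNReal.ofReal γ ≤ ENNReal.ofReal L := ENNReal.ofReal_le_ofReal hLmem.1
  have := lt_of_le_of_lt (le_trans h5 h4) hγ1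
  exact lt_irrefl _ this

end MleSec

section MgeSec

variable {E : Set ℝ} {K : ℝ}

lemma Mge (h0 : (0:ℝ) ∈ E) (hpos : E ⊆ Ici 0)
    (hach : ∀ L, AchievesE E L → L ≤ K) (hK : 0 ≤ K)
    (hacc : ∀ δ > 0, ∃ t ∈ E, 0 < t ∧ t < δ)
    {l m : ℕ → ℝ} (hu : UnivElem E l m) {L' : ℝ}
    (hach' : AchievesE E L') : ENNReal.ofReal L' ≤ MQ l m := by
  classical
  have hI : IEd E l m := hu.1
  have hcomp : ∀ n, IsCompExt E (l n) (m n) := hI.1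
  have hlpos : ∀ n, 0 < l n := ied_lpos h0 hpos hacc hI
  have hlm : ∀ n, l n < m n := fun n => (hcomp n).1
  have hmpos : ∀ n, 0 < m n := fun n => lt_trans (hlpos n) (hlm n)
  have hlF : ∀ n, l n ∈ closure E := fun n => ((isCompExt_iff h0 hpos).1 (hcomp n)).1
  have hmF : ∀ n, m n ∈ closure E := fun n => ((isCompExt_iff h0 hpos).1 (hcomp n)).2.1
  have hgap : ∀ n, ∀ x ∈ closure E, l n < x → x < m n → False := by
    intro n x hx h1 h2
    exact ((isCompExt_iff h0 hpos).1 (hcomp n)).2.2.2 x ⟨h1, h2⟩ hx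
  obtain ⟨T, hT⟩ := ied_tail h0 hpos hacc hI
  have hl0 : Tendsto l atTop (𝓝 0) := hI.2.2.1
  have hM1 : (1:ℝ≥0∞) ≤ MQ l m := by
    apply le_limsup_of_frequently_le ?_ (by isBoundedDefault)
    rw [frequently_atTop]
    intro N
    obtain ⟨n, hn, hdec⟩ := ied_freq_strict h0 hpos hacc hI N
    refine ⟨n, hn, ?_⟩
    rw [ENNReal.one_le_ofReal, le_div_iff₀ (hmpos (n+1))]
    have h1 : m (n+1) ≤ l n := comp_disjoint h0 hpos (hcomp n) (hcomp (n+1)) hdec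
    linarith
  rcases le_or_gt L' 1 with hL1 | hL1
  · calc ENNReal.ofReal L' ≤ ENNReal.ofReal 1 := ENNReal.ofReal_le_ofReal hL1
      _ = 1 := ENNReal.ofReal_one
      _ ≤ MQ l m := hM1
  have hL'K : L' ≤ K := hach L' hach'
  obtain ⟨e, e', heE, he'E, hepos, he0, hratio⟩ := achieves_pairs hach'
  obtain ⟨ψ, hψm, hψpos, hψanti⟩ := extract_anti hepos he0
  set τ : ℕ → ℝ := fun k => e (ψ k) with hτdef
  set σ : ℕ → ℝ := fun k => e' (ψ k) with hσdef
  have hτF : ∀ k, τ k ∈ closure E := fun k => subset_closure (heE _)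
  have hσF : ∀ k, σ k ∈ closure E := fun k => subset_closure (he'E _)
  have hτpos : ∀ k, 0 < τ k := hψpos
  have hτ0 : Tendsto τ atTop (𝓝 0) := he0.comp hψm.tendsto_atTop
  have hrat : Tendsto (fun k => σ k / τ k) atTop (𝓝 L') :=
    hratio.comp hψm.tendsto_atTop
  have hσnn : ∀ k, 0 ≤ σ k := fun k => hpos (he'E _)
  obtain ⟨hpt, hadec, ha0, hR⟩ := comp_seq h0 hpos hach hK τ hτF hτpos
    (strictAnti_evDecr hψanti) hτ0
  obtain ⟨ε0, hε0, δ, hδ, hcov0⟩ := univ_coverage h0 hpos hacc hu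
  set ε := min ε0 1 with hεdef
  have hε : 0 < ε := lt_min hε0 one_pos
  have hcov : ∀ a b : ℝ, IsCompExt E a b → a < δ → a < ε * b → ∃ j, l j = a := by
    intro aa bb hcb h1 h2
    have hapos : 0 < aa := comp_left_pos h0 hpos hacc hcb
    have hbpos : 0 < bb := lt_trans hapos hcb.1
    refine hcov0 aa bb hcb h1 (lt_of_lt_of_le h2 ?_)
    exact mul_le_mul_of_nonneg_right (min_le_left _ _) hbpos.le
  have hthin : ∀ᶠ i in atTop, l i * (K+1) < m i := by
    have hr0 : Tendsto (fun i => l i / m i) atTop (𝓝 0) := by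
      have he2 : (fun i => l i / m i) = fun i => 1 - (m i - l i) / m i := by
        funext i
        rw [sub_div, div_self (hmpos i).ne']
        ring
      rw [he2]
      have h8 := hI.2.2.2.const_sub 1
      simpa using h8
    have h9 : ∀ᶠ i in atTop, l i / m i < 1/(K+1) :=
      hr0.eventually_lt_const (by positivity)
    filter_upwards [h9] with i hi
    rw [div_lt_div_iff₀ (hmpos i) (by positivity : (0:ℝ) < K+1)] at hi
    linarith
  obtain ⟨Tthin, hTthin⟩ := eventually_atTop.1 hthin
  set R₀ := max (2/ε) (K+2) with hR₀
  have hfinal : ∀ θ : ℝ, 1 < θ → θ < L' →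
      ∃ᶠ j in atTop, ENNReal.ofReal θ ≤ ENNReal.ofReal (l j / m (j+1)) := by
    intro θ hθ1 hθL
    rw [frequently_atTop]
    intro N
    set N' := max (max N T) Tthin with hN'
    obtain ⟨c, hc, hclb⟩ := exists_pos_lb l hlpos N'
    have hE1 := hR R₀
    have hE2 : ∀ᶠ k in atTop, AF E ((K+1) * τ k) < δ := ha0.eventually_lt_const hδ
    have hE3 : ∀ᶠ k in atTop, AF E ((K+1) * τ k) < c := ha0.eventually_lt_const hc
    have hE4 : ∀ᶠ k in atTop, σ k / τ k < K + 1 :=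
      hrat.eventually_lt_const (by linarith)
    have hE5 : ∀ᶠ k in atTop, θ < σ k / τ k := hrat.eventually_const_lt hθL
    obtain ⟨k, hk1, hk2, hk3, hk4, hk5⟩ :=
      (hE1.and (hE2.and (hE3.and (hE4.and hE5)))).exists
    obtain ⟨hcab, hRab⟩ := hk1
    set ak := AF E ((K+1) * τ k) with hak
    set bk := BF E (AF E ((K+1) * τ k)) with hbk
    have hτa : τ k ≤ ak := (hpt k).1
    have hapos : 0 < ak := lt_of_lt_of_le (hτpos k) hτa
    have hbpos : 0 < bk := lt_trans hapos hcab.1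
    have hσa : σ k ≤ ak := by
      apply AF_ge (hσF k) (hσnn k)
      rw [div_lt_iff₀ (hτpos k)] at hk4
      linarith
    have hεab : ak < ε * bk := by
      have h1 : 2/ε ≤ R₀ := le_max_left _ _
      have h2 : (2/ε) * ak ≤ R₀ * ak := mul_le_mul_of_nonneg_right h1 hapos.le
      have h3 : (2/ε) * ak ≤ bk := le_trans h2 hRab
      have h4 : 2 * ak ≤ ε * bk := by
        rw [div_mul_eq_mul_div] at h3
        have h5 := (div_le_iff₀ hε).1 h3
        nlinarith
      linarith
    obtain ⟨g, hg⟩ := hcov ak bk hcab hk2 hεab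
    have hgN' : N' ≤ g := by
      by_contra hlt
      push_neg at hlt
      have h3 := hclb g hlt
      rw [hg] at h3
      linarith
    have hτσ : τ k < σ k := (one_lt_div (hτpos k)).1 (lt_trans hθ1 hk5)
    have hσpos : 0 < σ k := lt_trans (hτpos k) hτσ
    have hPex : ∃ j, g ≤ j ∧ l j < σ k :=
      ((eventually_ge_atTop g).and (hl0.eventually_lt_const hσpos)).exists
    have hspec := Nat.find_spec hPex
    set J := Nat.find hPex with hJdef
    obtain ⟨hgJ, hJlt⟩ := hspec
    have hJg : g < J := by
      rcases lt_or_eq_of_le hgJ with h | h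
      · exact h
      · exfalso
        rw [← h, hg] at hJlt
        linarith
    set j := J - 1 with hjdef
    have hjJ : j + 1 = J := by omega
    have hgj : g ≤ j := by omega
    have hjP := Nat.find_min hPex (show j < J by omega)
    have hjσ : σ k ≤ l j := by
      by_contra hlt2
      push_neg at hlt2
      exact hjP ⟨hgj, hlt2⟩
    have hJT : Tthin ≤ J := by
      have h1 : Tthin ≤ N' := le_max_right _ _
      omega
    have hmJ : m J ≤ τ k := by
      by_contra hlt2
      push_neg at hlt2
      have hτlJ : τ k ≤ l J := by
        by_contra h3
        push_neg at h3
        exact hgap J (τ k) (hτF k) h3 hlt2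
      have hσmJ : m J ≤ σ k := by
        by_contra h3
        push_neg at h3
        exact hgap J (σ k) (hσF k) hJlt h3
      have hth := hTthin J hJT
      rw [div_lt_iff₀ (hτpos k)] at hk4
      nlinarith [hτpos k]
    refine ⟨j, ?_, ?_⟩
    · have h1 : N ≤ N' := le_trans (le_max_left _ _) (le_max_left _ _)
      omega
    · apply ENNReal.ofReal_le_ofReal
      rw [hjJ]
      have hmJpos := hmpos J
      rw [le_div_iff₀ hmJpos]
      have h2 : θ * τ k < σ k := (lt_div_iff₀ (hτpos k)).1 hk5
      have h3 : θ * m J ≤ θ * τ k := mul_le_mul_of_nonneg_left hmJ (by linarith)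
      linarith
  by_contra hcon
  rw [not_le] at hcon
  obtain ⟨γ, hγ0, hγ1, hγ2⟩ := ENNReal.lt_iff_exists_real_btwn.1 hcon
  have hγL : γ < L' := by
    rw [ENNReal.ofReal_lt_ofReal_iff (by linarith : (0:ℝ) < L')] at hγ2
    exact hγ2
  rcases le_or_gt γ 1 with hγle | hγgt
  · have h1 : ENNReal.ofReal γ ≤ 1 := by
      rw [← ENNReal.ofReal_one]
      exact ENNReal.ofReal_le_ofReal hγle
    exact absurd hγ1 (not_lt.2 (le_trans h1 hM1))
  · have hfr := hfinal γ hγgt hγL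
    have h2 : ENNReal.ofReal γ ≤ MQ l m :=
      le_limsup_of_frequently_le hfr (by isBoundedDefault)
    exact absurd hγ1 (not_lt.2 h2)

end MgeSec

section DirB

variable {E : Set ℝ}

lemma pair_gen {L : ℝ} (h : AchievesE E L) (δ : ℝ) (hδ : 0 < δ) :
    ∃ t s : ℝ, t ∈ E ∧ s ∈ E ∧ 0 < t ∧ t < δ ∧ L - 1 < s / t ∧ s / t < L + 1 := by
  obtain ⟨r, e, e', hrpos, hr0, hrdec, he, he', h1, hL'⟩ := h
  have hepos : ∀ᶠ n in atTop, 0 < e n := by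
    have h2 : ∀ᶠ n in atTop, (1:ℝ)/2 < e n / r n :=
      h1.eventually_const_lt (by norm_num)
    filter_upwards [h2] with n hn
    by_contra hle
    push_neg at hle
    have : e n / r n ≤ 0 := div_nonpos_of_nonpos_of_nonneg hle (hrpos n).le
    linarith
  have he0 : Tendsto e atTop (𝓝 0) := by
    have h2 := h1.mul hr0
    rw [mul_zero] at h2
    apply h2.congr
    intro n
    exact div_mul_cancel₀ _ (hrpos n).ne'
  have hratio : Tendsto (fun n => e' n / e n) atTop (𝓝 L) := by
    have hq := hL'.div h1 one_ne_zero
    rw [div_one] at hq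
    apply hq.congr'
    filter_upwards [hepos] with n hn
    simp only [Pi.div_apply]
    field_simp
    rw [mul_div_cancel_right₀ _ (hrpos n).ne']
  have hev : ∀ᶠ n in atTop,
      (0 < e n ∧ e n < δ) ∧ L - 1 < e' n / e n ∧ e' n / e n < L + 1 := by
    have hsmall : ∀ᶠ n in atTop, e n < δ := he0.eventually_lt_const hδ
    have hlo : ∀ᶠ n in atTop, L - 1 < e' n / e n :=
      hratio.eventually_const_lt (by linarith)
    have hhi : ∀ᶠ n in atTop, e' n / e n < L + 1 :=
      hratio.eventually_lt_const (by linarith)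
    exact (hepos.and hsmall).and (hlo.and hhi)
  obtain ⟨n, ⟨hn1, hn2⟩, hn3, hn4⟩ := hev.exists
  exact ⟨e n, e' n, he n, he' n, hn1, hn2, hn3, hn4⟩

/-- Direction B': CSP implies `R*` is finite (via contradiction). -/
lemma dirB' (h0 : (0:ℝ) ∈ E) (hpos : E ⊆ Ici 0) (hcsp : CSP E)
    (hub : ∀ j : ℕ, ∃ L : ℝ, (j:ℝ) + 2 ≤ L ∧ AchievesE E L) : False := by
  classical
  choose Lf hLf hachf using hub
  have hL2 : ∀ j, (2:ℝ) ≤ Lf j := by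
    intro j
    have h1 : (0:ℝ) ≤ (j:ℝ) := Nat.cast_nonneg j
    linarith [hLf j]
  set J : ℕ → ℕ := fun k => (Nat.unpair k).1 with hJ
  set QQ : ℕ → ℝ × ℝ → Prop := fun k q =>
    q.1 ∈ E ∧ q.2 ∈ E ∧ 0 < q.1 ∧
      Lf (J k) - 1 < q.2 / q.1 ∧ q.2 / q.1 < Lf (J k) + 1 with hQQ
  have hQbase : ∀ k (x : ℝ), 0 < x → ∃ q, QQ k q ∧ q.2 < x ∧ 4 * q.1 < x := by
    intro k x hx
    have hL := hL2 (J k)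
    have hLpos : (0:ℝ) < 2 * (Lf (J k) + 2) := by linarith
    obtain ⟨t, s, htE, hsE, htpos, htδ, hr1, hr2⟩ :=
      pair_gen (hachf (J k)) (x / (2 * (Lf (J k) + 2))) (div_pos hx hLpos)
    have hs : s < (Lf (J k) + 1) * t := by
      rw [div_lt_iff₀ htpos] at hr2
      linarith
    rw [lt_div_iff₀ hLpos] at htδ
    refine ⟨(t, s), ⟨htE, hsE, htpos, hr1, hr2⟩, ?_, ?_⟩
    · simp only
      nlinarith
    · simp only
      nlinarith
  obtain ⟨q0, hq0, -, -⟩ := hQbase 0 1 one_pos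
  choose F hFQ hFs hFt using fun k (x : ℝ) (hx : 0 < x) => hQbase (k+1) x hx
  have hq0pos : 0 < q0.1 := hq0.2.2.1
  have hmain : ∃ g : ℕ → ℝ × ℝ, (∀ k, QQ k (g k)) ∧
      (∀ k, (g (k+1)).2 < (g k).1 ∧ 4 * (g (k+1)).1 < (g k).1) := by
    refine ⟨fun k => (Nat.rec (motive := fun _ => {p : ℝ × ℝ // 0 < p.1})
      ⟨q0, hq0pos⟩
      (fun k prev => ⟨F k prev.val.1 prev.prop,
        (hFQ k prev.val.1 prev.prop).2.2.1⟩) k).val, ?_, ?_⟩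
    · intro k
      induction k with
      | zero => exact hq0
      | succ n _ => exact hFQ n _ _
    · intro k
      exact ⟨hFs k _ _, hFt k _ _⟩
  obtain ⟨g, hgQ, hglink⟩ := hmain
  set t : ℕ → ℝ := fun k => (g k).1 with ht
  set s : ℕ → ℝ := fun k => (g k).2 with hs
  have htE : ∀ k, t k ∈ E := fun k => (hgQ k).1
  have hsE : ∀ k, s k ∈ E := fun k => (hgQ k).2.1
  have htpos : ∀ k, 0 < t k := fun k => (hgQ k).2.2.1
  have hrlo : ∀ k, Lf (J k) - 1 < s k / t k := fun k => (hgQ k).2.2.2.1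
  have hrhi : ∀ k, s k / t k < Lf (J k) + 1 := fun k => (hgQ k).2.2.2.2
  have hts : ∀ k, t k < s k := by
    intro k
    have h1 : (1:ℝ) < s k / t k := lt_of_le_of_lt (by linarith [hL2 (J k)]) (hrlo k)
    exact (one_lt_div (htpos k)).1 h1
  have hspos : ∀ k, 0 < s k := fun k => lt_trans (htpos k) (hts k)
  have hlink1 : ∀ k, s (k+1) < t k := fun k => (hglink k).1
  have hlink2 : ∀ k, 4 * t (k+1) < t k := fun k => (hglink k).2
  have htanti : StrictAnti t :=
    strictAnti_nat_of_succ_lt (fun n => by linarith [hlink2 n, htpos (n+1)])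
  have htgeo : ∀ k, t k ≤ t 0 * (1/4)^k := by
    intro k; induction k with
    | zero => simp
    | succ n ih =>
      have h1 := hlink2 n
      have h2 : (0:ℝ) < (1/4:ℝ)^n := by positivity
      calc t (n+1) ≤ t n / 4 := by linarith
        _ ≤ (t 0 * (1/4)^n) / 4 := by linarith
        _ = t 0 * (1/4)^(n+1) := by ring
  have ht0' : Tendsto t atTop (𝓝 0) := by
    apply squeeze_zero (fun k => (htpos k).le) htgeo
    have h1 : Tendsto (fun k:ℕ => (1/4:ℝ)^k) atTop (𝓝 0) :=
      tendsto_pow_atTop_nhds_zero_of_lt_one (by norm_num) (by norm_num)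
    have h2 := h1.const_mul (t 0)
    simpa using h2
  set σ : ℕ → ℝ := fun n => if n % 2 = 0 then s (n/2) else t (n/2) with hσ
  have hσval : ∀ k, σ (2*k) = s k ∧ σ (2*k+1) = t k := by
    intro k
    constructor
    · simp only [hσ]; rw [if_pos (by omega)]
      congr 1; omega
    · simp only [hσ]; rw [if_neg (by omega)]
      congr 1; omega
  have hσdec : ∀ n, σ (n+1) < σ n := by
    intro n
    rcases Nat.even_or_odd n with ⟨k, hk⟩ | ⟨k, hk⟩
    · have e1 : σ n = s k := by rw [show n = 2*k from by omega]; exact (hσval k).1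
      have e2 : σ (n+1) = t k := by rw [show n+1 = 2*k+1 from by omega]; exact (hσval k).2
      rw [e1, e2]; exact hts k
    · have e1 : σ n = t k := by rw [show n = 2*k+1 from by omega]; exact (hσval k).2
      have e2 : σ (n+1) = s (k+1) := by
        rw [show n+1 = 2*(k+1) from by omega]; exact (hσval (k+1)).1
      rw [e1, e2]; exact hlink1 k
  have hσpos : ∀ n, 0 < σ n := by
    intro n; simp only [hσ]; split
    · exact hspos _
    · exact htpos _
  have hσ0 : Tendsto σ atTop (𝓝 0) := by
    rw [Metric.tendsto_atTop]
    intro ε hε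
    obtain ⟨N, hN⟩ := Metric.tendsto_atTop.1 ht0' ε hε
    refine ⟨2*N + 2, fun n hn => ?_⟩
    rw [Real.dist_eq, sub_zero, abs_of_pos (hσpos n)]
    have hbound : σ n ≤ t (n/2 - 1) := by
      rcases Nat.even_or_odd n with ⟨k, hk2⟩ | ⟨k, hk2⟩
      · have e1 : σ n = s k := by rw [show n = 2*k from by omega]; exact (hσval k).1
        have hk4 : 1 ≤ k := by omega
        have h5 : s k < t (k-1) := by
          have h6 := hlink1 (k-1)
          rwa [show k-1+1 = k from by omega] at h6
        rw [e1, show n/2 - 1 = k - 1 from by omega]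
        linarith
      · have e1 : σ n = t k := by rw [show n = 2*k+1 from by omega]; exact (hσval k).2
        rw [e1, show n/2 - 1 = k - 1 from by omega]
        exact htanti.antitone (by omega)
    have h7 := hN (n/2 - 1) (by omega)
    rw [Real.dist_eq, sub_zero, abs_of_pos (htpos _)] at h7
    linarith
  have hσE0d : σ ∈ E0d E := by
    refine ⟨Eventually.of_forall (fun n => (hσdec n).le), fun n => ⟨?_, (hσpos n).ne'⟩, hσ0⟩
    simp only [hσ]; split
    · exact hsE _
    · exact htE _
  obtain ⟨A, B, ⟨hcompAB, hAdec, hA0, hABr⟩, c₁, c₂, hc₁, hc₂, hcc⟩ := hcsp σ hσE0d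
  have hApos : ∀ n, 0 < A n := fun n => lt_trans (mul_pos hc₁ (hσpos n)) (hcc n).1
  have hAB : ∀ n, A n < B n := fun n => (hcompAB n).1
  have hBpos : ∀ n, 0 < B n := fun n => lt_trans (hApos n) (hAB n)
  have hz : Tendsto (fun n => A n / B n) atTop (𝓝 0) := by
    have he : (fun n => A n / B n) = fun n => 1 - (B n - A n) / B n := by
      funext n
      rw [sub_div, div_self (hBpos n).ne']
      ring
    rw [he]
    have h8 := hABr.const_sub 1
    simpa using h8
  have hgapF : ∀ n x, x ∈ closure E → A n < x → x < B n → False := by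
    intro n x hx h1 h2
    exact ((isCompExt_iff h0 hpos).1 (hcompAB n)).2.2.2 x ⟨h1, h2⟩ hx
  set j : ℕ := ⌈c₂⌉₊ with hj
  have hLj : c₂ + 1 < Lf j := by
    have h1 : c₂ ≤ (j:ℝ) := Nat.le_ceil c₂
    have h2 := hLf j
    linarith
  have hLjpos : (0:ℝ) < Lf j + 1 := by linarith [hL2 j]
  set θ := c₁ / (Lf j + 1) with hθ
  have hθpos : 0 < θ := by positivity
  have hθc₁ : θ ≤ c₁ := by
    rw [hθ, div_le_iff₀ hLjpos]
    nlinarith [hL2 j]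
  have hev2 : ∀ᶠ n in atTop, A n / B n < θ := hz.eventually_lt_const hθpos
  have hfreq : ∃ᶠ n in atTop, n % 2 = 1 ∧ J (n/2) = j := by
    rw [Nat.frequently_atTop_iff_infinite]
    apply Set.Infinite.mono (show range (fun i => 2 * Nat.pair j i + 1) ⊆ _ from ?_)
    · apply Set.infinite_range_of_injective
      intro i i' hii
      simp only at hii
      have h9 : Nat.pair j i = Nat.pair j i' := by omega
      have h10 := congrArg Nat.unpair h9
      rw [Nat.unpair_pair, Nat.unpair_pair] at h10
      exact (Prod.ext_iff.1 h10).2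
    · rintro n ⟨i, rfl⟩
      dsimp only
      refine ⟨by omega, ?_⟩
      have h11 : (2 * Nat.pair j i + 1) / 2 = Nat.pair j i := by omega
      simp only [h11, hJ, Nat.unpair_pair]
  obtain ⟨n, ⟨hodd, hJn⟩, hlt⟩ := (hfreq.and_eventually hev2).exists
  have hσn : σ n = t (n/2) := by
    simp only [hσ]; rw [if_neg (by omega)]
  set k := n / 2 with hk
  have htF : t k ∈ closure E := subset_closure (htE k)
  have hsF : s k ∈ closure E := subset_closure (hsE k)
  have hAn := (hcc n).1
  have hAn2 := (hcc n).2
  rw [hσn] at hAn hAn2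
  have htcase : t k ≤ A n ∨ B n ≤ t k := by
    by_contra hcon
    push_neg at hcon
    exact hgapF n (t k) htF hcon.1 hcon.2
  rcases htcase with hta | htb
  · have hsk : c₂ * t k < s k := by
      have h1 := hrlo k
      rw [hJn] at h1
      have h2 : c₂ < s k / t k := by linarith
      exact (lt_div_iff₀ (htpos k)).1 h2
    have hsB : B n ≤ s k := by
      by_contra hcon
      push_neg at hcon
      exact hgapF n (s k) hsF (lt_trans hAn2 hsk) hcon
    have hshi : s k < (Lf j + 1) * t k := by
      have h2 := hrhi k
      rw [hJn] at h2
      exact (div_lt_iff₀ (htpos k)).1 h2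
    have h3 : θ * s k < A n := by
      have h5 : θ * s k < θ * ((Lf j + 1) * t k) := mul_lt_mul_of_pos_left hshi hθpos
      have h6 : θ * ((Lf j + 1) * t k) = c₁ * t k := by
        rw [hθ]
        field_simp
      linarith
    have h4 : θ < A n / B n := by
      rw [lt_div_iff₀ (hBpos n)]
      calc θ * B n ≤ θ * s k := mul_le_mul_of_nonneg_left hsB hθpos.le
        _ < A n := h3
    linarith
  · have h4 : θ < A n / B n := by
      rw [lt_div_iff₀ (hBpos n)]
      calc θ * B n ≤ c₁ * B n := mul_le_mul_of_nonneg_right hθc₁ (hBpos n).le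
        _ ≤ c₁ * t k := mul_le_mul_of_nonneg_left htb hc₁.le
        _ < A n := hAn
    linarith

end DirB

section Assemble

lemma accpt_spset {X : Type*} [MetricSpace X] (p : X)
    (h : AccPt p (Filter.principal (Set.univ : Set X))) :
    ∀ δ > 0, ∃ t ∈ SpSet X p, 0 < t ∧ t < δ := by
  intro δ hδ
  rw [accPt_iff_nhds] at h
  obtain ⟨y, ⟨hy1, -⟩, hy2⟩ := h (Metric.ball p δ) (Metric.ball_mem_nhds p hδ)
  exact ⟨dist y p, ⟨y, rfl⟩, dist_pos.2 hy2, by rwa [Metric.mem_ball] at hy1⟩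

theorem stmt_13' {X : Type*} [MetricSpace X] (p : X) :
    (RstarN X p < ⊤ ↔ CSP (SpSet X p)) ∧
    (RstarN X p < ⊤ → AccPt p (Filter.principal (Set.univ : Set X)) →
      (∃ l m : ℕ → ℝ, UnivElem (SpSet X p) l m ∧ MQ l m < ⊤) ∧
      ∀ l m : ℕ → ℝ, UnivElem (SpSet X p) l m → RstarN X p = MQ l m) := by
  classical
  have h0 : (0:ℝ) ∈ SpSet X p := SpSet_zero_mem X p
  have hposE : SpSet X p ⊆ Ici 0 := SpSet_nonneg X p
  have hRE : RstarN X p = RE (SpSet X p) := RstarN_eq X p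
  have hREeq : RE (SpSet X p) =
      sSup {v | ∃ L, AchievesE (SpSet X p) L ∧ v = ENNReal.ofReal L} := rfl
  constructor
  · constructor
    · intro hfin
      have hfin' : RE (SpSet X p) ≠ ⊤ := by rw [← hRE]; exact hfin.ne
      have hach : ∀ L, AchievesE (SpSet X p) L → L ≤ (RE (SpSet X p)).toReal :=
        fun L hL => achieves_le_toReal hfin' hL
      exact dirA h0 hposE hach ENNReal.toReal_nonneg
    · intro hcsp
      by_contra htop
      have htop' : RE (SpSet X p) = ⊤ := by
        rw [← hRE]
        exact top_le_iff.1 (not_lt.1 htop)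
      rw [hREeq] at htop'
      apply dirB' h0 hposE hcsp
      intro j
      obtain ⟨v, hv, hlt⟩ := (sSup_eq_top.1 htop') (ENNReal.ofReal ((j:ℝ)+2))
        ENNReal.ofReal_lt_top
      obtain ⟨L, hL, rfl⟩ := hv
      refine ⟨L, ?_, hL⟩
      by_contra hle
      push_neg at hle
      exact absurd hlt (not_lt.2 (ENNReal.ofReal_le_ofReal hle.le))
  · intro hfin hAcc
    have hacc := accpt_spset p hAcc
    have hfin' : RE (SpSet X p) ≠ ⊤ := by rw [← hRE]; exact hfin.ne
    set K := (RE (SpSet X p)).toReal with hKdef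
    have hach : ∀ L, AchievesE (SpSet X p) L → L ≤ K :=
      fun L hL => achieves_le_toReal hfin' hL
    have hK : 0 ≤ K := ENNReal.toReal_nonneg
    have hach1 : AchievesE (SpSet X p) 1 := by
      obtain ⟨t, htE, htpos, htanti, ht0⟩ := exists_E_seq hposE hacc
      refine achieves_of_pairs t t (fun n => subset_closure (htE n)) htpos
        (strictAnti_evDecr htanti) ht0 (fun n => subset_closure (htE n)) ?_
      have he : (fun n => t n / t n) = fun _ => (1:ℝ) :=
        funext fun n => div_self (htpos n).ne'
      rw [he]
      exact tendsto_const_nhds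
    have hK1 : 1 ≤ K := hach 1 hach1
    constructor
    · exact exists_univ h0 hposE hach hK hK1 hacc
    · intro l m hu
      apply le_antisymm
      · rw [hRE, hREeq]
        apply sSup_le
        rintro v ⟨L, hL, rfl⟩
        exact Mge h0 hposE hach hK hacc hu hL
      · rw [hRE]
        exact Mle h0 hposE hach hK hacc hu

end Assemble

end Stmt13

/-- `R*_n(X,p) < ∞` iff `S_p(X)` is completely strongly porous at `0`.
Moreover, if `R*_n(X,p) < ∞` and `p` is an accumulation point of `X`, then there is a
universal `L̃ ∈ Ĩ_{S_p(X)}ᵈ` with `M(L̃) < ∞`, and `R*_n(X,p) = M(L̃)` for every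
universal `L̃`. -/
theorem stmt_13 {X : Type*} [MetricSpace X] (p : X) :
    (RstarN X p < ⊤ ↔ CSP (SpSet X p)) ∧
    (RstarN X p < ⊤ → AccPt p (Filter.principal (Set.univ : Set X)) →
      (∃ l m : ℕ → ℝ, UnivElem (SpSet X p) l m ∧ MQ l m < ⊤) ∧
      ∀ l m : ℕ → ℝ, UnivElem (SpSet X p) l m → RstarN X p = MQ l m) := by
  exact Stmt13.stmt_13' p
end
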